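/- arXiv:2310.07524 — 11 statements merged into one kernel-verified Lean document; each statement's English description precedes it below -/
import Mathlib

section
/- Let K be a field, n a positive integer, ξ ∈ K a primitive n-th root of unity, η ∈ K a nonzero element, S a subset of {0,1,…,n−1}, and d a positive integer. Suppose that every nonzero vector u : Fin n → K satisfying ∑_{l=0}^{n−1} u_l ξ^{i·l} = 0 for all i ∈ S has Hamming weight at least d. Then every nonzero vector c : Fin n → K satisfying ∑_{l=0}^{n−1} c_l η^l ξ^{i·l} = 0 for all i ∈ S also has Hamming weight at least d. -/
/-- Proposition 1: the minimum-distance lower bound for a cyclic code with defining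
set `S` transfers to the corresponding constacyclic code. -/
theorem constacyclic_distance_lower_bound
    {K : Type*} [Field K] [DecidableEq K] (n : ℕ) (hn : 0 < n)
    (ξ η : K) (hξ : IsPrimitiveRoot ξ n) (hη : η ≠ 0)
    (S : Finset ℕ) (hS : S ⊆ Finset.range n) (d : ℕ) (hd : 0 < d)
    (h : ∀ u : Fin n → K, u ≠ 0 →
      (∀ i ∈ S, ∑ l : Fin n, u l * ξ ^ (i * (l : ℕ)) = 0) → d ≤ hammingNorm u) :
    ∀ c : Fin n → K, c ≠ 0 →
      (∀ i ∈ S, ∑ l : Fin n, c l * η ^ (l : ℕ) * ξ ^ (i * (l : ℕ)) = 0) →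
      d ≤ hammingNorm c := by
  intro c hc hsum
  set u : Fin n → K := fun l => c l * η ^ (l : ℕ) with hu
  have hne : ∀ l, u l ≠ 0 ↔ c l ≠ 0 := by
    intro l
    simp [hu, mul_ne_zero_iff, pow_ne_zero _ hη]
  have hu0 : u ≠ 0 := by
    intro h0
    apply hc
    funext l
    have := congrFun h0 l
    by_contra hcl
    exact ((hne l).mpr hcl) this
  have := h u hu0 (fun i hi => hsum i hi)
  calc d ≤ hammingNorm u := this
    _ = hammingNorm c := by
        unfold hammingNorm
        congr 1
        ext l
        simp [hne l]
end

section
/- Let K be a field, n a positive integer, and ξ ∈ K a primitive n-th root of unity. For c : Fin n → K define its discrete Fourier transform A : Fin n → K by A_i = ∑_{j=0}^{n−1} c_j ξ^{i·j}. Then the Hamming weight of c equals the rank of the n×n matrix M(A) whose (i,j) entry is A_{(j−i) mod n} (the circulant matrix whose first row is A and whose subsequent rows are its successive cyclic shifts). -/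
/-- Blahut's theorem: the Hamming weight of `c` equals the rank of the circulant
matrix built from the discrete Fourier transform of `c`. -/
theorem blahut_weight_eq_rank_circulant
    {K : Type*} [Field K] [DecidableEq K] (n : ℕ) (hn : 0 < n)
    (ξ : K) (hξ : IsPrimitiveRoot ξ n) (c : Fin n → K) :
    hammingNorm c =
      Matrix.rank (Matrix.of fun i j : Fin n =>
        ∑ l : Fin n, c l * ξ ^ ((((j - i : Fin n) : ℕ)) * (l : ℕ))) := by
  haveI : NeZero n := ⟨hn.ne'⟩
  have hmod : ∀ a : ℕ, ξ ^ a = ξ ^ (a % n) := by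
    intro a
    conv_lhs => rw [← Nat.div_add_mod a n]
    rw [pow_add, pow_mul, hξ.pow_eq_one, one_pow, one_mul]
  have hinj : Function.Injective fun i : Fin n => ξ ^ (i : ℕ) := fun i j h =>
    Fin.ext (hξ.pow_inj i.isLt j.isLt h)
  have hinj' : Function.Injective fun i : Fin n => ξ⁻¹ ^ (i : ℕ) := fun i j h =>
    Fin.ext (hξ.inv.pow_inj i.isLt j.isLt h)
  set U : Matrix (Fin n) (Fin n) K := Matrix.vandermonde fun i : Fin n => ξ ^ (i : ℕ)
  set W : Matrix (Fin n) (Fin n) K := Matrix.vandermonde fun i : Fin n => ξ⁻¹ ^ (i : ℕ)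
  have hU : IsUnit U.det := by
    rw [isUnit_iff_ne_zero, Matrix.det_vandermonde_ne_zero_iff]; exact hinj
  have hW : IsUnit W.det := by
    rw [isUnit_iff_ne_zero, Matrix.det_vandermonde_ne_zero_iff]; exact hinj'
  have hξ0 : ξ ≠ 0 := hξ.ne_zero hn.ne'
  have hM : (Matrix.of fun i j : Fin n =>
        ∑ l : Fin n, c l * ξ ^ ((((j - i : Fin n) : ℕ)) * (l : ℕ)))
      = W * Matrix.diagonal c * U := by
    ext i j
    rw [Matrix.mul_apply]
    simp only [Matrix.mul_diagonal, Matrix.of_apply, Matrix.vandermonde_apply, W, U]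
    refine Finset.sum_congr rfl fun l _ => ?_
    have h1 : (((j - i : Fin n) : ℕ) + (i : ℕ)) % n = (j : ℕ) := by
      rw [← Fin.val_add, sub_add_cancel]
    have key : ξ ^ ((((j - i : Fin n) : ℕ)) * (l : ℕ) + (i : ℕ) * (l : ℕ))
        = ξ ^ ((l : ℕ) * (j : ℕ)) := by
      rw [hmod, hmod ((l : ℕ) * (j : ℕ)), ← add_mul, Nat.mul_mod, Nat.mul_mod (l : ℕ) (j : ℕ),
        h1, Nat.mod_eq_of_lt l.isLt, Nat.mod_eq_of_lt j.isLt, Nat.mul_comm]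
    rw [← pow_mul, ← pow_mul, inv_pow]
    have h2 : ξ ^ ((((j - i : Fin n) : ℕ)) * (l : ℕ)) * ξ ^ ((i : ℕ) * (l : ℕ))
        = ξ ^ ((l : ℕ) * (j : ℕ)) := by rw [← pow_add, key]
    field_simp
    rw [← h2]; ring
  rw [hM, Matrix.rank_mul_eq_left_of_isUnit_det _ _ hU,
    Matrix.rank_mul_eq_right_of_isUnit_det _ _ hW, Matrix.rank_diagonal]
  rw [hammingNorm, Fintype.card_subtype]
end

section
/- Let F be a finite field with q elements and K a field extension of F. Let r ≥ 1 and δ ≥ 2 be integers, n a positive integer with gcd(n,q) = 1 and (r+δ−1) | n, and set ρ = n/(r+δ−1). Let ξ ∈ K be a primitive n-th root of unity and η ∈ K a nonzero element with η^n = λ for some nonzero λ ∈ F. Suppose there exist an integer ε₀ and a positive integer t with gcd(t, r+δ−1) = 1. Define C = { c : Fin n → F : ∑_{l=0}^{n−1} c_l (η ξ^{ε₀ + t·i + j·(r+δ−1)})^l = 0 for all 0 ≤ i ≤ δ−2 and 0 ≤ j ≤ ρ−1 }. Then C has (r,δ)-locality. -/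
/-- A code `C ⊆ F^n` has `(r,δ)`-locality if each coordinate has a repair set `S`
of size at most `r+δ-1` such that any codeword that is nonzero somewhere in `S`
has at least `δ` nonzero coordinates inside `S`. -/
def HasRDeltaLocality {F : Type*} [Field F] [DecidableEq F] {n : ℕ}
    (C : Set (Fin n → F)) (r δ : ℕ) : Prop :=
  ∀ ℓ : Fin n, ∃ S : Finset (Fin n), ℓ ∈ S ∧ S.card ≤ r + δ - 1 ∧
    ∀ c ∈ C, (∃ i ∈ S, c i ≠ 0) → δ ≤ (S.filter fun i => c i ≠ 0).card

/-- If a vector `v` is orthogonal to the first `d` power-rows of a Vandermonde system with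
distinct nodes and is supported on a set of at most `d` indices, it is zero. -/
private lemma weight_aux {K : Type*} [Field K] {m d : ℕ} (x v : Fin m → K)
    (hx : Function.Injective x)
    (h : ∀ i : ℕ, i < d → ∑ k, v k * x k ^ i = 0)
    (hcard : ∃ T : Finset (Fin m), T.card ≤ d ∧ ∀ k ∉ T, v k = 0) : v = 0 := by
  classical
  obtain ⟨T, hTd, hzero⟩ := hcard
  let e : Fin T.card ≃ {a // a ∈ T} := T.equivFin.symm
  have hx' : Function.Injective (fun j : Fin T.card => x (e j)) :=
    hx.comp (Subtype.coe_injective.comp e.injective)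
  have key : (fun j : Fin T.card => v (e j)) = 0 := by
    apply Matrix.eq_zero_of_forall_pow_sum_mul_pow_eq_zero hx'
    intro i
    have hi : (i : ℕ) < d := lt_of_lt_of_le i.isLt hTd
    calc ∑ j : Fin T.card, v (e j) * (x (e j)) ^ (i : ℕ)
        = ∑ a : {a // a ∈ T}, v a * x a ^ (i : ℕ) :=
          Fintype.sum_equiv e _ _ (fun j => rfl)
      _ = ∑ a ∈ T, v a * x a ^ (i : ℕ) :=
          Finset.sum_coe_sort T (fun a => v a * x a ^ (i : ℕ))
      _ = ∑ a : Fin m, v a * x a ^ (i : ℕ) :=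
          Finset.sum_subset T.subset_univ (fun a _ ha => by rw [hzero a ha, zero_mul])
      _ = 0 := h i hi
  funext k
  by_cases hk : k ∈ T
  · have := congrFun key (e.symm ⟨k, hk⟩)
    simpa using this
  · exact hzero k hk

/-- Lemma 2 of the paper: a (consta)cyclic code whose generator polynomial vanishes
at `η ξ^{ε₀ + t i + j (r+δ-1)}` for all `0 ≤ i ≤ δ-2`, `0 ≤ j ≤ ρ-1` has
`(r,δ)`-locality. -/
theorem constacyclic_has_locality
    {F K : Type*} [Field F] [Fintype F] [DecidableEq F] [Field K] [Algebra F K]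
    (q r δ n : ℕ) (hq : Fintype.card F = q) (hr : 1 ≤ r) (hδ : 2 ≤ δ)
    (hn : 0 < n) (hgcd : Nat.gcd n q = 1) (hdvd : (r + δ - 1) ∣ n)
    (ρ : ℕ) (hρ : ρ = n / (r + δ - 1))
    (ξ η : K) (hξ : IsPrimitiveRoot ξ n) (hη : η ≠ 0)
    (lam : F) (hlam : lam ≠ 0) (hηn : η ^ n = algebraMap F K lam)
    (ε₀ : ℤ) (t : ℕ) (ht : 0 < t) (htc : Nat.gcd t (r + δ - 1) = 1) :
    HasRDeltaLocality
      {c : Fin n → F | ∀ i ≤ δ - 2, ∀ j ≤ ρ - 1,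
        ∑ l : Fin n, algebraMap F K (c l) *
          (η * ξ ^ (ε₀ + (t : ℤ) * i + (j : ℤ) * (r + δ - 1))) ^ (l : ℕ) = 0}
      r δ := by
  classical
  intro ℓ
  set m : ℕ := r + δ - 1 with hm_def
  have hmpos : 0 < m := by omega
  have hnρ : m * ρ = n := by rw [hρ]; exact Nat.mul_div_cancel' hdvd
  have hρpos : 0 < ρ := by
    rcases Nat.eq_zero_or_pos ρ with h | h
    · rw [h, mul_zero] at hnρ; omega
    · exact h
  have hξ0 : ξ ≠ 0 := hξ.ne_zero (by omega)
  have ha : (ℓ : ℕ) % ρ < ρ := Nat.mod_lt _ hρpos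
  set a : ℕ := (ℓ : ℕ) % ρ with ha_def
  have hlt : ∀ b : Fin ρ, ∀ k : Fin m, (b : ℕ) + (k : ℕ) * ρ < n := by
    intro b k
    have hk : (k : ℕ) + 1 ≤ m := k.isLt
    calc (b : ℕ) + (k : ℕ) * ρ < ((k : ℕ) + 1) * ρ := by
          have := b.isLt; rw [add_mul, one_mul]; omega
      _ ≤ m * ρ := Nat.mul_le_mul_right _ hk
      _ = n := hnρ
  set E : Fin ρ → Fin m → Fin n := fun b k => ⟨(b : ℕ) + (k : ℕ) * ρ, hlt b k⟩ with hE_def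
  set aF : Fin ρ := ⟨a, ha⟩ with haF_def
  set e : Fin m → Fin n := E aF with he_def
  have he_inj : Function.Injective e := by
    intro k k' hkk
    have h1 : a + (k : ℕ) * ρ = a + (k' : ℕ) * ρ := congrArg Fin.val hkk
    have h2 : (k : ℕ) * ρ = (k' : ℕ) * ρ := by omega
    exact Fin.ext (Nat.eq_of_mul_eq_mul_right hρpos h2)
  refine ⟨Finset.image e Finset.univ, ?_, ?_, ?_⟩
  · refine Finset.mem_image.mpr ⟨⟨(ℓ : ℕ) / ρ, ?_⟩, Finset.mem_univ _, ?_⟩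
    · rw [Nat.div_lt_iff_lt_mul hρpos]
      calc (ℓ : ℕ) < n := ℓ.isLt
        _ = m * ρ := hnρ.symm
    · apply Fin.ext
      simpa [e, E] using Nat.mod_add_div' (ℓ : ℕ) ρ
  · calc (Finset.image e Finset.univ).card ≤ Finset.univ.card := Finset.card_image_le
      _ = m := by simp
  · intro c hc hex
    simp only [Set.mem_setOf_eq] at hc
    set w : K := ξ ^ (ρ * t) with hw_def
    have hw : IsPrimitiveRoot w m := by
      have h1 : IsPrimitiveRoot (ξ ^ ρ) m := hξ.pow (by omega) (by rw [mul_comm]; exact hnρ.symm)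
      have := h1.pow_of_coprime t htc
      rwa [← pow_mul] at this
    set A : K := η ^ ρ * ξ ^ (ε₀ * (ρ : ℤ)) with hA_def
    have hA0 : A ≠ 0 := mul_ne_zero (pow_ne_zero _ hη) (zpow_ne_zero _ hξ0)
    set v : Fin m → K := fun k => algebraMap F K (c (e k)) * A ^ (k : ℕ) with hv_def
    have hζ : IsPrimitiveRoot (ξ ^ m) ρ := hξ.pow (by omega) hnρ.symm
    have hmz : (m : ℤ) = (r : ℤ) + (δ : ℤ) - 1 := by omega
    -- key equations
    have HKey : ∀ i : ℕ, i < δ - 1 →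
        ∀ b : Fin ρ, ∑ k : Fin m, algebraMap F K (c (E b k)) * (A * w ^ i) ^ (k : ℕ) = 0 := by
      intro i hi
      set B : K := A * w ^ i with hB_def
      set y : Fin ρ → K := fun j => η * ξ ^ (ε₀ + (t : ℤ) * i + (j : ℤ) * (m : ℤ)) with hy_def
      have hsplit : ∀ j'' : Fin ρ, η * ξ ^ (ε₀ + (t : ℤ) * i + (j'' : ℤ) * (m : ℤ))
          = (η * ξ ^ (ε₀ + (t : ℤ) * i)) * (ξ ^ m) ^ (j'' : ℕ) := by
        intro j''
        have hcast : ε₀ + (t : ℤ) * i + (j'' : ℤ) * (m : ℤ)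
            = (ε₀ + (t : ℤ) * i) + ((m * (j'' : ℕ) : ℕ) : ℤ) := by push_cast; ring
        rw [hcast, zpow_add₀ hξ0, mul_assoc, zpow_natCast, pow_mul]
      have hy_inj : Function.Injective y := by
        intro j j' hjj
        simp only [hy_def] at hjj
        rw [hsplit j, hsplit j'] at hjj
        have hne : η * ξ ^ (ε₀ + (t : ℤ) * i) ≠ 0 := mul_ne_zero hη (zpow_ne_zero _ hξ0)
        exact Fin.ext (hζ.pow_inj j.isLt j'.isLt (mul_left_cancel₀ hne hjj))
      have hγρ : ∀ j : Fin ρ, (y j) ^ ρ = B := by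
        intro j
        have h1 : ξ ^ ((n : ℕ) : ℤ) = 1 := by rw [zpow_natCast, hξ.pow_eq_one]
        have hexp : (ε₀ + (t : ℤ) * i + (j : ℤ) * (m : ℤ)) * (ρ : ℤ)
            = ε₀ * (ρ : ℤ) + ((ρ * t : ℕ) : ℤ) * ((i : ℕ) : ℤ)
              + ((n : ℕ) : ℤ) * ((j : ℕ) : ℤ) := by
          push_cast
          rw [← hnρ]
          push_cast
          ring
        calc (y j) ^ ρ
            = η ^ ρ * (ξ ^ (ε₀ + (t : ℤ) * i + (j : ℤ) * (m : ℤ))) ^ (ρ : ℕ) := by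
              rw [hy_def, mul_pow]
          _ = η ^ ρ * ξ ^ ((ε₀ + (t : ℤ) * i + (j : ℤ) * (m : ℤ)) * (ρ : ℤ)) := by
              rw [← zpow_natCast (ξ ^ _), ← zpow_mul]
          _ = η ^ ρ * (ξ ^ (ε₀ * (ρ : ℤ)) * (ξ ^ (((ρ * t : ℕ) : ℤ))) ^ ((i : ℕ) : ℤ) *
                (ξ ^ ((n : ℕ) : ℤ)) ^ ((j : ℕ) : ℤ)) := by
              rw [hexp, zpow_add₀ hξ0, zpow_add₀ hξ0,
                zpow_mul ξ ((ρ * t : ℕ) : ℤ) ((i : ℕ) : ℤ),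
                zpow_mul ξ ((n : ℕ) : ℤ) ((j : ℕ) : ℤ)]
          _ = B := by
              rw [h1, one_zpow, mul_one, hB_def, hA_def, hw_def,
                zpow_natCast, zpow_natCast]
              ring
      have hrow : ∀ j : Fin ρ,
          ∑ b : Fin ρ, (∑ k : Fin m, algebraMap F K (c (E b k)) * B ^ (k : ℕ)) * y j ^ (b : ℕ)
            = 0 := by
        intro j
        have H := hc i (by omega) j (by omega)
        have hyj : (η * ξ ^ (ε₀ + (t : ℤ) * i + (j : ℤ) * ((r : ℤ) + (δ : ℤ) - 1))) = y j := by
          rw [hy_def, hmz]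
        rw [hyj] at H
        have hp : Function.Bijective (fun x : Fin ρ × Fin m => E x.1 x.2) := by
          rw [Fintype.bijective_iff_injective_and_card]
          constructor
          · rintro ⟨b, k⟩ ⟨b', k'⟩ hbk
            have h1 : (b : ℕ) + (k : ℕ) * ρ = (b' : ℕ) + (k' : ℕ) * ρ :=
              congrArg Fin.val hbk
            have hb : (b : ℕ) = (b' : ℕ) := by
              have h2 : ((b : ℕ) + (k : ℕ) * ρ) % ρ = ((b' : ℕ) + (k' : ℕ) * ρ) % ρ := by
                rw [h1]
              rwa [Nat.add_mul_mod_self_right, Nat.add_mul_mod_self_right,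
                Nat.mod_eq_of_lt b.isLt, Nat.mod_eq_of_lt b'.isLt] at h2
            have hk : (k : ℕ) * ρ = (k' : ℕ) * ρ := by omega
            exact Prod.ext (Fin.ext hb) (Fin.ext (Nat.eq_of_mul_eq_mul_right hρpos hk))
          · simp only [Fintype.card_prod, Fintype.card_fin]
            rw [mul_comm]
            exact hnρ
        have Hsplit : ∑ x : Fin ρ × Fin m,
            algebraMap F K (c (E x.1 x.2)) * y j ^ ((E x.1 x.2 : Fin n) : ℕ) = 0 := by
          rw [Fintype.sum_bijective _ hp _
            (fun l : Fin n => algebraMap F K (c l) * y j ^ (l : ℕ)) (fun x => rfl)]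
          exact H
        rw [Fintype.sum_prod_type] at Hsplit
        calc ∑ b : Fin ρ, (∑ k : Fin m, algebraMap F K (c (E b k)) * B ^ (k : ℕ)) * y j ^ (b : ℕ)
            = ∑ b : Fin ρ, ∑ k : Fin m,
                algebraMap F K (c (E b k)) * y j ^ ((E b k : Fin n) : ℕ) := by
              refine Finset.sum_congr rfl fun b _ => ?_
              rw [Finset.sum_mul]
              refine Finset.sum_congr rfl fun k _ => ?_
              have hEv : ((E b k : Fin n) : ℕ) = (b : ℕ) + (k : ℕ) * ρ := rfl
              rw [hEv, pow_add, pow_mul', hγρ j]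
              ring
          _ = 0 := Hsplit
      have := Matrix.eq_zero_of_forall_index_sum_mul_pow_eq_zero hy_inj hrow
      intro b
      exact congrFun this b
    -- apply the weight lemma
    have hx_inj : Function.Injective (fun k : Fin m => w ^ (k : ℕ)) := by
      intro k k' hkk
      exact Fin.ext (hw.pow_inj k.isLt k'.isLt hkk)
    have hEq : ∀ i : ℕ, i < δ - 1 → ∑ k : Fin m, v k * (w ^ (k : ℕ)) ^ i = 0 := by
      intro i hi
      have H := HKey i hi aF
      calc ∑ k : Fin m, v k * (w ^ (k : ℕ)) ^ i
          = ∑ k : Fin m, algebraMap F K (c (E aF k)) * (A * w ^ i) ^ (k : ℕ) := by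
            refine Finset.sum_congr rfl fun k _ => ?_
            rw [hv_def, he_def, mul_pow, ← pow_mul, ← pow_mul, mul_comm (k : ℕ) i]
            ring
        _ = 0 := H
    have hfilter : (Finset.image e Finset.univ).filter (fun i => c i ≠ 0)
        = Finset.image e (Finset.univ.filter fun k => c (e k) ≠ 0) :=
      Finset.filter_image
    rw [hfilter, Finset.card_image_of_injective _ he_inj]
    by_contra hcard
    push_neg at hcard
    have hv0 : v = 0 := by
      apply weight_aux _ v hx_inj hEq
      refine ⟨Finset.univ.filter fun k => c (e k) ≠ 0, by omega, ?_⟩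
      intro k hk
      have : c (e k) = 0 := by
        by_contra h0
        exact hk (Finset.mem_filter.mpr ⟨Finset.mem_univ _, h0⟩)
      rw [hv_def]
      simp [this]
    obtain ⟨l, hlS, hl0⟩ := hex
    obtain ⟨k, -, rfl⟩ := Finset.mem_image.mp hlS
    have hvk : v k = 0 := congrFun hv0 k
    rw [hv_def] at hvk
    simp only [mul_eq_zero] at hvk
    rcases hvk with h0 | h0
    · exact hl0 ((map_eq_zero_iff _ (algebraMap F K).injective).mp h0)
    · exact pow_ne_zero _ hA0 h0
end

section
/- Let δ ≥ 2 and s ≥ 1 be integers and let t_1,…,t_s be integers with 1 ≤ t_i ≤ δ−1 for all i. Assume that for all indices with 1 ≤ i ≤ s−1 and i+1 ≤ j ≤ k ≤ s and j + k = s + i + 1, one has t_j + t_k ≤ t_i + 1. Let K be a field, n an integer with n ≥ (2s+1)δ + t_1 − 1, ξ ∈ K a primitive n-th root of unity, and i₀ an integer. Set B = sδ + t_1 − 1. Let c : Fin n → K be nonzero and suppose that ∑_{l=0}^{n−1} c_l ξ^{(i₀+e)·l} = 0 for every e in Z := {0,…,B−1} ∪ {B+1,…,B+δ−1} ∪ ⋃_{h=1}^{s}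 {B + hδ + t_{s+1−h}, …, B + (h+1)δ − 1}. Then the Hamming weight of c is at least (s+1)δ. -/
open Polynomial Matrix

private lemma factor_natDegree {K : Type*} [Field K] {y : K} (hy : y ≠ 0) :
    (1 - C y * X : K[X]).natDegree = 1 := by
  have h : (1 - C y * X : K[X]) = C (-y) * X + C 1 := by rw [map_neg, _root_.map_one]; ring
  rw [h, natDegree_add_C, natDegree_C_mul_X _ (neg_ne_zero.mpr hy)]

private lemma factor_leadingCoeff {K : Type*} [Field K] {y : K} (hy : y ≠ 0) :
    (1 - C y * X : K[X]).leadingCoeff = -y := by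
  rw [Polynomial.leadingCoeff, factor_natDegree hy]
  simp [coeff_one]

private lemma prod_facts {K : Type*} [Field K] {n : ℕ} {ξ : K} (hξ0 : ξ ≠ 0) (cs : Finset (Fin n)) :
    (∏ l ∈ cs, (1 - C (ξ ^ (l : ℕ)) * X : K[X])).natDegree = cs.card ∧
    (∏ l ∈ cs, (1 - C (ξ ^ (l : ℕ)) * X : K[X])).coeff cs.card ≠ 0 := by
  have hy : ∀ l : Fin n, (ξ ^ (l : ℕ)) ≠ 0 := fun l => pow_ne_zero _ hξ0
  have hne : ∀ l ∈ cs, (1 - C (ξ ^ (l : ℕ)) * X : K[X]) ≠ 0 := fun l _ =>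
    leadingCoeff_ne_zero.mp (by rw [factor_leadingCoeff (hy l)]; exact neg_ne_zero.mpr (hy l))
  have hdeg : (∏ l ∈ cs, (1 - C (ξ ^ (l : ℕ)) * X : K[X])).natDegree = cs.card := by
    rw [natDegree_prod _ _ hne]
    calc ∑ l ∈ cs, (1 - C (ξ ^ (l : ℕ)) * X : K[X]).natDegree
        = ∑ _l ∈ cs, 1 := Finset.sum_congr rfl fun l _ => factor_natDegree (hy l)
      _ = cs.card := by simp
  refine ⟨hdeg, ?_⟩
  have h1 : (∏ l ∈ cs, (1 - C (ξ ^ (l : ℕ)) * X : K[X])).coeff cs.card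
      = (∏ l ∈ cs, (1 - C (ξ ^ (l : ℕ)) * X : K[X])).leadingCoeff := by
    rw [Polynomial.leadingCoeff, hdeg]
  rw [h1, leadingCoeff_prod]
  refine Finset.prod_ne_zero_iff.mpr fun l _ => ?_
  rw [factor_leadingCoeff (hy l)]
  exact neg_ne_zero.mpr (hy l)

private lemma recur_lemma {K : Type*} [Field K] {n : ℕ} {ξ : K} (hξ0 : ξ ≠ 0) (i₀ : ℤ)
    (c : Fin n → K) (cs : Finset (Fin n)) (hcs : ∀ l, l ∉ cs → c l = 0) (e : ℤ) :
    ∑ j ∈ Finset.range ((∏ l ∈ cs, (1 - C (ξ ^ (l : ℕ)) * X : K[X])).natDegree + 1),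
      (∏ l ∈ cs, (1 - C (ξ ^ (l : ℕ)) * X : K[X])).coeff j *
        ∑ l : Fin n, c l * ξ ^ ((i₀ + (e - (j : ℕ))) * (l : ℕ)) = 0 := by
  set P : K[X] := ∏ l ∈ cs, (1 - C (ξ ^ (l : ℕ)) * X : K[X]) with hPdef
  have key : ∀ (l : Fin n) (j : ℕ), c l * ξ ^ ((i₀ + (e - (j : ℕ))) * ((l : ℕ) : ℤ))
      = (c l * ξ ^ ((i₀ + e) * ((l : ℕ) : ℤ))) * ((ξ ^ (l : ℕ))⁻¹) ^ j := by
    intro l j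
    have h1 : (i₀ + (e - (j : ℕ))) * ((l : ℕ) : ℤ)
        = (i₀ + e) * ((l : ℕ) : ℤ) - ((j * (l : ℕ) : ℕ) : ℤ) := by push_cast; ring
    rw [h1, zpow_sub₀ hξ0, zpow_natCast, pow_mul', div_eq_mul_inv, ← inv_pow, mul_assoc]
  calc ∑ j ∈ Finset.range (P.natDegree + 1), P.coeff j *
          ∑ l : Fin n, c l * ξ ^ ((i₀ + (e - (j : ℕ))) * (l : ℕ))
      = ∑ j ∈ Finset.range (P.natDegree + 1), ∑ l : Fin n,
          (c l * ξ ^ ((i₀ + e) * ((l : ℕ) : ℤ))) * (P.coeff j * ((ξ ^ (l : ℕ))⁻¹) ^ j) := by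
        refine Finset.sum_congr rfl fun j _ => ?_
        rw [Finset.mul_sum]
        refine Finset.sum_congr rfl fun l _ => ?_
        rw [key l j]; ring
    _ = ∑ l : Fin n, ∑ j ∈ Finset.range (P.natDegree + 1),
          (c l * ξ ^ ((i₀ + e) * ((l : ℕ) : ℤ))) * (P.coeff j * ((ξ ^ (l : ℕ))⁻¹) ^ j) :=
        Finset.sum_comm
    _ = ∑ l : Fin n, (c l * ξ ^ ((i₀ + e) * ((l : ℕ) : ℤ))) * P.eval ((ξ ^ (l : ℕ))⁻¹) := by
        refine Finset.sum_congr rfl fun l _ => ?_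
        rw [← Finset.mul_sum, Polynomial.eval_eq_sum_range]
    _ = 0 := by
        refine Finset.sum_eq_zero fun l _ => ?_
        by_cases hl : l ∈ cs
        · have hev : P.eval ((ξ ^ (l : ℕ))⁻¹) = 0 := by
            rw [hPdef, eval_prod]
            exact Finset.prod_eq_zero hl
              (by simp [mul_inv_cancel₀ (pow_ne_zero (l : ℕ) hξ0)])
          rw [hev, mul_zero]
        · rw [hcs l hl]; simp

private lemma vand_kill {K : Type*} [Field K] [DecidableEq K] {n : ℕ} {ξ : K}
    (hξ : IsPrimitiveRoot ξ n) (i₀ : ℤ) (c : Fin n → K) (hc : c ≠ 0)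
    (cs : Finset (Fin n)) (hcs : ∀ l, l ∈ cs ↔ c l ≠ 0)
    (hvan : ∀ k : ℕ, k < cs.card →
      (∑ l : Fin n, c l * ξ ^ ((i₀ + (k : ℤ)) * (l : ℕ))) = 0) : False := by
  have hn0 : n ≠ 0 := by rintro rfl; exact hc (funext fun x => x.elim0)
  have hξ0 : ξ ≠ 0 := hξ.ne_zero hn0
  set e := cs.equivFin with hedef
  set v : Fin cs.card → K := fun j => ξ ^ ((e.symm j : Fin n) : ℕ) with hvdef
  have hvinj : Function.Injective v := by
    intro j1 j2 hv
    apply e.symm.injective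
    have h2 := hξ.pow_inj (Fin.is_lt ((e.symm j1 : Fin n))) (Fin.is_lt ((e.symm j2 : Fin n))) hv
    exact Subtype.ext (Fin.ext h2)
  have hdet : IsUnit ((Matrix.vandermonde v)ᵀ.det) := by
    rw [Matrix.det_transpose]
    exact Ne.isUnit (Matrix.det_vandermonde_ne_zero_iff.mpr hvinj)
  set b : Fin cs.card → K := fun j => c (e.symm j) * ξ ^ (i₀ * (((e.symm j : Fin n) : ℕ) : ℤ))
    with hbdef
  have hmv : (Matrix.vandermonde v)ᵀ.mulVec b = 0 := by
    funext i
    have h0 := hvan i i.is_lt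
    have hterm : ∀ j : Fin cs.card, (Matrix.vandermonde v)ᵀ i j * b j
        = c (e.symm j) * ξ ^ ((i₀ + ((i : ℕ) : ℤ)) * (((e.symm j : Fin n) : ℕ) : ℤ)) := by
      intro j
      have h1 : (i₀ + ((i : ℕ) : ℤ)) * (((e.symm j : Fin n) : ℕ) : ℤ)
          = i₀ * (((e.symm j : Fin n) : ℕ) : ℤ)
            + (((i : ℕ) * ((e.symm j : Fin n) : ℕ) : ℕ) : ℤ) := by push_cast; ring
      rw [h1, zpow_add₀ hξ0, zpow_natCast, pow_mul']
      simp only [Matrix.transpose_apply, Matrix.vandermonde_apply, hvdef, hbdef]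
      ring
    calc (Matrix.vandermonde v)ᵀ.mulVec b i
        = ∑ j, (Matrix.vandermonde v)ᵀ i j * b j := rfl
      _ = ∑ j, c (e.symm j) * ξ ^ ((i₀ + ((i : ℕ) : ℤ)) * (((e.symm j : Fin n) : ℕ) : ℤ)) :=
          Finset.sum_congr rfl fun j _ => hterm j
      _ = ∑ l ∈ cs, c l * ξ ^ ((i₀ + ((i : ℕ) : ℤ)) * ((l : ℕ) : ℤ)) := by
          rw [← Finset.sum_coe_sort cs (fun l => c l * ξ ^ ((i₀ + ((i : ℕ) : ℤ)) * ((l : ℕ) : ℤ)))]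
          exact Equiv.sum_comp e.symm
            (fun x : {x // x ∈ cs} => c (x : Fin n) * ξ ^ ((i₀ + ((i : ℕ) : ℤ)) * (((x : Fin n) : ℕ) : ℤ)))
      _ = ∑ l : Fin n, c l * ξ ^ ((i₀ + ((i : ℕ) : ℤ)) * ((l : ℕ) : ℤ)) := by
          refine Finset.sum_subset (Finset.subset_univ cs) fun l _ hl => ?_
          have : c l = 0 := by_contra fun h => hl ((hcs l).mpr h)
          rw [this, zero_mul]
      _ = 0 := h0
  have hb0 : b = 0 := by
    have h1 := congrArg (fun x => (((Matrix.vandermonde v)ᵀ)⁻¹).mulVec x) hmv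
    simpa [Matrix.mulVec_mulVec, Matrix.nonsing_inv_mul _ hdet, Matrix.one_mulVec,
      Matrix.mulVec_zero] using h1
  obtain ⟨l0, hl0⟩ := Function.ne_iff.mp hc
  have hl0' : c l0 ≠ 0 := by simpa using hl0
  have hmem : l0 ∈ cs := (hcs l0).mpr hl0'
  have h2 := congrFun hb0 (e ⟨l0, hmem⟩)
  rw [hbdef] at h2
  simp only [Equiv.symm_apply_apply, Pi.zero_apply] at h2
  exact hl0' ((mul_eq_zero.mp h2).resolve_right (zpow_ne_zero _ hξ0))
/-- Corollary 1: if `t_1,…,t_s` solve the system of inequalities, then any nonzero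
vector whose DFT vanishes on (a shift of) the zero positions of the pattern
`(0)^{sδ+t_1-1}(Δ)^1(0)^{δ-1}(Δ)^{t_s}(0)^{δ-t_s}⋯(Δ)^{t_1}(0)^{δ-t_1}`
has Hamming weight at least `(s+1)δ`. -/
theorem corollary_bound_from_inequalities
    (δ s : ℕ) (hδ : 2 ≤ δ) (hs : 1 ≤ s) (t : ℕ → ℕ)
    (htl : ∀ i, 1 ≤ i → i ≤ s → 1 ≤ t i ∧ t i ≤ δ - 1)
    (hineq : ∀ i j k, 1 ≤ i → i ≤ s - 1 → i + 1 ≤ j → j ≤ k → k ≤ s →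
      j + k = s + i + 1 → t j + t k ≤ t i + 1)
    {K : Type*} [Field K] [DecidableEq K] (n : ℕ)
    (hn : (2 * s + 1) * δ + t 1 - 1 ≤ n)
    (ξ : K) (hξ : IsPrimitiveRoot ξ n) (i₀ : ℤ)
    (c : Fin n → K) (hc : c ≠ 0)
    (hzero : ∀ e ∈ (Finset.Icc 0 ((s * δ + t 1 - 1) - 1) ∪
        Finset.Icc ((s * δ + t 1 - 1) + 1) ((s * δ + t 1 - 1) + δ - 1) ∪
        (Finset.Icc 1 s).biUnion (fun h =>
          Finset.Icc ((s * δ + t 1 - 1) + h * δ + t (s + 1 - h))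
            ((s * δ + t 1 - 1) + (h + 1) * δ - 1))),
      ∑ l : Fin n, c l * ξ ^ ((i₀ + (e : ℤ)) * (l : ℕ)) = 0) :
    (s + 1) * δ ≤ hammingNorm c := by
  by_contra hcon
  push_neg at hcon
  have hn0 : n ≠ 0 := by rintro rfl; exact hc (funext fun x => x.elim0)
  have hξ0 : ξ ≠ 0 := hξ.ne_zero hn0
  obtain ⟨ht1a, ht1b⟩ := htl 1 le_rfl hs
  set cs : Finset (Fin n) := Finset.univ.filter (fun l => c l ≠ 0) with hcsdef
  have hcs0 : ∀ l, l ∉ cs → c l = 0 := by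
    intro l hl
    by_contra h
    exact hl (by simp [hcsdef, h])
  have hcsiff : ∀ l, l ∈ cs ↔ c l ≠ 0 := by intro l; simp [hcsdef]
  have hwham : hammingNorm c = cs.card := rfl
  rw [hwham] at hcon
  set B := s * δ + t 1 - 1 with hBdef
  have hsd : δ ≤ s * δ := by
    calc δ = 1 * δ := (one_mul δ).symm
    _ ≤ s * δ := Nat.mul_le_mul_right δ hs
  have hring1 : (s + 1) * δ = s * δ + δ := by ring
  have hz' : ∀ k : ℕ, (k + 1 ≤ B ∨ (B + 1 ≤ k ∧ k ≤ B + δ - 1) ∨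
      ∃ h, 1 ≤ h ∧ h ≤ s ∧ B + h * δ + t (s + 1 - h) ≤ k ∧ k ≤ B + (h + 1) * δ - 1) →
      (∑ l : Fin n, c l * ξ ^ ((i₀ + (k : ℤ)) * (l : ℕ))) = 0 := by
    intro k hk
    refine hzero k ?_
    simp only [Finset.mem_union, Finset.mem_Icc, Finset.mem_biUnion]
    rcases hk with h | h | ⟨h, h1, h2, h3, h4⟩
    · exact Or.inl (Or.inl (by omega))
    · exact Or.inl (Or.inr (by omega))
    · exact Or.inr ⟨h, by omega, by omega⟩
  have hcover : ∀ k g : ℕ, g ≤ s → 1 ≤ k → k ≤ (g + 1) * δ - 1 →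
      (∑ l : Fin n, c l * ξ ^ ((i₀ + ((B + k : ℕ) : ℤ)) * (l : ℕ))) = 0 ∨
      ∃ h, 1 ≤ h ∧ h ≤ g ∧ h * δ ≤ k ∧ k + 1 ≤ h * δ + t (s + 1 - h) := by
    intro k g hgs hk1 hk2
    have hgd : (g + 1) * δ = g * δ + δ := by ring
    by_cases hkd : k ≤ δ - 1
    · exact Or.inl (hz' (B + k) (Or.inr (Or.inl ⟨by omega, by omega⟩)))
    · obtain ⟨q, rem, hqr, hrem⟩ : ∃ q rem, k = δ * q + rem ∧ rem < δ :=
        ⟨k / δ, k % δ, (Nat.div_add_mod k δ).symm, Nat.mod_lt _ (by omega)⟩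
      have hq2 : δ * q = q * δ := Nat.mul_comm δ q
      have hq1 : 1 ≤ q := by
        rcases Nat.eq_zero_or_pos q with rfl | h
        · simp at hqr; omega
        · exact h
      have hqg : q ≤ g := by
        by_contra hq
        push_neg at hq
        have h5 : (g + 1) * δ ≤ q * δ := Nat.mul_le_mul_right δ hq
        omega
      have hqd : (q + 1) * δ = q * δ + δ := by ring
      by_cases hkz : q * δ + t (s + 1 - q) ≤ k
      · exact Or.inl (hz' (B + k)
          (Or.inr (Or.inr ⟨q, hq1, by omega, by omega, by omega⟩)))
      · exact Or.inr ⟨q, hq1, hqg, by omega, by omega⟩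
  have hSB : (∑ l : Fin n, c l * ξ ^ ((i₀ + ((B : ℕ) : ℤ)) * (l : ℕ))) = 0 ∨ cs.card ≤ B := by
    by_cases hwB : cs.card ≤ B
    · exact Or.inr hwB
    push_neg at hwB
    left
    by_contra hu0
    have hrecs := recur_lemma hξ0 i₀ c cs hcs0
    obtain ⟨hdeg, hdw⟩ := prod_facts hξ0 cs
    set P : Polynomial K := ∏ l ∈ cs, (1 - Polynomial.C (ξ ^ (l : ℕ)) * Polynomial.X)
      with hPdef
    rw [hdeg] at hrecs
    set r := cs.card - B with hrdef
    set a : ℕ → ℕ := fun g => if g = 0 then 0 else t (s + 1 - g) - 1 with hadef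
    have ha0 : a 0 = 0 := by simp [hadef]
    have haS : ∀ g, g ≠ 0 → a g = t (s + 1 - g) - 1 := fun g hg => by simp [hadef, hg]
    have hkey : ∀ g h : ℕ, 1 ≤ h → h ≤ g → g ≤ s → a (g - h) + t (s + 1 - h) ≤ a g + 1 := by
      intro g h hh1 hhg hgs
      have htg := (htl (s + 1 - g) (by omega) (by omega)).1
      have hth := (htl (s + 1 - h) (by omega) (by omega)).1
      rw [haS g (by omega)]
      by_cases hgh : h = g
      · subst hgh
        rw [Nat.sub_self, ha0]
        omega
      · have hthg := (htl (s + 1 - (g - h)) (by omega) (by omega)).1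
        rw [haS (g - h) (by omega)]
        rcases le_total h (g - h) with hc1 | hc1
        · have hq := hineq (s + 1 - g) (s + 1 - (g - h)) (s + 1 - h) (by omega) (by omega)
            (by omega) (by omega) (by omega) (by omega)
          omega
        · have hq := hineq (s + 1 - g) (s + 1 - h) (s + 1 - (g - h)) (by omega) (by omega)
            (by omega) (by omega) (by omega) (by omega)
          omega
    have step : ∀ g, (∀ g', g' < g → g' ≤ s → ∀ m, g' * δ + r + a g' ≤ m →
          m ≤ (g' + 1) * δ - 1 → P.coeff m = 0) →
        g ≤ s → ∀ m, g * δ + r + a g ≤ m → m ≤ (g + 1) * δ - 1 → P.coeff m = 0 := by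
      intro g IH hgs m hm1 hm2
      have hgd : (g + 1) * δ = g * δ + δ := by ring
      by_cases hmw : cs.card < m
      · exact Polynomial.coeff_eq_zero_of_natDegree_lt (by rw [hdeg]; exact hmw)
      push_neg at hmw
      have hrec := hrecs ((B + m : ℕ) : ℤ)
      have hmain : ∑ j ∈ Finset.range (cs.card + 1),
          P.coeff j * ∑ l : Fin n, c l * ξ ^ ((i₀ + (((B + m : ℕ) : ℤ) - (j : ℕ))) * (l : ℕ))
          = P.coeff m * ∑ l : Fin n,
              c l * ξ ^ ((i₀ + (((B + m : ℕ) : ℤ) - (m : ℕ))) * (l : ℕ)) := by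
        refine Finset.sum_eq_single_of_mem m (Finset.mem_range.mpr (by omega)) ?_
        intro j hj hjm
        have hjw : j < cs.card + 1 := Finset.mem_range.mp hj
        rcases Nat.lt_or_ge j m with hlt | hge
        · set k := m - j with hkdef
          have hk1 : 1 ≤ k := by omega
          have hcast : ((B + m : ℕ) : ℤ) - (j : ℕ) = ((B + k : ℕ) : ℤ) := by omega
          rw [hcast]
          rcases hcover k g hgs hk1 (by omega) with hc0 | ⟨h, hh1, hhg, hlb, hub⟩
          · rw [hc0, mul_zero]
          · have hhd : (h * δ) + ((g - h) * δ) = g * δ := by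
              rw [← Nat.add_mul, Nat.add_sub_cancel' hhg]
            have hgh3 : (g - h + 1) * δ = (g - h) * δ + δ := by ring
            have hk2 := hkey g h hh1 hhg hgs
            have hih := IH (g - h) (by omega) (by omega) j (by omega) (by omega)
            rw [hih, zero_mul]
        · have hmlr : m + B ≥ cs.card := by omega
          have hcast : ((B + m : ℕ) : ℤ) - (j : ℕ) = ((B + m - j : ℕ) : ℤ) := by omega
          rw [hcast, hz' (B + m - j) (Or.inl (by omega)), mul_zero]
      rw [hmain] at hrec
      have hc2 : ((B + m : ℕ) : ℤ) - (m : ℕ) = ((B : ℕ) : ℤ) := by omega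
      rw [hc2] at hrec
      exact (mul_eq_zero.mp hrec).resolve_right hu0
    have claim : ∀ g, g ≤ s → ∀ m, g * δ + r + a g ≤ m → m ≤ (g + 1) * δ - 1 →
        P.coeff m = 0 := by
      intro g
      induction g using Nat.strong_induction_on with
      | _ g IH => exact step g IH
    have has : a s = t 1 - 1 := by
      have h1 : s + 1 - s = 1 := by omega
      rw [haS s (by omega), h1]
    have hfin : P.coeff cs.card = 0 := claim s le_rfl cs.card (by omega) (by omega)
    exact hdw hfin
  have hvan : ∀ k : ℕ, k < cs.card →
      (∑ l : Fin n, c l * ξ ^ ((i₀ + (k : ℤ)) * (l : ℕ))) = 0 := by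
    intro k hk
    rcases lt_trichotomy k B with h1 | h1 | h1
    · exact hz' k (Or.inl (by omega))
    · subst h1
      exact hSB.resolve_right (by omega)
    · exact hz' k (Or.inr (Or.inl ⟨by omega, by omega⟩))
  exact vand_kill hξ i₀ c hc cs hcsiff hvan
end

section
/- (Bound III.) Let δ ≥ 2, s ≥ 1 and t ≥ 0 be integers with t·⌈(s−1)/2⌉ ≤ δ−2. Let K be a field, n an integer with n ≥ (2s+1)δ + t·⌈(s−1)/2⌉, ξ ∈ K a primitive n-th root of unity, and i₀ an integer. Set B = sδ + t·⌈(s−1)/2⌉. Let c : Fin n → K be nonzero and suppose that ∑_{l=0}^{n−1} c_l ξ^{(i₀+e)·l} = 0 for every e in Z := {0,…,B−1} ∪ {B+1,…,B+δ−1} ∪ ⋃_{h=1}^{s} {B + hδ + ⌈(h−1)/2⌉·t + 1, …, B + (h+1)δ − 1}. Then the Hamming weight of c is at least (s+1)δ. -/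
open Polynomial Finset

/-- Bound III (Theorem 8): pattern
`(0)^{sδ+t⌈(s-1)/2⌉}((Δ)^1(0)^{δ-1})^2((Δ)^{t+1}(0)^{δ-t-1})^2⋯(Δ)^{⌈(s-1)/2⌉t+1}(0)^{δ-⌈(s-1)/2⌉t-1}`
gives minimum distance at least `(s+1)δ`.  Here `⌈(m)/2⌉` is written `(m+1)/2`
using natural division. -/
theorem bound_III
    (δ s t : ℕ) (hδ : 2 ≤ δ) (hs : 1 ≤ s)
    (ht : t * ((s - 1 + 1) / 2) ≤ δ - 2)
    {K : Type*} [Field K] [DecidableEq K] (n : ℕ)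
    (hn : (2 * s + 1) * δ + t * ((s - 1 + 1) / 2) ≤ n)
    (ξ : K) (hξ : IsPrimitiveRoot ξ n) (i₀ : ℤ)
    (c : Fin n → K) (hc : c ≠ 0)
    (hzero : ∀ e ∈ (Finset.Icc 0 ((s * δ + t * ((s - 1 + 1) / 2)) - 1) ∪
        Finset.Icc ((s * δ + t * ((s - 1 + 1) / 2)) + 1)
          ((s * δ + t * ((s - 1 + 1) / 2)) + δ - 1) ∪
        (Finset.Icc 1 s).biUnion (fun h =>
          Finset.Icc ((s * δ + t * ((s - 1 + 1) / 2)) + h * δ + ((h - 1 + 1) / 2) * t + 1)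
            ((s * δ + t * ((s - 1 + 1) / 2)) + (h + 1) * δ - 1))),
      ∑ l : Fin n, c l * ξ ^ ((i₀ + (e : ℤ)) * (l : ℕ)) = 0) :
    (s + 1) * δ ≤ hammingNorm c := by
  by_contra hlt
  push_neg at hlt
  have hss : s - 1 + 1 = s := by omega
  rw [hss] at hzero ht
  obtain ⟨q, hq⟩ : ∃ q, s / 2 = q := ⟨_, rfl⟩
  rw [hq] at hzero ht
  obtain ⟨B, hB⟩ : ∃ b, s * δ + t * q = b := ⟨_, rfl⟩
  rw [hB] at hzero
  have hδpos : 0 < δ := by omega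
  have hsB : s * δ ≤ B := by omega
  have hsδ : 1 * δ ≤ s * δ := Nat.mul_le_mul_right _ hs
  have hδB : δ ≤ B := by omega
  have hn0 : n ≠ 0 := by rintro rfl; exact hc (funext fun l => l.elim0)
  have hξ0 : ξ ≠ 0 := hξ.ne_zero hn0
  set D : Finset (Fin n) := {l | c l ≠ 0} with hD
  have hwcard : hammingNorm c = D.card := rfl
  obtain ⟨w, hw⟩ : ∃ w, D.card = w := ⟨_, rfl⟩
  have hwlt : w < (s + 1) * δ := by rw [← hw, ← hwcard]; exact hlt
  have hsplit : (s + 1) * δ = s * δ + δ := by ring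
  have hwB : w < B + δ := by omega
  set S : ℕ → K := fun e => ∑ l : Fin n,
      (c l * ξ ^ (i₀ * ((l : ℕ) : ℤ))) * (ξ ^ (l : ℕ)) ^ e with hSdef
  have hZS : ∀ e ∈ (Finset.Icc 0 (B - 1) ∪
      Finset.Icc (B + 1) (B + δ - 1) ∪
      (Finset.Icc 1 s).biUnion (fun h =>
        Finset.Icc (B + h * δ + ((h - 1 + 1) / 2) * t + 1)
          (B + (h + 1) * δ - 1))), S e = 0 := by
    intro e he
    rw [← hzero e he]
    simp only [hSdef]
    apply Finset.sum_congr rfl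
    intro l _
    rw [← pow_mul, ← zpow_natCast ξ ((l : ℕ) * e), mul_assoc, ← zpow_add₀ hξ0]
    congr 1
    push_cast
    ring
  -- classification of indices below B + (s+1)δ
  have hclass : ∀ i, i < B + (s + 1) * δ →
      S i = 0 ∨ ∃ h r, h ≤ s ∧ r ≤ h / 2 * t ∧ i = B + h * δ + r := by
    intro i hi
    by_cases hiB : i < B
    · left
      apply hZS
      refine Finset.mem_union_left _ (Finset.mem_union_left _ ?_)
      rw [Finset.mem_Icc]
      omega
    · push_neg at hiB
      obtain ⟨h, r0, hdm, hr0⟩ : ∃ h r0, i - B = h * δ + r0 ∧ r0 < δ := by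
        refine ⟨(i - B) / δ, (i - B) % δ, ?_, Nat.mod_lt _ hδpos⟩
        have h2 := Nat.div_add_mod (i - B) δ
        have h3 : δ * ((i - B) / δ) = (i - B) / δ * δ := Nat.mul_comm _ _
        omega
      have hi' : i = B + h * δ + r0 := by omega
      have hhs : h ≤ s := by
        by_contra hcon
        push_neg at hcon
        have h2 : (s + 1) * δ ≤ h * δ := Nat.mul_le_mul_right _ hcon
        omega
      by_cases hgap : r0 ≤ h / 2 * t
      · right; exact ⟨h, r0, hhs, hgap, hi'⟩
      · push_neg at hgap
        left
        apply hZS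
        rcases Nat.eq_zero_or_pos h with hh0 | hh1
        · subst hh0
          refine Finset.mem_union_left _ (Finset.mem_union_right _ ?_)
          rw [Finset.mem_Icc]
          omega
        · refine Finset.mem_union_right _ ?_
          rw [Finset.mem_biUnion]
          refine ⟨h, ?_, ?_⟩
          · rw [Finset.mem_Icc]; omega
          · rw [Finset.mem_Icc]
            have hh1' : h - 1 + 1 = h := by omega
            rw [hh1']
            have hsd : (h + 1) * δ = h * δ + δ := by ring
            omega
  -- the locator polynomial
  set P : K[X] := ∏ l ∈ D, (X - C (ξ ^ (l : ℕ))) with hPdef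
  have hPmono : ∀ l ∈ D, (X - C (ξ ^ (l : ℕ))).Monic := fun l _ => monic_X_sub_C _
  have hPdeg : P.natDegree = w := by
    rw [hPdef, natDegree_prod_of_monic _ _ hPmono]
    simp only [natDegree_X_sub_C]
    rw [Finset.sum_const, smul_eq_mul, mul_one, hw]
  have hPtop : P.coeff w = 1 := by
    have hm : P.Monic := monic_prod_of_monic _ _ hPmono
    have h2 := hm.coeff_natDegree
    rwa [hPdeg] at h2
  have hPhi : ∀ k, w < k → P.coeff k = 0 := fun k hk =>
    Polynomial.coeff_eq_zero_of_natDegree_lt (by rw [hPdeg]; exact hk)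
  have hP0 : P.coeff 0 ≠ 0 := by
    rw [Polynomial.coeff_zero_eq_eval_zero, hPdef, Polynomial.eval_prod]
    rw [Finset.prod_ne_zero_iff]
    intro l _
    simp only [eval_sub, eval_X, eval_C, zero_sub, neg_ne_zero]
    exact pow_ne_zero _ hξ0
  -- generic evaluation identity
  have hgen : ∀ (R : K[X]) (N : ℕ), R.natDegree < N → ∀ e : ℕ,
      ∑ k ∈ Finset.range N, R.coeff k * S (e + k)
        = ∑ l : Fin n, (c l * ξ ^ (i₀ * ((l : ℕ) : ℤ))) *
            ((ξ ^ (l : ℕ)) ^ e * R.eval (ξ ^ (l : ℕ))) := by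
    intro R N hN e
    have h1 : ∀ k, R.coeff k * S (e + k)
        = ∑ l : Fin n, (c l * ξ ^ (i₀ * ((l : ℕ) : ℤ))) *
            ((ξ ^ (l : ℕ)) ^ e * (R.coeff k * (ξ ^ (l : ℕ)) ^ k)) := by
      intro k
      simp only [hSdef]
      rw [Finset.mul_sum]
      apply Finset.sum_congr rfl
      intro l _
      rw [pow_add]
      ring
    calc ∑ k ∈ Finset.range N, R.coeff k * S (e + k)
        = ∑ k ∈ Finset.range N, ∑ l : Fin n, (c l * ξ ^ (i₀ * ((l : ℕ) : ℤ))) *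
            ((ξ ^ (l : ℕ)) ^ e * (R.coeff k * (ξ ^ (l : ℕ)) ^ k)) :=
          Finset.sum_congr rfl fun k _ => h1 k
      _ = ∑ l : Fin n, ∑ k ∈ Finset.range N, (c l * ξ ^ (i₀ * ((l : ℕ) : ℤ))) *
            ((ξ ^ (l : ℕ)) ^ e * (R.coeff k * (ξ ^ (l : ℕ)) ^ k)) := Finset.sum_comm
      _ = ∑ l : Fin n, (c l * ξ ^ (i₀ * ((l : ℕ) : ℤ))) *
            ((ξ ^ (l : ℕ)) ^ e * R.eval (ξ ^ (l : ℕ))) := by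
          apply Finset.sum_congr rfl
          intro l _
          rw [Polynomial.eval_eq_sum_range' hN]
          simp only [Finset.mul_sum]
  -- the linear recurrence
  have hRec : ∀ e, ∑ k ∈ Finset.range (w + 1), P.coeff k * S (e + k) = 0 := by
    intro e
    rw [hgen P (w + 1) (by rw [hPdeg]; omega) e]
    apply Finset.sum_eq_zero
    intro l _
    by_cases hcl : c l = 0
    · rw [hcl]; ring
    · have hlD : l ∈ D := by rw [hD]; simp [hcl]
      have hev : P.eval (ξ ^ (l : ℕ)) = 0 := by
        rw [hPdef, Polynomial.eval_prod]
        exact Finset.prod_eq_zero hlD (by simp)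
      rw [hev]
      ring
  obtain ⟨l₀, hl₀⟩ : ∃ l, c l ≠ 0 := by
    by_contra hcn
    push_neg at hcn
    exact hc (funext hcn)
  have hl₀D : l₀ ∈ D := by rw [hD]; simp [hl₀]
  have hw1 : 1 ≤ w := by rw [← hw]; exact Finset.card_pos.mpr ⟨l₀, hl₀D⟩
  have hA₀ : c l₀ * ξ ^ (i₀ * ((l₀ : ℕ) : ℤ)) ≠ 0 := mul_ne_zero hl₀ (zpow_ne_zero _ hξ0)
  by_cases hSB : S B = 0
  · -- Case A : all syndromes vanish; Lagrange interpolation kills a support coefficient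
    have key : ∀ i, i < B + (s + 1) * δ → S i = 0 := by
      intro i
      induction i using Nat.strong_induction_on with
      | _ i ih =>
        intro hi
        rcases hclass i hi with h0 | ⟨h, r, hh, hr, hieq⟩
        · exact h0
        · rcases Nat.eq_zero_or_pos h with hh0 | hh1
          · subst hh0
            have hr0 : r = 0 := by omega
            subst hr0
            rw [hieq]
            simpa using hSB
          · have hδh : δ ≤ h * δ := Nat.le_mul_of_pos_left δ hh1
            have hwi : w < i := by omega
            have he : i - w + w = i := by omega
            have h1 := hRec (i - w)
            rw [Finset.sum_range_succ, hPtop, one_mul, he] at h1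
            have h2 : ∑ k ∈ Finset.range w, P.coeff k * S (i - w + k) = 0 := by
              apply Finset.sum_eq_zero
              intro k hk
              rw [Finset.mem_range] at hk
              rw [ih (i - w + k) (by omega) (by omega), mul_zero]
            rw [h2, zero_add] at h1
            exact h1
    have hinj : Set.InjOn (fun l : Fin n => ξ ^ (l : ℕ)) D := by
      intro l1 _ l2 _ hxeq
      exact Fin.ext (hξ.pow_inj l1.isLt l2.isLt hxeq)
    set Q : K[X] := Lagrange.basis D (fun l : Fin n => ξ ^ (l : ℕ)) l₀ with hQdef
    have hQdeg : Q.natDegree < w := by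
      rw [hQdef, Lagrange.natDegree_basis hinj hl₀D, hw]
      omega
    have hsum := hgen Q w hQdeg 0
    simp only [zero_add, pow_zero, one_mul] at hsum
    have hS0 : ∑ k ∈ Finset.range w, Q.coeff k * S k = 0 := by
      apply Finset.sum_eq_zero
      intro k hk
      rw [Finset.mem_range] at hk
      rw [key k (by omega), mul_zero]
    rw [hS0] at hsum
    have hval : ∑ l : Fin n, (c l * ξ ^ (i₀ * ((l : ℕ) : ℤ))) * Q.eval (ξ ^ (l : ℕ))
        = c l₀ * ξ ^ (i₀ * ((l₀ : ℕ) : ℤ)) := by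
      rw [Finset.sum_eq_single l₀]
      · have h0 : Polynomial.eval (ξ ^ (l₀ : ℕ)) Q = 1 := by
          rw [hQdef]; simpa using Lagrange.eval_basis_self hinj hl₀D
        rw [h0, mul_one]
      · intro l _ hne
        by_cases hcl : c l = 0
        · rw [hcl]; ring
        · have hlD : l ∈ D := by rw [hD]; simp [hcl]
          have h0 : Polynomial.eval (ξ ^ (l : ℕ)) Q = 0 := by
            rw [hQdef]; simpa using Lagrange.eval_basis_of_ne (s := D) (v := fun l : Fin n => ξ ^ (l : ℕ)) (Ne.symm hne) hlD
          rw [h0, mul_zero]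
      · intro habs
        exact absurd (Finset.mem_univ l₀) habs
    rw [hval] at hsum
    exact hA₀ hsum.symm
  · -- Case B : downward induction kills the constant coefficient of P
    have claim : ∀ d m, (∃ H R, m = H * δ + R ∧ R ≤ H / 2 * t) → B ≤ m + d →
        P.coeff m = 0 := by
      intro d
      induction d using Nat.strong_induction_on with
      | _ d ih =>
        rintro m ⟨H, R, hm, hR⟩ hBd
        rcases Nat.lt_or_ge w m with hmw | hmw
        · exact hPhi m hmw
        · have hHs : H ≤ s := by
            by_contra hcon
            push_neg at hcon
            have h2 : (s + 1) * δ ≤ H * δ := Nat.mul_le_mul_right _ hcon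
            omega
          have hmB : m ≤ B := by
            have h3 : H * δ ≤ s * δ := Nat.mul_le_mul_right _ hHs
            have h4 : H / 2 ≤ q := by rw [← hq]; exact Nat.div_le_div_right hHs
            have h5 : H / 2 * t ≤ q * t := Nat.mul_le_mul_right _ h4
            have h6 : q * t = t * q := Nat.mul_comm _ _
            omega
          have heq := hRec (B - m)
          have hterm : ∀ k ∈ Finset.range (w + 1), k ≠ m →
              P.coeff k * S (B - m + k) = 0 := by
            intro k hk hkm
            rw [Finset.mem_range] at hk
            rcases hclass (B - m + k) (by omega) with h0 | ⟨h, r, hh, hr, hieq⟩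
            · rw [h0, mul_zero]
            · have hk' : k = m + h * δ + r := by omega
              rcases Nat.eq_zero_or_pos h with hh0 | hh1
              · exfalso
                subst hh0
                omega
              · have hδh : δ ≤ h * δ := Nat.le_mul_of_pos_left δ hh1
                have hHh : H + h ≤ s := by
                  by_contra hcon
                  push_neg at hcon
                  have h2 : (s + 1) * δ ≤ (H + h) * δ := Nat.mul_le_mul_right _ hcon
                  have h3 : (H + h) * δ = H * δ + h * δ := add_mul _ _ _
                  omega
                have hrep : k = (H + h) * δ + (R + r) := by
                  have h3 : (H + h) * δ = H * δ + h * δ := add_mul _ _ _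
                  omega
                have hrb : R + r ≤ (H + h) / 2 * t := by
                  have h1 : H / 2 + h / 2 ≤ (H + h) / 2 := by omega
                  have h2 : (H / 2 + h / 2) * t ≤ (H + h) / 2 * t :=
                    Nat.mul_le_mul_right _ h1
                  have h3 : (H / 2 + h / 2) * t = H / 2 * t + h / 2 * t := add_mul _ _ _
                  omega
                have hkB : k ≤ B := by
                  have h3 : (H + h) * δ ≤ s * δ := Nat.mul_le_mul_right _ hHh
                  have h4 : (H + h) / 2 ≤ q := by rw [← hq]; exact Nat.div_le_div_right hHh
                  have h5 : (H + h) / 2 * t ≤ q * t := Nat.mul_le_mul_right _ h4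
                  have h6 : q * t = t * q := Nat.mul_comm _ _
                  omega
                obtain ⟨d', hd'1, hd'2⟩ : ∃ d', d' < d ∧ B ≤ k + d' := by
                  refine ⟨B - k, ?_, ?_⟩ <;> omega
                rw [ih d' hd'1 k ⟨H + h, R + r, hrep, hrb⟩ hd'2, zero_mul]
          have hsum2 : ∑ k ∈ Finset.range (w + 1), P.coeff k * S (B - m + k)
              = P.coeff m * S B := by
            rw [Finset.sum_eq_single_of_mem m (Finset.mem_range.mpr (by omega)) hterm,
              Nat.sub_add_cancel hmB]
          rw [hsum2] at heq
          exact (mul_eq_zero.mp heq).resolve_right hSB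
    have h00 : P.coeff 0 = 0 := claim B 0 ⟨0, 0, by simp, by simp⟩ (by omega)
    exact hP0 h00
end

section
/- (Betti–Sala bound.) Let δ ≥ 1 and s ≥ 1 be integers. Let K be a field, n an integer with n ≥ (2s+1)δ, ξ ∈ K a primitive n-th root of unity, and i₀ an integer. Let c : Fin n → K be nonzero and suppose that ∑_{l=0}^{n−1} c_l ξ^{(i₀+j)·l} = 0 for every j with 0 ≤ j ≤ sδ−1, and for every j of the form j = (s+h)δ + u with 0 ≤ h ≤ s and 1 ≤ u ≤ δ−1. Then the Hamming weight of c is at least (s+1)δ. -/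
open Polynomial Finset

/-- The Betti–Sala bound (Theorem 4): a cyclic code whose defining set contains
`{i₀+j : 0 ≤ j ≤ sδ-1}` and `{i₀+(s+h)δ+u : 0 ≤ h ≤ s, 1 ≤ u ≤ δ-1}` has minimum
distance at least `(s+1)δ`. -/
theorem betti_sala_bound
    (δ s : ℕ) (hδ : 1 ≤ δ) (hs : 1 ≤ s)
    {K : Type*} [Field K] [DecidableEq K] (n : ℕ)
    (hn : (2 * s + 1) * δ ≤ n)
    (ξ : K) (hξ : IsPrimitiveRoot ξ n) (i₀ : ℤ)
    (c : Fin n → K) (hc : c ≠ 0)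
    (h1 : ∀ j : ℕ, j < s * δ → ∑ l : Fin n, c l * ξ ^ ((i₀ + (j : ℤ)) * (l : ℕ)) = 0)
    (h2 : ∀ h u : ℕ, h ≤ s → 1 ≤ u → u ≤ δ - 1 →
      ∑ l : Fin n, c l * ξ ^ ((i₀ + (((s + h) * δ + u : ℕ) : ℤ)) * (l : ℕ)) = 0) :
    (s + 1) * δ ≤ hammingNorm c := by
  by_contra hcon
  push_neg at hcon
  -- basic facts
  have hδ0 : 0 < δ := hδ
  have hn0 : 0 < n := lt_of_lt_of_le (by positivity) hn
  have hξ0 : ξ ≠ 0 := hξ.ne_zero hn0.ne'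
  set N : ℕ := (2 * s + 1) * δ with hN
  set S : Finset (Fin n) := Finset.univ.filter (fun l => c l ≠ 0) with hSdef
  set w : ℕ := hammingNorm c with hwdef
  have hw : S.card = w := rfl
  set x : Fin n → K := fun l => ξ ^ (l : ℕ) with hxdef
  have hxne : ∀ l : Fin n, x l ≠ 0 := fun l => pow_ne_zero _ hξ0
  have hxinj : ∀ l m : Fin n, x l = x m → l = m := by
    intro l m h
    exact Fin.ext (hξ.pow_inj l.isLt m.isLt h)
  set c' : Fin n → K := fun l => c l * ξ ^ (i₀ * (l : ℕ)) with hc'def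
  have hc'ne : ∀ l ∈ S, c' l ≠ 0 := by
    intro l hl
    have hcl : c l ≠ 0 := (Finset.mem_filter.mp hl).2
    exact mul_ne_zero hcl (zpow_ne_zero _ hξ0)
  -- syndromes
  set a : ℕ → K := fun j => ∑ l ∈ S, c' l * x l ^ j with hadef
  have hsyn : ∀ j : ℕ, a j = ∑ l : Fin n, c l * ξ ^ ((i₀ + (j : ℤ)) * (l : ℕ)) := by
    intro j
    show ∑ l ∈ S, c' l * x l ^ j = _
    rw [hSdef, Finset.sum_filter]
    symm
    apply Finset.sum_congr rfl
    intro l _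
    by_cases hcl : c l ≠ 0
    · rw [if_pos hcl]
      symm
      have : ((i₀ + (j : ℤ)) * (l : ℕ)) = i₀ * (l : ℕ) + ((j * (l : ℕ) : ℕ) : ℤ) := by
        push_cast; ring
      rw [this, zpow_add₀ hξ0, zpow_natCast]
      have : ξ ^ (j * (l : ℕ)) = x l ^ j := by
        rw [hxdef]; rw [← pow_mul, mul_comm]
      rw [this, hc'def]; ring
    · rw [if_neg hcl]
      push_neg at hcl
      rw [hcl]; ring
  have hsynzero : ∀ j : ℕ, j < N → (∀ h : ℕ, h ≤ s → j ≠ (s + h) * δ) → a j = 0 := by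
    intro j hjN hj
    by_cases hjs : j < s * δ
    · rw [hsyn j]; exact h1 j hjs
    · push_neg at hjs
      set q : ℕ := j - s * δ with hq
      have hjq : j = s * δ + q := by omega
      have hjN' : j < s * δ + (s + 1) * δ := lt_of_lt_of_le hjN (le_of_eq (by rw [hN]; ring))
      have hqlt : q < (s + 1) * δ := by omega
      have hdm : q / δ * δ + q % δ = q := Nat.div_add_mod' q δ
      have hhle : q / δ ≤ s := by
        have := (Nat.div_lt_iff_lt_mul hδ0).mpr hqlt
        omega
      have hkey : j = (s + q / δ) * δ + q % δ := by
        rw [add_mul, add_assoc, hdm]; exact hjq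
      have hu : q % δ ≠ 0 := by
        intro h0
        exact hj (q / δ) hhle (by rw [hkey, h0, add_zero])
      have hmlt : q % δ < δ := Nat.mod_lt q hδ0
      rw [hsyn j, hkey]
      exact h2 (q / δ) (q % δ) hhle (by omega) (by omega)
  -- polynomial setup
  set σp : K[X] := ∏ l ∈ S, (1 - C (x l) * X) with hσdef
  set G : K[X] := ∑ l ∈ S, C (c' l) * ∏ m ∈ S.erase l, (1 - C (x m) * X) with hGdef
  set T : K[X] := ∑ j ∈ range N, C (a j) * X ^ j with hTdef
  set R : K[X] := ∑ l ∈ S, C (c' l * x l ^ N) * ∏ m ∈ S.erase l, (1 - C (x m) * X) with hRdef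
  have hT2 : T = ∑ l ∈ S, C (c' l) * ∑ j ∈ range N, (C (x l) * X) ^ j := by
    rw [hTdef]
    simp only [hadef, map_sum, Finset.sum_mul]
    rw [Finset.sum_comm]
    apply Finset.sum_congr rfl; intro l _
    rw [Finset.mul_sum]
    apply Finset.sum_congr rfl; intro j _
    rw [map_mul, map_pow, mul_pow]; ring
  have hGI : σp * T = G - X ^ N * R := by
    have hterm : ∀ l ∈ S, σp * (C (c' l) * ∑ j ∈ range N, (C (x l) * X) ^ j)
        = C (c' l) * ∏ m ∈ S.erase l, (1 - C (x m) * X)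
          - X ^ N * (C (c' l * x l ^ N) * ∏ m ∈ S.erase l, (1 - C (x m) * X)) := by
      intro l hl
      have hσl : σp = (1 - C (x l) * X) * ∏ m ∈ S.erase l, (1 - C (x m) * X) :=
        (Finset.mul_prod_erase S _ hl).symm
      have hgeo : (1 - C (x l) * X) * ∑ j ∈ range N, (C (x l) * X) ^ j
          = 1 - (C (x l) * X) ^ N := mul_neg_geom_sum _ _
      have hCsplit : (C (c' l * x l ^ N) : K[X]) = C (c' l) * C (x l) ^ N := by
        rw [map_mul (C : K →+* K[X]) (c' l) (x l ^ N), map_pow (C : K →+* K[X]) (x l) N]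
      rw [hσl, hCsplit]
      linear_combination (C (c' l) * ∏ m ∈ S.erase l, (1 - C (x m) * X)) * hgeo
    rw [hT2, Finset.mul_sum, Finset.sum_congr rfl hterm, Finset.sum_sub_distrib,
      ← Finset.mul_sum, ← hGdef, ← hRdef]
  -- degree facts
  have hfaceq : ∀ m : Fin n, (1 - C (x m) * X : K[X]) = C (-(x m)) * X + C 1 := by
    intro m; rw [map_neg, map_one]; ring
  have hfacdeg : ∀ m : Fin n, (1 - C (x m) * X : K[X]).natDegree ≤ 1 := by
    intro m; rw [hfaceq]; exact natDegree_linear_le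
  have hproddeg : ∀ l ∈ S, (∏ m ∈ S.erase l, (1 - C (x m) * X) : K[X]).natDegree ≤ w - 1 := by
    intro l hl
    refine le_trans (Polynomial.natDegree_prod_le _ _) ?_
    refine le_trans (Finset.sum_le_card_nsmul _ _ 1 (fun m _ => hfacdeg m)) ?_
    rw [Finset.card_erase_of_mem hl, hw]
    simp
  have hSne : S.Nonempty := by
    obtain ⟨l₀, hl₀⟩ := Function.ne_iff.mp hc
    exact ⟨l₀, Finset.mem_filter.mpr ⟨Finset.mem_univ _, by simpa using hl₀⟩⟩
  have hw1 : 1 ≤ w := by rw [← hw]; exact Finset.card_pos.mpr hSne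
  have hGdegcoeff : ∀ k, w ≤ k → G.coeff k = 0 := by
    intro k hk
    rw [hGdef, Polynomial.finset_sum_coeff]
    apply Finset.sum_eq_zero
    intro l hl
    apply Polynomial.coeff_eq_zero_of_natDegree_lt
    calc (C (c' l) * ∏ m ∈ S.erase l, (1 - C (x m) * X)).natDegree
        ≤ (∏ m ∈ S.erase l, (1 - C (x m) * X) : K[X]).natDegree := Polynomial.natDegree_C_mul_le _ _
      _ ≤ w - 1 := hproddeg l hl
      _ < k := by omega
  have hfacne : ∀ m : Fin n, (1 - C (x m) * X : K[X]) ≠ 0 := by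
    intro m h0
    have := congrArg (Polynomial.coeff · 0) h0
    simp at this
  have hfacdeg1 : ∀ m : Fin n, (1 - C (x m) * X : K[X]).natDegree = 1 := by
    intro m; rw [hfaceq]; exact natDegree_linear (neg_ne_zero.mpr (hxne m))
  have hσdeg : σp.natDegree = w := by
    rw [hσdef, Polynomial.natDegree_prod _ _ (fun l _ => hfacne l)]
    rw [Finset.sum_congr rfl (fun l _ => hfacdeg1 l), ← hw]
    simp
  have hσlead : σp.coeff w ≠ 0 := by
    have h1' : σp.coeff w = σp.leadingCoeff := by
      rw [Polynomial.leadingCoeff, hσdeg]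
    rw [h1', hσdef, Polynomial.leadingCoeff_prod]
    apply Finset.prod_ne_zero_iff.mpr
    intro l _
    rw [Polynomial.leadingCoeff, hfacdeg1 l, hfaceq l]
    simpa [Polynomial.coeff_one] using hxne l
  have hσ0 : σp.coeff 0 = 1 := by
    rw [Polynomial.coeff_zero_eq_eval_zero, hσdef, Polynomial.eval_prod]
    apply Finset.prod_eq_one
    intro l _
    simp
  -- the coefficient formula
  have hL : ∀ k, k < N → G.coeff k =
      ∑ h ∈ range (s + 1),
        (if (s + h) * δ ≤ k then σp.coeff (k - (s + h) * δ) * a ((s + h) * δ) else 0) := by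
    intro k hk
    have h1' : G.coeff k = (σp * T).coeff k := by
      have hG2 : G = σp * T + X ^ N * R := by rw [hGI]; ring
      rw [hG2, Polynomial.coeff_add]
      have h0 : (X ^ N * R : K[X]).coeff k = 0 := by
        rw [mul_comm, Polynomial.coeff_mul_X_pow', if_neg (by omega)]
      rw [h0, add_zero]
    have hterm : ∀ j ∈ range N, (σp * (C (a j) * X ^ j)).coeff k
        = if j ≤ k then σp.coeff (k - j) * a j else 0 := by
      intro j _
      rw [← mul_assoc, Polynomial.coeff_mul_X_pow', Polynomial.coeff_mul_C]
    rw [h1', hTdef, Finset.mul_sum, Polynomial.finset_sum_coeff,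
      Finset.sum_congr rfl hterm]
    have hIsub : (range (s + 1)).image (fun h => (s + h) * δ) ⊆ range N := by
      intro j hj; rw [Finset.mem_image] at hj; obtain ⟨h, hh, rfl⟩ := hj
      rw [Finset.mem_range] at hh ⊢
      rw [hN]
      exact (Nat.mul_lt_mul_right hδ0).mpr (by omega)
    have hzero : ∀ j ∈ range N, j ∉ (range (s + 1)).image (fun h => (s + h) * δ) →
        (if j ≤ k then σp.coeff (k - j) * a j else 0) = 0 := by
      intro j hjN' hjI
      have haj : a j = 0 := by
        apply hsynzero j (Finset.mem_range.mp hjN')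
        intro h hh heq
        exact hjI (Finset.mem_image.mpr ⟨h, Finset.mem_range.mpr (by omega), heq.symm⟩)
      split_ifs <;> simp [haj]
    rw [← Finset.sum_subset hIsub hzero]
    rw [Finset.sum_image (fun h1 _ h2 _ he => by
      have := Nat.eq_of_mul_eq_mul_right hδ0 he; omega)]
  -- endgame
  by_cases hA : ∀ h : ℕ, h ≤ s → a ((s + h) * δ) = 0
  · -- all block syndromes vanish: G = 0, contradiction with c ≠ 0
    have hG0 : G = 0 := by
      apply Polynomial.ext
      intro k
      rw [Polynomial.coeff_zero]
      by_cases hkN : k < N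
      · rw [hL k hkN]
        apply Finset.sum_eq_zero
        intro h hh
        have hh' : h ≤ s := by have := Finset.mem_range.mp hh; omega
        rw [hA h hh', mul_zero, ite_self]
      · apply hGdegcoeff
        have hNN : (s + 1) * δ ≤ N := by
          rw [hN]; exact mul_le_mul_left (by omega) δ
        omega
    obtain ⟨l₀, hl₀⟩ := hSne
    have heval := congrArg (Polynomial.eval (x l₀)⁻¹) hG0
    rw [hGdef, Polynomial.eval_zero, Polynomial.eval_finset_sum] at heval
    simp only [Polynomial.eval_mul, Polynomial.eval_C, Polynomial.eval_prod,
      Polynomial.eval_sub, Polynomial.eval_one, Polynomial.eval_X] at heval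
    rw [Finset.sum_eq_single_of_mem l₀ hl₀ (fun l hl hne => by
      have hmem : l₀ ∈ S.erase l := Finset.mem_erase.mpr ⟨fun h => hne h.symm, hl₀⟩
      rw [Finset.prod_eq_zero hmem (by rw [mul_inv_cancel₀ (hxne l₀), sub_self]), mul_zero])]
      at heval
    have hprodne : (∏ m ∈ S.erase l₀, (1 - x m * (x l₀)⁻¹)) ≠ 0 := by
      apply Finset.prod_ne_zero_iff.mpr
      intro m hm h0
      exact (Finset.mem_erase.mp hm).1
        (hxinj m l₀ ((mul_inv_eq_one₀ (hxne l₀)).mp (sub_eq_zero.mp h0).symm))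
    exact hc'ne l₀ hl₀ ((mul_eq_zero.mp heval).resolve_right hprodne)
  · push_neg at hA
    have hex : ∃ h, h ≤ s ∧ a ((s + h) * δ) ≠ 0 := hA
    set h₀ := Nat.find hex with hh₀
    obtain ⟨hh₀s, hah₀⟩ := Nat.find_spec hex
    rw [← hh₀] at hh₀s hah₀
    have hmin : ∀ h < h₀, h ≤ s → a ((s + h) * δ) = 0 := by
      intro h hlt hle
      by_contra hne
      exact Nat.find_min hex hlt ⟨hle, hne⟩
    have hkN : (s + h₀) * δ < N := by
      rw [hN]; exact (Nat.mul_lt_mul_right hδ0).mpr (by omega)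
    have hGc : G.coeff ((s + h₀) * δ) = a ((s + h₀) * δ) := by
      rw [hL _ hkN]
      rw [Finset.sum_eq_single_of_mem h₀ (Finset.mem_range.mpr (by omega))
        (fun h hh hne => by
          rcases lt_or_gt_of_ne hne with hlt | hgt
          · have h0 : a ((s + h) * δ) = 0 :=
              hmin h hlt (by have := Finset.mem_range.mp hh; omega)
            rw [h0, mul_zero, ite_self]
          · have hlt2 : (s + h₀) * δ < (s + h) * δ :=
              (Nat.mul_lt_mul_right hδ0).mpr (by omega)
            exact if_neg (by omega))]
      rw [if_pos le_rfl, Nat.sub_self, hσ0, one_mul]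
    have hwgt : (s + h₀) * δ < w := by
      by_contra hge
      push_neg at hge
      exact hah₀ (by rw [← hGc]; exact hGdegcoeff _ hge)
    have hs1 : (s + 1) * δ = s * δ + δ := by ring
    have hh00 : h₀ = 0 := by
      by_contra h0ne
      have hle2 : (s + 1) * δ ≤ (s + h₀) * δ := mul_le_mul_left (by omega) δ
      omega
    rw [hh00] at hah₀ hwgt
    have hs0 : (s + 0) * δ = s * δ := by ring
    set r : ℕ := w - s * δ with hrdef
    have hr1 : 1 ≤ r := by omega
    have hwr : w = s * δ + r := by omega
    have hrδ : r ≤ δ - 1 := by omega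
    have key : ∀ m : ℕ, m ≤ s * δ + r → r ≤ m % δ → σp.coeff m = 0 := by
      intro m
      induction m using Nat.strong_induction_on with
      | _ m ih =>
        intro hm1 hm2
        have hmr : r ≤ m := le_trans hm2 (Nat.mod_le m δ)
        have hkN' : s * δ + m < N := by
          have hNs : N = s * δ + (s * δ + δ) := by rw [hN]; ring
          omega
        have hwle : w ≤ s * δ + m := by omega
        have hG0' : G.coeff (s * δ + m) = 0 := hGdegcoeff _ hwle
        rw [hL _ hkN'] at hG0'
        rw [Finset.sum_eq_single_of_mem 0 (Finset.mem_range.mpr (by omega))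
          (fun h hh hne => by
            have hh1 : 1 ≤ h := by omega
            have hsh : (s + h) * δ = s * δ + h * δ := by ring
            by_cases hcond : (s + h) * δ ≤ s * δ + m
            · rw [if_pos hcond]
              have hhδm : h * δ ≤ m := by omega
              have hidx : s * δ + m - (s + h) * δ = m - h * δ := by omega
              rw [hidx]
              have h11 : 1 * 1 ≤ h * δ := Nat.mul_le_mul hh1 hδ
              have hlt : m - h * δ < m := by omega
              have hmod : (m - h * δ) % δ = m % δ := by
                conv_rhs => rw [show m = (m - h * δ) + h * δ from by omega]
                rw [Nat.add_mul_mod_self_right]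
              rw [ih (m - h * δ) hlt (by omega) (by rw [hmod]; exact hm2), zero_mul]
            · rw [if_neg hcond])] at hG0'
        rw [if_pos (by omega), show s * δ + m - (s + 0) * δ = m from by omega] at hG0'
        rcases mul_eq_zero.mp hG0' with h | h
        · exact h
        · exact absurd h hah₀
    have hwmod : w % δ = r := by
      rw [hwr, add_comm, Nat.add_mul_mod_self_right, Nat.mod_eq_of_lt (by omega)]
    exact hσlead (key w (by omega) (by omega))
end

section
/- Let δ ≥ 2 and 1 ≤ t ≤ δ−1 be integers. Let K be a field, n an integer with n ≥ 3δ + t − 1, ξ ∈ K a primitive n-th root of unity, and i₀ an integer. Let c : Fin n → K be nonzero and suppose that ∑_{l=0}^{n−1} c_l ξ^{(i₀+e)·l} = 0 for every e in Z := {0,…,δ+t−2} ∪ {δ+t,…,2δ+t−2} ∪ {2δ+2t−1,…,3δ+t−2}. Then the Hamming weight of c is at least 2δ. -/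
open Polynomial Finset

private lemma coeff_sum_CX {K : Type*} [Semiring K] (f : ℕ → K) (N m : ℕ) :
    (∑ e ∈ Finset.range N, Polynomial.C (f e) * Polynomial.X ^ e).coeff m
      = if m < N then f m else 0 := by
  simp [Polynomial.finset_sum_coeff, Polynomial.coeff_C_mul, Polynomial.coeff_X_pow,
    mul_ite, mul_one, mul_zero, Finset.sum_ite_eq', Finset.mem_range]

private lemma eval_sum_CX {K : Type*} [Semiring K] (f : ℕ → K) (N : ℕ) (y : K) :
    (∑ e ∈ Finset.range N, Polynomial.C (f e) * Polynomial.X ^ e).eval y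
      = ∑ e ∈ Finset.range N, f e * y ^ e := by
  simp [Polynomial.eval_finset_sum]

private lemma geom_helper {K : Type*} [Field K] (r : K) (N : ℕ) :
    (1 - C r * X) * ∑ e ∈ Finset.range N, C (r ^ e) * X ^ e
      = 1 - C (r ^ N) * X ^ N := by
  have h := geom_sum_mul (C r * X) N
  have h2 : (1 - C r * X) * ∑ e ∈ Finset.range N, (C r * X) ^ e
      = 1 - (C r * X) ^ N := by linear_combination -h
  simpa [C_pow, mul_pow] using h2

private lemma master {K : Type*} [Field K] (δ t : ℕ) (hδ : 2 ≤ δ) (ht1 : 1 ≤ t)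
    (ht2 : t ≤ δ - 1) {ι : Type*} [DecidableEq ι] (E : Finset ι) (x a : ι → K)
    (hx0 : ∀ j ∈ E, x j ≠ 0) (hxinj : ∀ j ∈ E, ∀ k ∈ E, x j = x k → j = k)
    (ha : ∀ j ∈ E, a j ≠ 0) (hne : E.Nonempty) (hcard : E.card ≤ 2 * δ - 1)
    (hZ : ∀ e : ℕ, (e ≤ δ + t - 2 ∨ (δ + t ≤ e ∧ e ≤ 2 * δ + t - 2) ∨
        (2 * δ + 2 * t - 1 ≤ e ∧ e ≤ 3 * δ + t - 2)) →
      ∑ j ∈ E, a j * x j ^ e = 0) : False := by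
  classical
  set w := E.card with hwdef
  have hw1 : 1 ≤ w := Finset.card_pos.mpr hne
  set N := 3 * δ + t - 1 with hNdef
  set S : ℕ → K := fun e => ∑ j ∈ E, a j * x j ^ e with hSdef
  set u := S (δ + t - 1) with hudef
  set g : ℕ → K := fun l => S (2 * δ + t - 1 + l) with hgdef
  set σp : K[X] := ∏ j ∈ E, (1 - C (x j) * X) with hσdef
  set P : K[X] := ∑ j ∈ E, C (a j) * ∏ k ∈ E.erase j, (1 - C (x k) * X) with hPdef
  set T : K[X] := ∑ e ∈ range N, C (S e) * X ^ e with hTdef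
  -- degree bounds
  have deg1 : ∀ r : K, (1 - C r * X).natDegree ≤ 1 := by
    intro r
    refine le_trans (natDegree_sub_le _ _) ?_
    simp only [natDegree_one, max_le_iff]
    exact ⟨Nat.zero_le _, le_trans (natDegree_C_mul_le _ _) (by simp)⟩
  have hdegσ : σp.natDegree ≤ w := by
    rw [hσdef]
    refine le_trans (natDegree_prod_le _ _) ?_
    refine le_trans (Finset.sum_le_sum fun k _ => deg1 (x k)) ?_
    simp
    omega
  have hdegP : P.natDegree ≤ w - 1 := by
    rw [hPdef]
    refine natDegree_sum_le_of_forall_le _ _ fun j hj => ?_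
    refine le_trans (natDegree_C_mul_le _ _) ?_
    refine le_trans (natDegree_prod_le _ _) ?_
    refine le_trans (Finset.sum_le_sum fun k _ => deg1 (x k)) ?_
    simp [Finset.card_erase_of_mem hj]
    omega
  have hPhi : ∀ m, w - 1 < m → P.coeff m = 0 :=
    fun m hm => coeff_eq_zero_of_natDegree_lt (lt_of_le_of_lt hdegP hm)
  have hσhi : ∀ k, w < k → σp.coeff k = 0 :=
    fun k hk => coeff_eq_zero_of_natDegree_lt (lt_of_le_of_lt hdegσ hk)
  -- the key polynomial identity
  have key : σp * T = P - X ^ N *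
      ∑ j ∈ E, C (a j * x j ^ N) * ∏ k ∈ E.erase j, (1 - C (x k) * X) := by
    have hTsum : T = ∑ j ∈ E, C (a j) * ∑ e ∈ range N, C (x j ^ e) * X ^ e := by
      rw [hTdef]
      calc ∑ e ∈ range N, C (S e) * X ^ e
          = ∑ e ∈ range N, ∑ j ∈ E, C (a j * x j ^ e) * X ^ e := by
            refine Finset.sum_congr rfl fun e _ => ?_
            rw [hSdef, map_sum, Finset.sum_mul]
        _ = ∑ j ∈ E, ∑ e ∈ range N, C (a j * x j ^ e) * X ^ e := Finset.sum_comm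
        _ = ∑ j ∈ E, C (a j) * ∑ e ∈ range N, C (x j ^ e) * X ^ e := by
            refine Finset.sum_congr rfl fun j _ => ?_
            rw [Finset.mul_sum]
            exact Finset.sum_congr rfl fun e _ => by rw [C_mul, mul_assoc]
    rw [hTsum, Finset.mul_sum]
    have hterm : ∀ j ∈ E, σp * (C (a j) * ∑ e ∈ range N, C (x j ^ e) * X ^ e)
        = C (a j) * ∏ k ∈ E.erase j, (1 - C (x k) * X)
          - X ^ N * (C (a j * x j ^ N) * ∏ k ∈ E.erase j, (1 - C (x k) * X)) := by
      intro j hj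
      have hσfac : σp = (1 - C (x j) * X) * ∏ k ∈ E.erase j, (1 - C (x k) * X) := by
        rw [hσdef, ← Finset.mul_prod_erase E _ hj]
      rw [hσfac]
      have hg2 := geom_helper (x j) N
      calc (1 - C (x j) * X) * (∏ k ∈ E.erase j, (1 - C (x k) * X)) *
            (C (a j) * ∑ e ∈ range N, C (x j ^ e) * X ^ e)
          = ((1 - C (x j) * X) * ∑ e ∈ range N, C (x j ^ e) * X ^ e) *
            (C (a j) * ∏ k ∈ E.erase j, (1 - C (x k) * X)) := by ring
        _ = (1 - C (x j ^ N) * X ^ N) *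
            (C (a j) * ∏ k ∈ E.erase j, (1 - C (x k) * X)) := by rw [hg2]
        _ = _ := by rw [C_mul]; ring
    rw [Finset.sum_congr rfl hterm, Finset.sum_sub_distrib, ← Finset.mul_sum, hPdef]
  -- coefficient formula for P below N
  have hPm : ∀ m, m < N → P.coeff m =
      (if δ + t - 1 ≤ m then u * σp.coeff (m - (δ + t - 1)) else 0)
      + ∑ l ∈ range t,
          (if 2 * δ + t - 1 + l ≤ m then g l * σp.coeff (m - (2 * δ + t - 1 + l)) else 0) := by
    intro m hm
    have hPcoeff : P.coeff m = (σp * T).coeff m := by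
      have : (X ^ N * ∑ j ∈ E, C (a j * x j ^ N) * ∏ k ∈ E.erase j,
          (1 - C (x k) * X)).coeff m = 0 := by
        rw [mul_comm, coeff_mul_X_pow']
        simp [Nat.not_le.mpr hm]
      have h2 := congrArg (fun p => Polynomial.coeff p m) key
      simp only [coeff_sub, this, sub_zero] at h2
      exact h2.symm
    -- coefficients of T below N
    set T' : K[X] := C u * X ^ (δ + t - 1)
        + ∑ l ∈ range t, C (g l) * X ^ (2 * δ + t - 1 + l) with hT'def
    have hT'c : ∀ e, T'.coeff e = (if e = δ + t - 1 then u else 0)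
        + ∑ l ∈ range t, (if e = 2 * δ + t - 1 + l then g l else 0) := by
      intro e
      rw [hT'def]
      simp [coeff_C_mul, coeff_X_pow, finset_sum_coeff, mul_ite]
    have hTT' : ∀ e, e < N → T.coeff e = T'.coeff e := by
      intro e he
      rw [hTdef, coeff_sum_CX, if_pos he, hT'c]
      by_cases h1 : e = δ + t - 1
      · rw [if_pos h1]
        have hsum0 : ∑ l ∈ range t, (if e = 2 * δ + t - 1 + l then g l else 0) = 0 :=
          Finset.sum_eq_zero fun l hl => if_neg (by omega)
        rw [hsum0, add_zero, h1, hudef]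
      · rw [if_neg h1, zero_add]
        by_cases h2 : 2 * δ + t - 1 ≤ e ∧ e ≤ 2 * δ + 2 * t - 2
        · have hrange : e - (2 * δ + t - 1) ∈ range t := by
            simp only [Finset.mem_range]; omega
          rw [Finset.sum_eq_single_of_mem _ hrange
            (fun l hl hlne => if_neg (by simp only [Finset.mem_range] at hl; omega))]
          rw [if_pos (by omega), hgdef]
          congr 1
          omega
        · have hz : S e = 0 := hZ e (by omega)
          rw [hz]
          exact (Finset.sum_eq_zero fun l hl => if_neg
            (by simp only [Finset.mem_range] at hl; omega)).symm
    have hmul : (σp * T).coeff m = (σp * T').coeff m := by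
      rw [coeff_mul, coeff_mul]
      refine Finset.sum_congr rfl fun p hp => ?_
      rw [Finset.HasAntidiagonal.mem_antidiagonal] at hp
      rw [hTT' p.2 (by omega)]
    have hexp : σp * T' = C u * σp * X ^ (δ + t - 1)
        + ∑ l ∈ range t, C (g l) * σp * X ^ (2 * δ + t - 1 + l) := by
      rw [hT'def, mul_add, Finset.mul_sum]
      congr 1
      · ring
      · exact Finset.sum_congr rfl fun l _ => by ring
    rw [hPcoeff, hmul, hexp, coeff_add, coeff_mul_X_pow', finset_sum_coeff]
    congr 1
    · by_cases h : δ + t - 1 ≤ m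
      · rw [if_pos h, if_pos h, coeff_C_mul]
      · rw [if_neg h, if_neg h]
    · refine Finset.sum_congr rfl fun l _ => ?_
      rw [coeff_mul_X_pow']
      by_cases h : 2 * δ + t - 1 + l ≤ m
      · rw [if_pos h, if_pos h, coeff_C_mul]
      · rw [if_neg h, if_neg h]
  -- evaluation facts
  have hσeval : ∀ j ∈ E, σp.eval (x j)⁻¹ = 0 := by
    intro j hj
    rw [hσdef, eval_prod]
    refine Finset.prod_eq_zero hj ?_
    simp [mul_inv_cancel₀ (hx0 j hj)]
  have hPeval : ∀ j ∈ E, P.eval (x j)⁻¹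
      = a j * ∏ k ∈ E.erase j, (1 - x k * (x j)⁻¹) := by
    intro j hj
    rw [hPdef]
    rw [Polynomial.eval_finset_sum]
    rw [Finset.sum_eq_single_of_mem j hj]
    · simp [eval_prod]
    · intro j' hj' hne'
      have hjmem : j ∈ E.erase j' := Finset.mem_erase.mpr ⟨fun h => hne' h.symm, hj⟩
      simp only [eval_mul, eval_C, eval_prod]
      refine mul_eq_zero_of_right _ (Finset.prod_eq_zero hjmem ?_)
      simp [mul_inv_cancel₀ (hx0 j hj)]
  have hfac_ne : ∀ j ∈ E, ∀ k ∈ E.erase j, (1 : K) - x k * (x j)⁻¹ ≠ 0 := by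
    intro j hj k hk h
    have hkE : k ∈ E := Finset.mem_of_mem_erase hk
    have hxk : x k = x j :=
      (mul_inv_eq_one₀ (hx0 j hj)).mp (sub_eq_zero.mp h).symm
    exact (Finset.ne_of_mem_erase hk) (hxinj k hkE j hj hxk)
  have hPne : ∀ j ∈ E, P.eval (x j)⁻¹ ≠ 0 := by
    intro j hj
    rw [hPeval j hj]
    exact mul_ne_zero (ha j hj) (Finset.prod_ne_zero_iff.mpr (hfac_ne j hj))
  by_cases hu : u = 0
  · -- case u = 0 : P = 0, contradiction with evaluation
    have hP0 : P = 0 := by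
      apply Polynomial.ext
      intro m
      rw [Polynomial.coeff_zero]
      by_cases hm : w - 1 < m
      · exact hPhi m hm
      · have hmN : m < N := by omega
        rw [hPm m hmN]
        have h1 : (if δ + t - 1 ≤ m then u * σp.coeff (m - (δ + t - 1)) else 0) = 0 := by
          split_ifs <;> simp [hu]
        have h2 : ∑ l ∈ range t, (if 2 * δ + t - 1 + l ≤ m then
            g l * σp.coeff (m - (2 * δ + t - 1 + l)) else 0) = 0 :=
          Finset.sum_eq_zero fun l hl => if_neg (by omega)
        rw [h1, h2, add_zero]
    obtain ⟨j, hj⟩ := hne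
    exact hPne j hj (by rw [hP0]; simp)
  · -- case u ≠ 0
    have ha_s : ∀ k, δ - t ≤ k → k ≤ δ - 1 → σp.coeff k = 0 := by
      intro k h1 h2
      have hmN : k + (δ + t - 1) < N := by omega
      have h := hPm _ hmN
      rw [hPhi _ (by omega)] at h
      rw [if_pos (by omega)] at h
      have hidx : k + (δ + t - 1) - (δ + t - 1) = k := by omega
      rw [hidx] at h
      have hsum0 : ∑ l ∈ range t, (if 2 * δ + t - 1 + l ≤ k + (δ + t - 1) then
          g l * σp.coeff (k + (δ + t - 1) - (2 * δ + t - 1 + l)) else 0) = 0 :=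
        Finset.sum_eq_zero fun l hl => if_neg (by omega)
      rw [hsum0, add_zero] at h
      exact (mul_eq_zero.mp h.symm).resolve_left hu
    have hb : ∀ r, r < δ → u * σp.coeff (δ + r)
        + ∑ l ∈ range t, (if l ≤ r then g l * σp.coeff (r - l) else 0) = 0 := by
      intro r hr
      have hmN : r + (2 * δ + t - 1) < N := by omega
      have h := hPm _ hmN
      rw [hPhi _ (by omega)] at h
      rw [if_pos (by omega)] at h
      have hidx : r + (2 * δ + t - 1) - (δ + t - 1) = δ + r := by omega
      rw [hidx] at h
      have hsum : ∑ l ∈ range t, (if 2 * δ + t - 1 + l ≤ r + (2 * δ + t - 1) then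
          g l * σp.coeff (r + (2 * δ + t - 1) - (2 * δ + t - 1 + l)) else 0)
          = ∑ l ∈ range t, (if l ≤ r then g l * σp.coeff (r - l) else 0) := by
        refine Finset.sum_congr rfl fun l hl => ?_
        by_cases hlr : l ≤ r
        · have hidx2 : r + (2 * δ + t - 1) - (2 * δ + t - 1 + l) = r - l := by omega
          rw [if_pos (by omega), if_pos hlr, hidx2]
        · rw [if_neg (by omega), if_neg hlr]
      rw [hsum] at h
      exact h.symm
    set A : K[X] := ∑ k ∈ range (δ - t), C (σp.coeff k) * X ^ k with hAdef
    set B : K[X] := ∑ r ∈ range δ, C (σp.coeff (δ + r)) * X ^ r with hBdef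
    have hAc : ∀ m, A.coeff m = if m < δ - t then σp.coeff m else 0 := by
      intro m; rw [hAdef, coeff_sum_CX]
    have hBc : ∀ m, B.coeff m = if m < δ then σp.coeff (δ + m) else 0 := by
      intro m; rw [hBdef, coeff_sum_CX]
    have hσAB : σp = A + X ^ δ * B := by
      apply Polynomial.ext
      intro m
      rw [coeff_add, hAc, mul_comm (X ^ δ) B, coeff_mul_X_pow', hBc]
      by_cases h1 : m < δ - t
      · rw [if_pos h1, if_neg (by omega), add_zero]
      · rw [if_neg h1]
        by_cases h2 : δ ≤ m
        · rw [if_pos h2]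
          by_cases h3 : m - δ < δ
          · rw [if_pos h3, zero_add]
            congr 1
            omega
          · rw [if_neg h3, zero_add]
            exact hσhi m (by omega)
        · rw [if_neg h2, add_zero]
          exact ha_s m (by omega) (by omega)
    have hPuA : P = C u * A * X ^ (δ + t - 1) := by
      apply Polynomial.ext
      intro m
      rw [coeff_mul_X_pow', coeff_C_mul, hAc]
      by_cases h1 : m < δ + t - 1
      · rw [if_neg (by omega), hPm m (by omega), if_neg (by omega), zero_add]
        exact Finset.sum_eq_zero fun l hl => if_neg (by omega)
      · by_cases h2 : m ≤ 2 * δ + t - 2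
        · rw [if_pos (by omega), hPm m (by omega), if_pos (by omega)]
          have hsum0 : ∑ l ∈ range t, (if 2 * δ + t - 1 + l ≤ m then
              g l * σp.coeff (m - (2 * δ + t - 1 + l)) else 0) = 0 :=
            Finset.sum_eq_zero fun l hl => if_neg (by omega)
          rw [hsum0, add_zero]
          by_cases h3 : m - (δ + t - 1) < δ - t
          · rw [if_pos h3]
          · rw [if_neg h3]
            rw [ha_s (m - (δ + t - 1)) (by omega) (by omega), mul_zero]
        · rw [hPhi m (by omega)]
          by_cases h4 : δ + t - 1 ≤ m
          · rw [if_pos h4, if_neg (by omega), mul_zero]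
          · rw [if_neg h4]
    have hAeval : ∀ j ∈ E, A.eval (x j)⁻¹ ≠ 0 := by
      intro j hj hA0
      refine hPne j hj ?_
      rw [hPuA]
      simp [hA0]
    have hGA : ∀ j ∈ E, u * B.eval ((x j)⁻¹)
        = -((∑ l ∈ range t, g l * ((x j)⁻¹) ^ l) * A.eval ((x j)⁻¹)) := by
      intro j hj
      set y := (x j)⁻¹ with hy
      have hBev : B.eval y = ∑ r ∈ range δ, σp.coeff (δ + r) * y ^ r := by
        rw [hBdef]; exact eval_sum_CX _ _ _
      have hAev : A.eval y = ∑ k ∈ range (δ - t), σp.coeff k * y ^ k := by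
        rw [hAdef]; exact eval_sum_CX _ _ _
      rw [hBev, Finset.mul_sum]
      have step1 : ∀ r ∈ range δ, u * (σp.coeff (δ + r) * y ^ r)
          = -∑ l ∈ range t, (if l ≤ r then g l * σp.coeff (r - l) * y ^ r else 0) := by
        intro r hr
        simp only [Finset.mem_range] at hr
        have h := hb r hr
        have heq : u * σp.coeff (δ + r)
            = -∑ l ∈ range t, (if l ≤ r then g l * σp.coeff (r - l) else 0) := by
          linear_combination h
        calc u * (σp.coeff (δ + r) * y ^ r) = (u * σp.coeff (δ + r)) * y ^ r := by ring
          _ = (-∑ l ∈ range t, (if l ≤ r then g l * σp.coeff (r - l) else 0)) * y ^ r := by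
              rw [heq]
          _ = -∑ l ∈ range t, (if l ≤ r then g l * σp.coeff (r - l) * y ^ r else 0) := by
              rw [neg_mul, Finset.sum_mul]
              congr 1
              refine Finset.sum_congr rfl fun l hl => ?_
              rw [ite_mul, zero_mul]
      rw [Finset.sum_congr rfl step1, Finset.sum_neg_distrib, neg_inj]
      have hswap : ∑ r ∈ range δ, ∑ l ∈ range t,
            (if l ≤ r then g l * σp.coeff (r - l) * y ^ r else 0)
          = ∑ l ∈ range t, ∑ r ∈ range δ,
            (if l ≤ r then g l * σp.coeff (r - l) * y ^ r else 0) :=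
        Finset.sum_comm
      rw [hswap]
      have hinner : ∀ l ∈ range t, ∑ r ∈ range δ,
            (if l ≤ r then g l * σp.coeff (r - l) * y ^ r else 0)
          = g l * y ^ l * A.eval y := by
        intro l hl
        simp only [Finset.mem_range] at hl
        rw [← Finset.sum_filter]
        have hfil : (range δ).filter (fun r => l ≤ r) = Finset.Ico l δ := by
          ext r
          simp only [Finset.mem_filter, Finset.mem_range, Finset.mem_Ico]
          omega
        rw [hfil, Finset.sum_Ico_eq_sum_range]
        have hterm : ∀ k ∈ range (δ - l), g l * σp.coeff (l + k - l) * y ^ (l + k)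
            = g l * y ^ l * (σp.coeff k * y ^ k) := by
          intro k hk
          have h1 : l + k - l = k := by omega
          rw [h1, pow_add]
          ring
        rw [Finset.sum_congr rfl hterm, ← Finset.mul_sum]
        congr 1
        rw [hAev]
        symm
        refine Finset.sum_subset (Finset.range_subset_range.mpr (by omega)) ?_
        intro k hk hknot
        simp only [Finset.mem_range] at hk hknot
        rw [ha_s k (by omega) (by omega), zero_mul]
      rw [Finset.sum_congr rfl hinner, ← Finset.sum_mul]
    have huy : ∀ j ∈ E, u = ((x j)⁻¹) ^ δ * ∑ l ∈ range t, g l * ((x j)⁻¹) ^ l := by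
      intro j hj
      set y := (x j)⁻¹ with hy
      have h1 : A.eval y + y ^ δ * B.eval y = 0 := by
        have h0 := hσeval j hj
        rw [hσAB, eval_add, eval_mul, eval_pow, eval_X] at h0
        exact h0
      have h2 := hGA j hj
      have h3 : A.eval y * (u - y ^ δ * ∑ l ∈ range t, g l * y ^ l) = 0 := by
        linear_combination u * h1 - y ^ δ * h2
      rcases mul_eq_zero.mp h3 with h | h
      · exact absurd h (hAeval j hj)
      · exact sub_eq_zero.mp h
    set D : K[X] := C u * X ^ (δ + t - 1)
        - ∑ l ∈ range t, C (g l) * X ^ (t - 1 - l) with hDdef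
    have hDroot : ∀ j ∈ E, D.eval (x j) = 0 := by
      intro j hj
      have hx := hx0 j hj
      have hDev : D.eval (x j) = u * x j ^ (δ + t - 1)
          - ∑ l ∈ range t, g l * x j ^ (t - 1 - l) := by
        rw [hDdef]
        simp [Polynomial.eval_finset_sum]
      rw [hDev, huy j hj]
      have hmain : (((x j)⁻¹) ^ δ * ∑ l ∈ range t, g l * ((x j)⁻¹) ^ l) * x j ^ (δ + t - 1)
          = ∑ l ∈ range t, g l * x j ^ (t - 1 - l) := by
        rw [Finset.mul_sum, Finset.sum_mul]
        refine Finset.sum_congr rfl fun l hl => ?_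
        simp only [Finset.mem_range] at hl
        have h1 : x j ^ (δ + t - 1) = x j ^ (t - 1 - l) * x j ^ (δ + l) := by
          rw [← pow_add]
          congr 1
          omega
        calc (x j)⁻¹ ^ δ * (g l * (x j)⁻¹ ^ l) * x j ^ (δ + t - 1)
            = g l * x j ^ (t - 1 - l) * (x j ^ (δ + l) * ((x j)⁻¹ ^ δ * (x j)⁻¹ ^ l)) := by
              rw [h1]; ring
          _ = g l * x j ^ (t - 1 - l) := by
              rw [← pow_add, inv_pow, mul_inv_cancel₀ (pow_ne_zero _ hx), mul_one]
      rw [hmain, sub_self]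
    have hDne2 : D ≠ 0 := by
      intro h0
      have hcD : D.coeff (δ + t - 1) = u := by
        rw [hDdef, coeff_sub, coeff_C_mul, coeff_X_pow, if_pos rfl, mul_one]
        have hz : (∑ l ∈ range t, C (g l) * X ^ (t - 1 - l)).coeff (δ + t - 1) = 0 := by
          rw [finset_sum_coeff]
          refine Finset.sum_eq_zero fun l hl => ?_
          simp only [Finset.mem_range] at hl
          rw [coeff_C_mul, coeff_X_pow, if_neg (by omega), mul_zero]
        rw [hz, sub_zero]
      rw [h0] at hcD
      simp only [Polynomial.coeff_zero] at hcD
      exact hu hcD.symm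
    have hDdeg : D.natDegree ≤ δ + t - 1 := by
      rw [hDdef]
      refine le_trans (natDegree_sub_le _ _) ?_
      simp only [max_le_iff]
      constructor
      · exact le_trans (natDegree_C_mul_le _ _) (by simp [natDegree_X_pow])
      · refine natDegree_sum_le_of_forall_le _ _ fun l hl => ?_
        refine le_trans (natDegree_C_mul_le _ _) ?_
        simp only [Finset.mem_range] at hl
        rw [natDegree_X_pow]
        omega
    have hwle : w ≤ δ + t - 1 := by
      have himg : E.image x ⊆ D.roots.toFinset := by
        intro z hz
        rw [Finset.mem_image] at hz
        obtain ⟨j, hj, rfl⟩ := hz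
        rw [Multiset.mem_toFinset, mem_roots hDne2]
        exact hDroot j hj
      have hcardimg : (E.image x).card = w := Finset.card_image_of_injOn
        (fun j hj k hk h => hxinj j (by simpa using hj) k (by simpa using hk) h)
      calc w = (E.image x).card := hcardimg.symm
        _ ≤ D.roots.toFinset.card := Finset.card_le_card himg
        _ ≤ Multiset.card D.roots := Multiset.toFinset_card_le _
        _ ≤ D.natDegree := card_roots' D
        _ ≤ δ + t - 1 := hDdeg
    have hσ0 : σp.coeff 0 = 1 := by
      rw [Polynomial.coeff_zero_eq_eval_zero, hσdef, eval_prod]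
      simp
    have hfin := hPm (δ + t - 1) (by omega)
    rw [hPhi (δ + t - 1) (by omega)] at hfin
    rw [if_pos le_rfl] at hfin
    have hidx0 : δ + t - 1 - (δ + t - 1) = 0 := by omega
    rw [hidx0, hσ0, mul_one] at hfin
    have hsum0 : ∑ l ∈ range t, (if 2 * δ + t - 1 + l ≤ δ + t - 1 then
        g l * σp.coeff (δ + t - 1 - (2 * δ + t - 1 + l)) else 0) = 0 :=
      Finset.sum_eq_zero fun l hl => if_neg (by omega)
    rw [hsum0, add_zero] at hfin
    exact hu hfin.symm

/-- Theorem 9 (the `s = 1` case of the main bound): pattern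
`(0)^{δ+t-1}(Δ)^1(0)^{δ-1}(Δ)^t(0)^{δ-t}` gives minimum distance at least `2δ`. -/
theorem s_eq_one_bound
    (δ t : ℕ) (hδ : 2 ≤ δ) (ht1 : 1 ≤ t) (ht2 : t ≤ δ - 1)
    {K : Type*} [Field K] [DecidableEq K] (n : ℕ)
    (hn : 3 * δ + t - 1 ≤ n)
    (ξ : K) (hξ : IsPrimitiveRoot ξ n) (i₀ : ℤ)
    (c : Fin n → K) (hc : c ≠ 0)
    (hzero : ∀ e ∈ (Finset.Icc 0 (δ + t - 2) ∪
        Finset.Icc (δ + t) (2 * δ + t - 2) ∪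
        Finset.Icc (2 * δ + 2 * t - 1) (3 * δ + t - 2)),
      ∑ l : Fin n, c l * ξ ^ ((i₀ + (e : ℤ)) * (l : ℕ)) = 0) :
    2 * δ ≤ hammingNorm c := by
  by_contra hw
  push_neg at hw
  have hn0 : n ≠ 0 := by omega
  have hξ0 : ξ ≠ 0 := hξ.ne_zero hn0
  set E : Finset (Fin n) := Finset.univ.filter (fun j => c j ≠ 0) with hE
  have hcardE : E.card = hammingNorm c := rfl
  refine master δ t hδ ht1 ht2 E (fun j => ξ ^ (j : ℕ))
      (fun j => c j * ξ ^ (i₀ * (j : ℕ))) ?_ ?_ ?_ ?_ ?_ ?_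
  · intro j _; exact pow_ne_zero _ hξ0
  · intro j _ k _ h
    exact Fin.ext (hξ.pow_inj j.isLt k.isLt h)
  · intro j hj
    have hcj : c j ≠ 0 := by simpa [hE] using hj
    exact mul_ne_zero hcj (zpow_ne_zero _ hξ0)
  · obtain ⟨j, hj⟩ := Function.ne_iff.mp hc
    exact ⟨j, by simpa [hE] using hj⟩
  · rw [hcardE]; omega
  · intro e he
    have hmem : e ∈ (Finset.Icc 0 (δ + t - 2) ∪
        Finset.Icc (δ + t) (2 * δ + t - 2) ∪
        Finset.Icc (2 * δ + 2 * t - 1) (3 * δ + t - 2)) := by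
      simp only [Finset.mem_union, Finset.mem_Icc]
      omega
    have h0 := hzero e hmem
    rw [← h0]
    have hpt : ∀ l : Fin n, c l * ξ ^ ((i₀ + (e : ℤ)) * (l : ℕ))
        = c l * ξ ^ (i₀ * (l : ℕ)) * (ξ ^ (l : ℕ)) ^ e := by
      intro l
      have hcast : (e : ℤ) * (l : ℕ) = (((l : ℕ) * e : ℕ) : ℤ) := by push_cast; ring
      rw [add_mul, zpow_add₀ hξ0, hcast, zpow_natCast, pow_mul, mul_assoc]
    rw [Finset.sum_congr rfl fun l _ => hpt l]
    refine Finset.sum_subset (Finset.subset_univ E) ?_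
    intro l _ hl
    have : c l = 0 := by simpa [hE] using hl
    simp [this]
end

section
/- Let δ ≥ 2, 1 ≤ t ≤ δ−1 and m ≥ 0 be integers. Let K be a field, n an integer with n ≥ 3δ + t + m(δ+1) − 1, ξ ∈ K a primitive n-th root of unity, and i₀ an integer. Let c : Fin n → K be nonzero and suppose that ∑_{l=0}^{n−1} c_l ξ^{(i₀+e)·l} = 0 for every e in Z := {0,…,δ+t−2} ∪ ⋃_{h=0}^{m} {δ+t+h(δ+1), …, δ+t+h(δ+1)+δ−2} ∪ {2δ+2t+m(δ+1)−1, …, 3δ+t+m(δ+1)−2}. Then the Hamming weight of c is at least 2δ. -/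
open Polynomial PowerSeries in
theorem aux_geom {K : Type*} [Field K] (x : K) :
    (PowerSeries.mk fun e => x^e) * (1 - PowerSeries.C (R := K) x * PowerSeries.X) = 1 := by
  ext n
  rw [mul_sub, mul_one, map_sub]
  rcases n with _ | k
  · simp
  · rw [show PowerSeries.C (R := K) x * PowerSeries.X = PowerSeries.X * PowerSeries.C (R := K) x by ring,
      ← mul_assoc, PowerSeries.coeff_mul_C, ← pow_one (PowerSeries.X (R := K)),
      PowerSeries.coeff_mul_X_pow']
    simp [pow_succ]

theorem aux_coeff_sumC {K : Type*} [Semiring K] (f : ℕ → K) (N j : ℕ) :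
    (∑ i ∈ Finset.range N, Polynomial.C (f i) * Polynomial.X ^ i).coeff j
      = if j < N then f j else 0 := by
  rw [Polynomial.finset_sum_coeff]
  have h1 : ∀ i ∈ Finset.range N, (Polynomial.C (f i) * Polynomial.X ^ i).coeff j
      = if i = j then f i else 0 := by
    intro i _
    rw [Polynomial.coeff_C_mul, Polynomial.coeff_X_pow]
    by_cases h : i = j
    · simp [h]
    · simp [h, Ne.symm h]
  rw [Finset.sum_congr rfl h1, Finset.sum_ite_eq' (Finset.range N) j f]
  simp [Finset.mem_range]

open Polynomial in
theorem aux_vdm {K : Type*} [Field K] {ι : Type*} [DecidableEq ι] (S : Finset ι)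
    (hS : S.Nonempty) (x d : ι → K) (hinj : Set.InjOn x S)
    (hd : ∀ l ∈ S, d l ≠ 0)
    (h0 : ∀ e, e < S.card → ∑ l ∈ S, d l * x l ^ e = 0) : False := by
  obtain ⟨l₀, hl₀⟩ := hS
  set p : K[X] := ∏ j ∈ S.erase l₀, (Polynomial.X - Polynomial.C (x j)) with hp
  have hpdeg : p.natDegree < S.card := by
    rw [hp, Polynomial.natDegree_prod _ _ (fun j _ => Polynomial.X_sub_C_ne_zero (x j))]
    simp only [Polynomial.natDegree_X_sub_C, Finset.sum_const, smul_eq_mul, mul_one]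
    have := Finset.card_erase_lt_of_mem hl₀
    omega
  have key : ∑ l ∈ S, d l * p.eval (x l) = 0 := by
    have h2 : ∀ l ∈ S, d l * p.eval (x l)
        = ∑ e ∈ Finset.range S.card, p.coeff e * (d l * x l ^ e) := by
      intro l _
      rw [Polynomial.eval_eq_sum_range' hpdeg, Finset.mul_sum]
      exact Finset.sum_congr rfl fun e _ => by ring
    rw [Finset.sum_congr rfl h2, Finset.sum_comm]
    refine Finset.sum_eq_zero fun e he => ?_
    rw [← Finset.mul_sum, h0 e (Finset.mem_range.mp he), mul_zero]
  have key2 : ∑ l ∈ S, d l * p.eval (x l) = d l₀ * p.eval (x l₀) := by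
    rw [← Finset.add_sum_erase S _ hl₀]
    rw [Finset.sum_eq_zero fun l hl => ?_, add_zero]
    have h3 : p.eval (x l) = 0 := by
      rw [hp, Polynomial.eval_prod]
      exact Finset.prod_eq_zero hl (by simp)
    rw [h3, mul_zero]
  have hne : d l₀ * p.eval (x l₀) ≠ 0 := by
    refine mul_ne_zero (hd l₀ hl₀) ?_
    rw [hp, Polynomial.eval_prod]
    refine Finset.prod_ne_zero_iff.mpr fun j hj => ?_
    simp only [Polynomial.eval_sub, Polynomial.eval_X, Polynomial.eval_C, sub_ne_zero]
    exact fun h => (Finset.ne_of_mem_erase hj).symm (hinj hl₀ (Finset.mem_of_mem_erase hj) h)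
  rw [key] at key2
  exact hne key2.symm

open Polynomial in
theorem aux_core {K : Type*} [Field K] {ι : Type*} [DecidableEq ι] (S : Finset ι)
    (hS : S.Nonempty) (x d : ι → K) (hxne : ∀ l ∈ S, x l ≠ 0)
    (hinj : Set.InjOn x S) (hd : ∀ l ∈ S, d l ≠ 0)
    (δ t m : ℕ) (hδ : 2 ≤ δ) (ht1 : 1 ≤ t) (ht2 : t + 1 ≤ δ)
    (u : ℕ → K) (hu : ∀ e, u e = ∑ l ∈ S, d l * x l ^ e)
    (hu1 : ∀ e, e + 2 ≤ δ + t → u e = 0)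
    (hu2 : ∀ h, h ≤ m → ∀ e, δ + t + h*(δ+1) ≤ e → e + 2 ≤ δ + t + h*(δ+1) + δ → u e = 0)
    (hu3 : ∀ e, 2*δ + 2*t + m*(δ+1) ≤ e + 1 → e + 2 ≤ 3*δ + t + m*(δ+1) → u e = 0) :
    2 * δ ≤ S.card := by
  by_contra hcon
  set w := S.card with hwdef
  have hw : w ≤ 2*δ - 1 := by omega
  have hw1 : 1 ≤ w := Finset.card_pos.mpr hS
  have hvdm : ¬ (∀ e, e < w → u e = 0) := by
    intro h
    exact aux_vdm S hS x d hinj hd (fun e he => by rw [← hu e]; exact h e he)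
  have hwlb : δ + t ≤ w := by
    by_contra hlt
    exact hvdm fun e he => hu1 e (by omega)
  set D : K[X] := ∏ l ∈ S, (1 - Polynomial.C (x l) * Polynomial.X) with hDdef
  set g : K[X] := ∑ l ∈ S, Polynomial.C (d l) * ∏ j ∈ S.erase l,
      (1 - Polynomial.C (x j) * Polynomial.X) with hgdef
  have hlin : ∀ a : K, a ≠ 0 → (1 - Polynomial.C a * Polynomial.X : K[X]) = Polynomial.C (-a) * Polynomial.X + Polynomial.C 1 := by
    intro a _; simp [map_neg]; ring
  have hfacne : ∀ l ∈ S, (1 - Polynomial.C (x l) * Polynomial.X) ≠ 0 := by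
    intro l _ h0
    have := congrArg (Polynomial.coeff · 0) h0
    simp at this
  have hfacdeg : ∀ l ∈ S, (1 - Polynomial.C (x l) * Polynomial.X).natDegree = 1 := by
    intro l hl
    rw [hlin (x l) (hxne l hl)]
    exact Polynomial.natDegree_linear (neg_ne_zero.mpr (hxne l hl))
  have hDdeg : D.natDegree = w := by
    rw [hDdef, Polynomial.natDegree_prod _ _ hfacne, Finset.sum_congr rfl hfacdeg]
    simp [hwdef]
  have hDne : D ≠ 0 := by
    rw [hDdef]
    exact Finset.prod_ne_zero_iff.mpr hfacne
  have hD0 : D.coeff 0 = 1 := by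
    rw [hDdef, Polynomial.coeff_zero_eq_eval_zero, Polynomial.eval_prod]
    simp
  have hDtop : D.coeff w ≠ 0 := by
    have := Polynomial.leadingCoeff_ne_zero.mpr hDne
    rwa [Polynomial.leadingCoeff, hDdeg] at this
  have hgdeg : g.natDegree < w := by
    have h1 : ∀ l ∈ S, (Polynomial.C (d l) * ∏ j ∈ S.erase l,
        (1 - Polynomial.C (x j) * Polynomial.X)).natDegree ≤ w - 1 := by
      intro l hl
      refine (Polynomial.natDegree_C_mul_le _ _).trans ?_
      refine (Polynomial.natDegree_prod_le _ _).trans ?_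
      have hs1 : ∑ j ∈ S.erase l, (1 - Polynomial.C (x j) * Polynomial.X).natDegree
          = (S.erase l).card := by
        rw [Finset.sum_congr rfl (fun j hj => hfacdeg j (Finset.mem_of_mem_erase hj))]
        simp
      rw [hs1, Finset.card_erase_of_mem hl]
    have h2 := Polynomial.natDegree_sum_le_of_forall_le _ _ h1
    rw [← hgdef] at h2
    omega
  have hGD : ((g : K[X]) : PowerSeries K) = (PowerSeries.mk u) * ((D : K[X]) : PowerSeries K) := by
    have hcoe : ∀ (q : K[X]), (q : PowerSeries K) = Polynomial.coeToPowerSeries.ringHom q :=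
      fun q => rfl
    have hfac : ∀ (a : K), ((1 - Polynomial.C a * Polynomial.X : K[X]) : PowerSeries K)
        = 1 - PowerSeries.C (R := K) a * PowerSeries.X := by
      intro a
      rw [hcoe, map_sub, map_one, map_mul]
      simp [Polynomial.coe_C, Polynomial.coe_X, Polynomial.coeToPowerSeries.ringHom_apply]
    have hmku : PowerSeries.mk u = ∑ l ∈ S, PowerSeries.C (R := K) (d l) * PowerSeries.mk (fun e => x l ^ e) := by
      ext e
      rw [PowerSeries.coeff_mk, hu e, map_sum]
      exact Finset.sum_congr rfl fun l _ => by
        rw [PowerSeries.coeff_C_mul, PowerSeries.coeff_mk]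
    rw [hgdef, hcoe, map_sum, hmku, Finset.sum_mul]
    refine Finset.sum_congr rfl fun l hl => ?_
    rw [map_mul, map_prod]
    have hDsplit : ((D : K[X]) : PowerSeries K)
        = (1 - PowerSeries.C (R := K) (x l) * PowerSeries.X) * ∏ j ∈ S.erase l, (1 - PowerSeries.C (R := K) (x j) * PowerSeries.X) := by
      rw [hDdef, hcoe, map_prod, ← Finset.mul_prod_erase _ _ hl]
      rw [show Polynomial.coeToPowerSeries.ringHom (1 - Polynomial.C (x l) * Polynomial.X) = ((1 - Polynomial.C (x l) * Polynomial.X : K[X]) : PowerSeries K) from rfl, hfac]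
      congr 1
      exact Finset.prod_congr rfl fun j _ => hfac (x j)
    rw [hDsplit, show Polynomial.coeToPowerSeries.ringHom (Polynomial.C (d l)) = ((Polynomial.C (d l) : K[X]) : PowerSeries K) from rfl, Polynomial.coe_C]
    rw [show PowerSeries.C (R := K) (d l) * PowerSeries.mk (fun e => x l ^ e) *
        ((1 - PowerSeries.C (R := K) (x l) * PowerSeries.X) * ∏ j ∈ S.erase l, (1 - PowerSeries.C (R := K) (x j) * PowerSeries.X))
        = PowerSeries.C (R := K) (d l) * ((PowerSeries.mk (fun e => x l ^ e) * (1 - PowerSeries.C (R := K) (x l) * PowerSeries.X)) * ∏ j ∈ S.erase l, (1 - PowerSeries.C (R := K) (x j) * PowerSeries.X)) by ring,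
      aux_geom, one_mul]
    congr 1
    exact Finset.prod_congr rfl fun j _ => hfac (x j)
  have hgj : ∀ j, g.coeff j = ∑ p ∈ Finset.HasAntidiagonal.antidiagonal j, u p.1 * D.coeff p.2 := by
    intro j
    have h1 := congrArg (PowerSeries.coeff (R := K) j) hGD
    rw [Polynomial.coeff_coe, PowerSeries.coeff_mul] at h1
    rw [h1]
    exact Finset.sum_congr rfl fun p _ => by rw [PowerSeries.coeff_mk, Polynomial.coeff_coe]
  set s : K := u (δ + t - 1) with hsdef
  have hs : s ≠ 0 := by
    intro hs0
    apply hvdm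
    intro e he
    by_cases h1 : e + 2 ≤ δ + t
    · exact hu1 e h1
    · by_cases h2 : e = δ + t - 1
      · rw [h2, ← hsdef]; exact hs0
      · exact hu2 0 (by omega) e (by omega) (by omega)
  have hglow : ∀ j, j + 2 ≤ δ + t → g.coeff j = 0 := by
    intro j hj
    rw [hgj]
    refine Finset.sum_eq_zero fun p hp => ?_
    rw [Finset.HasAntidiagonal.mem_antidiagonal] at hp
    rw [hu1 p.1 (by omega), zero_mul]
  have hgmid : ∀ i, i + 1 ≤ δ → g.coeff (δ + t - 1 + i) = s * D.coeff i := by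
    intro i hi
    rw [hgj, Finset.sum_eq_single ((δ + t - 1 : ℕ), i)]
    · intro b hb hbne
      rw [Finset.HasAntidiagonal.mem_antidiagonal] at hb
      have hb1 : b.1 ≠ δ + t - 1 := by
        intro h
        exact hbne (Prod.ext h (by omega))
      by_cases hc : b.1 + 2 ≤ δ + t
      · rw [hu1 _ hc, zero_mul]
      · rw [hu2 0 (by omega) b.1 (by omega) (by omega), zero_mul]
    · intro hnot
      exfalso
      exact hnot (Finset.HasAntidiagonal.mem_antidiagonal.mpr rfl)
  have hDzero : ∀ i, w + 1 ≤ δ + t + i → i + 1 ≤ δ → D.coeff i = 0 := by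
    intro i h1 h2
    have h3 := hgmid i h2
    rw [Polynomial.coeff_eq_zero_of_natDegree_lt (by omega : g.natDegree < δ + t - 1 + i)] at h3
    exact ((mul_eq_zero.mp h3.symm).resolve_left hs)
  set T : K[X] := ∑ i ∈ Finset.range δ, Polynomial.C (D.coeff i) * Polynomial.X ^ i with hTdef
  set R : K[X] := ∑ i ∈ Finset.range δ, Polynomial.C (D.coeff (δ + i)) * Polynomial.X ^ i with hRdef
  have hTc : ∀ j, T.coeff j = if j < δ then D.coeff j else 0 := fun j => aux_coeff_sumC _ δ j
  have hRc : ∀ j, R.coeff j = if j < δ then D.coeff (δ + j) else 0 := fun j => aux_coeff_sumC _ δ j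
  have hT0 : T.coeff 0 = 1 := by rw [hTc, if_pos (by omega), hD0]
  have hTne : T ≠ 0 := fun h => by simp [h] at hT0
  have hTdeg : T.natDegree + δ + t ≤ w := by
    have h1 : T.natDegree ≤ w - δ - t := by
      rw [Polynomial.natDegree_le_iff_coeff_eq_zero]
      intro N hN
      rw [hTc]
      by_cases h2 : N < δ
      · rw [if_pos h2]
        exact hDzero N (by omega) (by omega)
      · rw [if_neg h2]
    omega
  have hRne : R ≠ 0 := by
    intro h0
    apply hDtop
    have h1 := hRc (w - δ)
    rw [h0, Polynomial.coeff_zero, if_pos (by omega), show δ + (w - δ) = w by omega] at h1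
    exact h1.symm
  have hRdeg : R.natDegree + 1 ≤ δ := by
    have h1 : R.natDegree ≤ δ - 1 := by
      rw [Polynomial.natDegree_le_iff_coeff_eq_zero]
      intro N hN
      rw [hRc, if_neg (by omega)]
    omega
  have hDTR : D = T + R * Polynomial.X ^ δ := by
    refine Polynomial.ext fun j => ?_
    rw [Polynomial.coeff_add, hTc, Polynomial.coeff_mul_X_pow']
    by_cases h1 : j < δ
    · rw [if_pos h1, if_neg (by omega), add_zero]
    · rw [if_neg h1, if_pos (by omega), hRc]
      by_cases h2 : j - δ < δ
      · rw [if_pos h2, show δ + (j - δ) = j by omega, zero_add]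
      · rw [if_neg h2, Polynomial.coeff_eq_zero_of_natDegree_lt (by omega : D.natDegree < j), add_zero]
  set V : PowerSeries K := PowerSeries.mk (fun j => s⁻¹ * u (j + (δ + t - 1))) with hVdef
  have hVc : ∀ j, PowerSeries.coeff (R := K) j V = s⁻¹ * u (j + (δ + t - 1)) := fun j => PowerSeries.coeff_mk _ _
  have hgT : ((g : K[X]) : PowerSeries K)
      = (PowerSeries.C (R := K) s * ((T : K[X]) : PowerSeries K)) * PowerSeries.X ^ (δ + t - 1) := by
    ext j
    rw [Polynomial.coeff_coe, PowerSeries.coeff_mul_X_pow']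
    by_cases h1 : j + 2 ≤ δ + t
    · rw [if_neg (by omega), hglow j h1]
    · rw [if_pos (by omega), PowerSeries.coeff_C_mul, Polynomial.coeff_coe, hTc]
      by_cases h2 : j ≤ 2*δ + t - 2
      · rw [if_pos (by omega), show j = δ + t - 1 + (j - (δ + t - 1)) by omega]
        rw [hgmid (j - (δ + t - 1)) (by omega)]
        rw [show δ + t - 1 + (j - (δ + t - 1)) - (δ + t - 1) = j - (δ + t - 1) by omega]
      · rw [if_neg (by omega), mul_zero]
        exact Polynomial.coeff_eq_zero_of_natDegree_lt (by omega)
  have hGV : (PowerSeries.mk u) = (PowerSeries.C (R := K) s * V) * PowerSeries.X ^ (δ + t - 1) := by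
    ext j
    rw [PowerSeries.coeff_mk, PowerSeries.coeff_mul_X_pow']
    by_cases h1 : δ + t - 1 ≤ j
    · rw [if_pos h1, PowerSeries.coeff_C_mul, hVc, show j - (δ + t - 1) + (δ + t - 1) = j by omega,
        ← mul_assoc, mul_inv_cancel₀ hs, one_mul]
    · rw [if_neg h1, hu1 j (by omega)]
  have hVD : V * ((D : K[X]) : PowerSeries K) = ((T : K[X]) : PowerSeries K) := by
    have h1 : (PowerSeries.C (R := K) s * PowerSeries.X ^ (δ + t - 1)) * ((T : K[X]) : PowerSeries K)
        = (PowerSeries.C (R := K) s * PowerSeries.X ^ (δ + t - 1)) * (V * ((D : K[X]) : PowerSeries K)) := by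
      calc (PowerSeries.C (R := K) s * PowerSeries.X ^ (δ + t - 1)) * ((T : K[X]) : PowerSeries K)
          = (PowerSeries.C (R := K) s * ((T : K[X]) : PowerSeries K)) * PowerSeries.X ^ (δ + t - 1) := by ring
        _ = ((g : K[X]) : PowerSeries K) := hgT.symm
        _ = (PowerSeries.mk u) * ((D : K[X]) : PowerSeries K) := hGD
        _ = ((PowerSeries.C (R := K) s * V) * PowerSeries.X ^ (δ + t - 1)) * ((D : K[X]) : PowerSeries K) := by rw [← hGV]
        _ = (PowerSeries.C (R := K) s * PowerSeries.X ^ (δ + t - 1)) * (V * ((D : K[X]) : PowerSeries K)) := by ring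
    have hCXne : (PowerSeries.C (R := K) s * PowerSeries.X ^ (δ + t - 1) : PowerSeries K) ≠ 0 := by
      refine mul_ne_zero ?_ (pow_ne_zero _ PowerSeries.X_ne_zero)
      intro h0
      apply hs
      have := congrArg (PowerSeries.coeff (R := K) 0) h0
      simpa using this
    exact (mul_left_cancel₀ hCXne h1).symm
  set Wc : ℕ → K := fun i => -(s⁻¹ * u (i + (2*δ + t - 1))) with hWcdef
  set W : PowerSeries K := PowerSeries.mk Wc with hWdef
  have hVW : V = 1 - W * PowerSeries.X ^ δ := by
    ext j
    rw [hVc, map_sub, PowerSeries.coeff_one, PowerSeries.coeff_mul_X_pow']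
    by_cases h1 : j = 0
    · rw [if_pos h1, if_neg (by omega), h1, sub_zero, show (0:ℕ) + (δ + t - 1) = δ + t - 1 by omega,
        ← hsdef, inv_mul_cancel₀ hs]
    · rw [if_neg h1]
      by_cases h2 : δ ≤ j
      · rw [if_pos h2, hWdef, PowerSeries.coeff_mk, hWcdef]
        simp only
        rw [show j - δ + (2*δ + t - 1) = j + (δ + t - 1) by omega]
        ring
      · rw [if_neg h2, sub_zero, hu2 0 (by omega) (j + (δ + t - 1)) (by omega) (by omega), mul_zero]
  have hWD : W * ((D : K[X]) : PowerSeries K) = ((R : K[X]) : PowerSeries K) := by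
    have hDcoe : ((D : K[X]) : PowerSeries K)
        = ((T : K[X]) : PowerSeries K) + ((R : K[X]) : PowerSeries K) * PowerSeries.X ^ δ := by
      conv_lhs => rw [hDTR]
      rw [Polynomial.coe_add, Polynomial.coe_mul, Polynomial.coe_pow, Polynomial.coe_X]
    have h2 := hVD
    rw [hVW] at h2
    have h1 : (W * ((D : K[X]) : PowerSeries K)) * PowerSeries.X ^ δ
        = ((R : K[X]) : PowerSeries K) * PowerSeries.X ^ δ := by
      calc (W * ((D : K[X]) : PowerSeries K)) * PowerSeries.X ^ δ
          = ((D : K[X]) : PowerSeries K) - (1 - W * PowerSeries.X ^ δ) * ((D : K[X]) : PowerSeries K) := by ring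
        _ = ((D : K[X]) : PowerSeries K) - ((T : K[X]) : PowerSeries K) := by rw [h2]
        _ = ((R : K[X]) : PowerSeries K) * PowerSeries.X ^ δ := by rw [hDcoe]; ring
    exact mul_right_cancel₀ (pow_ne_zero _ PowerSeries.X_ne_zero) h1
  set κ : ℕ := if m = 0 then t else 2 with hκdef
  have hκ1 : 1 ≤ κ := by rw [hκdef]; split <;> omega
  have hκδ : T.natDegree + κ ≤ δ := by rw [hκdef]; split <;> omega
  have hWblocks : ∀ i, κ ≤ i → i + 1 ≤ δ → Wc i = 0 := by
    intro i hκi hiδ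
    rw [hκdef] at hκi
    rw [hWcdef]
    simp only
    rcases Nat.eq_zero_or_pos m with hm0 | hm1
    · subst hm0
      rw [if_pos rfl] at hκi
      rw [hu3 (i + (2*δ + t - 1)) (by omega) (by omega)]
      simp
    · rw [if_neg (by omega)] at hκi
      rw [hu2 1 (by omega) (i + (2*δ + t - 1)) (by omega) (by omega)]
      simp
  set P : K[X] := ∑ i ∈ Finset.range κ, Polynomial.C (Wc i) * Polynomial.X ^ i with hPdef
  have hPc : ∀ j, P.coeff j = if j < κ then Wc j else 0 := fun j => aux_coeff_sumC _ κ j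
  have hPdeg : P.natDegree + 1 ≤ κ := by
    have h1 : P.natDegree ≤ κ - 1 := by
      rw [Polynomial.natDegree_le_iff_coeff_eq_zero]
      intro N hN
      rw [hPc, if_neg (by omega)]
    omega
  have hRTP : R = P * T := by
    refine Polynomial.ext fun j => ?_
    by_cases hj : j < δ
    · have h1 := congrArg (PowerSeries.coeff (R := K) j) hWD
      rw [PowerSeries.coeff_mul, Polynomial.coeff_coe] at h1
      rw [← h1, Polynomial.coeff_mul]
      refine Finset.sum_congr rfl fun p hp => ?_
      rw [Finset.HasAntidiagonal.mem_antidiagonal] at hp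
      rw [hWdef, PowerSeries.coeff_mk, Polynomial.coeff_coe, hTc p.2, if_pos (by omega : p.2 < δ), hPc p.1]
      by_cases hp1 : p.1 < κ
      · rw [if_pos hp1]
      · rw [if_neg hp1, hWblocks p.1 (by omega) (by omega)]
    · rw [Polynomial.coeff_eq_zero_of_natDegree_lt (by omega : R.natDegree < j),
        Polynomial.coeff_eq_zero_of_natDegree_lt
          (lt_of_le_of_lt (Polynomial.natDegree_mul_le) (by omega))]
  have hPne : P ≠ 0 := by
    intro h0
    exact hRne (by rw [hRTP, h0, zero_mul])
  have hDfac : D = T * (1 + P * Polynomial.X ^ δ) := by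
    rw [hDTR, hRTP]; ring
  have hdegcount : w = T.natDegree + (P.natDegree + δ) := by
    have hPXne : (P * Polynomial.X ^ δ : K[X]) ≠ 0 :=
      mul_ne_zero hPne (pow_ne_zero δ Polynomial.X_ne_zero)
    have hQne : (1 + P * Polynomial.X ^ δ : K[X]) ≠ 0 := by
      intro h0
      exact hDne (by rw [hDfac, h0, mul_zero])
    have hd1 : (P * Polynomial.X ^ δ).natDegree = P.natDegree + δ := by
      rw [Polynomial.natDegree_mul hPne (pow_ne_zero δ Polynomial.X_ne_zero), Polynomial.natDegree_X_pow]
    have hdlt : (1 : K[X]).degree < (P * Polynomial.X ^ δ).degree := by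
      rw [Polynomial.degree_one, Polynomial.degree_eq_natDegree hPXne, hd1]
      exact_mod_cast (by omega : 0 < P.natDegree + δ)
    have hQdeg : (1 + P * Polynomial.X ^ δ).natDegree = P.natDegree + δ := by
      rw [Polynomial.natDegree_add_eq_right_of_degree_lt hdlt, hd1]
    rw [← hDdeg, hDfac, Polynomial.natDegree_mul hTne hQne, hQdeg]
  have hPt : t ≤ P.natDegree := by omega
  rcases Nat.eq_zero_or_pos m with hm0 | hm1
  · have hκt : κ = t := by rw [hκdef, if_pos hm0]
    omega
  · have hκ2 : κ = 2 := by rw [hκdef, if_neg (by omega)]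
    have ht1' : t = 1 := by omega
    have hPdeg1 : P.natDegree = 1 := by omega
    set p₀ : K := Wc 0 with hp₀def
    set p₁ : K := Wc 1 with hp₁def
    have hp₁ : p₁ ≠ 0 := by
      have h1 := Polynomial.leadingCoeff_ne_zero.mpr hPne
      rw [Polynomial.leadingCoeff, hPdeg1] at h1
      have h2 := hPc 1
      rw [if_pos (by omega)] at h2
      rw [hp₁def, ← h2]
      exact h1
    have hrec : ∀ j, s⁻¹ * u (j + δ + 1 + (δ + t - 1))
        + p₀ * (s⁻¹ * u (j + 1 + (δ + t - 1))) + p₁ * (s⁻¹ * u (j + (δ + t - 1))) = 0 := by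
      have hPX : P = Polynomial.C p₀ + Polynomial.C p₁ * Polynomial.X := by
        refine Polynomial.ext fun j => ?_
        rw [hPc]
        rcases j with _ | _ | j
        · rw [if_pos (by omega)]; simp [hp₀def]
        · rw [if_pos (by omega)]; simp [hp₁def]
        · rw [if_neg (by omega)]
          simp [Polynomial.coeff_C, Polynomial.coeff_X]
      have hPcoe : ((P : K[X]) : PowerSeries K)
          = PowerSeries.C (R := K) p₀ + PowerSeries.C (R := K) p₁ * PowerSeries.X := by
        rw [hPX, Polynomial.coe_add, Polynomial.coe_mul, Polynomial.coe_C, Polynomial.coe_C, Polynomial.coe_X]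
      have hQ : V * (1 + ((P : K[X]) : PowerSeries K) * PowerSeries.X ^ δ) = 1 := by
        have hDcoe2 : ((D : K[X]) : PowerSeries K)
            = ((T : K[X]) : PowerSeries K) * (1 + ((P : K[X]) : PowerSeries K) * PowerSeries.X ^ δ) := by
          conv_lhs => rw [hDfac]
          rw [Polynomial.coe_mul, Polynomial.coe_add, Polynomial.coe_one, Polynomial.coe_mul,
            Polynomial.coe_pow, Polynomial.coe_X]
        have h1 : ((T : K[X]) : PowerSeries K) * (V * (1 + ((P : K[X]) : PowerSeries K) * PowerSeries.X ^ δ))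
            = ((T : K[X]) : PowerSeries K) * 1 := by
          rw [mul_one]
          calc ((T : K[X]) : PowerSeries K) * (V * (1 + ((P : K[X]) : PowerSeries K) * PowerSeries.X ^ δ))
              = V * (((T : K[X]) : PowerSeries K) * (1 + ((P : K[X]) : PowerSeries K) * PowerSeries.X ^ δ)) := by ring
            _ = V * ((D : K[X]) : PowerSeries K) := by rw [← hDcoe2]
            _ = ((T : K[X]) : PowerSeries K) := hVD
        refine mul_left_cancel₀ ?_ h1
        rw [Ne, Polynomial.coe_eq_zero_iff]
        exact hTne
      have hQ2 : V + (PowerSeries.C (R := K) p₀ * V) * PowerSeries.X ^ δ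
          + (PowerSeries.C (R := K) p₁ * V) * PowerSeries.X ^ (δ+1) = 1 := by
        rw [← hQ, hPcoe]; ring
      intro j
      have h3 := congrArg (PowerSeries.coeff (R := K) (j + δ + 1)) hQ2
      rw [map_add, map_add, PowerSeries.coeff_mul_X_pow', PowerSeries.coeff_mul_X_pow',
        if_pos (by omega), if_pos (by omega), PowerSeries.coeff_C_mul, PowerSeries.coeff_C_mul,
        hVc, hVc, hVc, show j + δ + 1 - δ = j + 1 by omega, show j + δ + 1 - (δ+1) = j by omega,
        PowerSeries.coeff_one, if_neg (by omega)] at h3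
      exact h3
    have hind : ∀ h, h ≤ m + 1 → s⁻¹ * u (h * (δ+1) + (δ + t - 1)) = (-p₁)^h := by
      intro h
      induction h with
      | zero =>
        intro _
        rw [show 0 * (δ+1) + (δ + t - 1) = δ + t - 1 by omega, ← hsdef, inv_mul_cancel₀ hs, pow_zero]
      | succ h ih =>
        intro hh
        have ih' := ih (by omega)
        have hr := hrec (h * (δ+1))
        rw [show h * (δ+1) + δ + 1 = (h+1) * (δ+1) by ring] at hr
        have hz : u (h * (δ+1) + 1 + (δ + t - 1)) = 0 :=
          hu2 h (by omega) _ (by omega) (by omega)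
        rw [hz, mul_zero, mul_zero, add_zero, ih'] at hr
        have h4 := eq_neg_of_add_eq_zero_left hr
        rw [h4, pow_succ]
        ring
    have hfin : s⁻¹ * u ((m+1) * (δ+1) + (δ + t - 1)) = 0 := by
      rw [show (m+1) * (δ+1) = m * (δ+1) + δ + 1 by ring]
      rw [hu3 _ (by omega) (by omega), mul_zero]
    rw [hind (m+1) (le_refl _)] at hfin
    exact hp₁ (by simpa using pow_eq_zero_iff (by omega : m + 1 ≠ 0) |>.mp hfin)


/-- Theorem 10 (generalization of the `s = 1` case of the main bound): pattern
`(0)^{δ+t-1}(Δ)^1((0)^{δ-1}(Δ)^2)^m(0)^{δ-1}(Δ)^t(0)^{δ-t}` gives minimum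
distance at least `2δ`. -/
theorem s_eq_one_bound_generalized
    (δ t m : ℕ) (hδ : 2 ≤ δ) (ht1 : 1 ≤ t) (ht2 : t ≤ δ - 1)
    {K : Type*} [Field K] [DecidableEq K] (n : ℕ)
    (hn : 3 * δ + t + m * (δ + 1) - 1 ≤ n)
    (ξ : K) (hξ : IsPrimitiveRoot ξ n) (i₀ : ℤ)
    (c : Fin n → K) (hc : c ≠ 0)
    (hzero : ∀ e ∈ (Finset.Icc 0 (δ + t - 2) ∪
        (Finset.range (m + 1)).biUnion (fun h =>
          Finset.Icc (δ + t + h * (δ + 1)) (δ + t + h * (δ + 1) + δ - 2)) ∪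
        Finset.Icc (2 * δ + 2 * t + m * (δ + 1) - 1) (3 * δ + t + m * (δ + 1) - 2)),
      ∑ l : Fin n, c l * ξ ^ ((i₀ + (e : ℤ)) * (l : ℕ)) = 0) :
    2 * δ ≤ hammingNorm c := by
  classical
  have hn0 : n ≠ 0 := by omega
  have hξ0 : ξ ≠ 0 := hξ.ne_zero hn0
  set S : Finset (Fin n) := Finset.univ.filter (fun l => c l ≠ 0) with hSdef
  have hScard : hammingNorm c = S.card := by
    rw [hammingNorm, hSdef]
  have hSne : S.Nonempty := by
    have h1 : ∃ l, c l ≠ 0 := by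
      by_contra h
      push_neg at h
      exact hc (funext h)
    obtain ⟨l, hl⟩ := h1
    exact ⟨l, by simp [hSdef, hl]⟩
  set x : Fin n → K := fun l => ξ ^ (l : ℕ) with hxdef
  set d : Fin n → K := fun l => c l * ξ ^ (i₀ * (l : ℕ)) with hddef
  have hxne : ∀ l ∈ S, x l ≠ 0 := fun l _ => pow_ne_zero _ hξ0
  have hinj : Set.InjOn x S := by
    intro l1 _ l2 _ h
    exact Fin.ext (hξ.pow_inj l1.isLt l2.isLt h)
  have hd : ∀ l ∈ S, d l ≠ 0 := by
    intro l hl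
    have hcl : c l ≠ 0 := by simpa [hSdef] using hl
    exact mul_ne_zero hcl (zpow_ne_zero _ hξ0)
  have hsum : ∀ e : ℕ, (∑ l ∈ S, d l * x l ^ e)
      = ∑ l : Fin n, c l * ξ ^ ((i₀ + (e : ℤ)) * (l : ℕ)) := by
    intro e
    have hterm : ∀ l : Fin n, d l * x l ^ e = c l * ξ ^ ((i₀ + (e : ℤ)) * (l : ℕ)) := by
      intro l
      have hexp : ξ ^ ((i₀ + (e : ℤ)) * (l : ℕ)) = ξ ^ (i₀ * (l : ℕ)) * (ξ ^ (l : ℕ)) ^ e := by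
        rw [add_mul, zpow_add₀ hξ0]
        congr 1
        rw [show ((e : ℤ) * ((l : ℕ) : ℤ)) = (((e * (l : ℕ) : ℕ)) : ℤ) by push_cast; ring,
          zpow_natCast, show e * (l : ℕ) = (l : ℕ) * e by ring, pow_mul]
      rw [hexp, hddef, hxdef]
      ring
    rw [Finset.sum_congr rfl (fun l _ => hterm l)]
    refine Finset.sum_subset (Finset.subset_univ S) ?_
    intro l _ hl
    have hcl : c l = 0 := by
      by_contra h
      exact hl (by simp [hSdef, h])
    rw [hcl, zero_mul]
  rw [hScard]
  refine aux_core S hSne x d hxne hinj hd δ t m hδ ht1 (by omega) _ (fun e => rfl) ?_ ?_ ?_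
  · intro e he
    rw [hsum e]
    refine hzero e ?_
    exact Finset.mem_union.mpr (Or.inl (Finset.mem_union.mpr (Or.inl
      (Finset.mem_Icc.mpr ⟨by omega, by omega⟩))))
  · intro h hh e he1 he2
    rw [hsum e]
    refine hzero e ?_
    refine Finset.mem_union.mpr (Or.inl (Finset.mem_union.mpr (Or.inr ?_)))
    exact Finset.mem_biUnion.mpr ⟨h, Finset.mem_range.mpr (by omega),
      Finset.mem_Icc.mpr ⟨by omega, by omega⟩⟩
  · intro e he1 he2
    rw [hsum e]
    refine hzero e ?_
    exact Finset.mem_union.mpr (Or.inr (Finset.mem_Icc.mpr ⟨by omega, by omega⟩))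
end

section
/- Let δ ≥ 2 and n ≥ 2 be integers with (δ+1) | n, and set ρ = n/(δ+1). Let K be a field, ξ ∈ K a primitive n-th root of unity, i₀ an integer, and i₁, i₂ integers with 0 ≤ i₁ < i₂ ≤ n−1. Define L = { (i₀ + i + j(δ+1)) mod n : 1 ≤ i ≤ δ−1, 0 ≤ j ≤ ρ−1 } and D = {i₁, i₂}. Assume L ∩ D = ∅ and i₁ ≢ i₂ (mod δ+1). Then every nonzero vector c : Fin n → K satisfying ∑_{l=0}^{n−1} c_l ξ^{i·l} = 0 for all i ∈ L ∪ D has Hamming weight at least 2δ. -/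
open Finset Polynomial

/-- Helper 1: a "polynomial" with `m` coefficients vanishing at `m` distinct points is zero. -/
lemma helper_poly_zero {K : Type*} [Field K] (m : ℕ) (g : ℕ → K) (pts : Finset K)
    (hcard : m ≤ pts.card)
    (hz : ∀ y ∈ pts, ∑ t ∈ Finset.range m, g t * y ^ t = 0) :
    ∀ t < m, g t = 0 := by
  intro t ht
  set P : K[X] := ∑ t ∈ Finset.range m, Polynomial.C (g t) * Polynomial.X ^ t with hP
  have hdeg : P.natDegree < m := by
    rcases Nat.eq_zero_or_pos m with rfl | hm
    · omega
    calc P.natDegree ≤ m - 1 := by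
          apply Polynomial.natDegree_sum_le_of_forall_le
          intro i hi
          refine le_trans (Polynomial.natDegree_C_mul_le _ _) ?_
          simp only [Polynomial.natDegree_X_pow]
          exact Nat.le_sub_one_of_lt (Finset.mem_range.mp hi)
      _ < m := by omega
  have heval : ∀ y ∈ pts, P.eval y = 0 := by
    intro y hy
    rw [hP, Polynomial.eval_finset_sum]
    simpa using hz y hy
  have hP0 : P = 0 :=
    Polynomial.eq_zero_of_natDegree_lt_card_of_eval_eq_zero' P pts heval
      (lt_of_lt_of_le hdeg hcard)
  have : P.coeff t = g t := by
    rw [hP, Polynomial.finset_sum_coeff]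
    rw [Finset.sum_eq_single t]
    · simp
    · intro b _ hb
      simp only [Polynomial.coeff_C_mul, Polynomial.coeff_X_pow]
      rw [if_neg (by omega), mul_zero]
    · intro h; exact absurd (Finset.mem_range.mpr ht) h
  rw [hP0] at this
  simpa using this.symm

/-- Helper 2: Vandermonde-type vanishing with consecutive integer exponents. -/
lemma helper_vand_zero {K : Type*} [Field K] {ι : Type*} [DecidableEq ι] (S : Finset ι)
    (x : ι → K) (hx0 : ∀ t ∈ S, x t ≠ 0) (hinj : Set.InjOn x S)
    (w : ι → K) (a : ℤ)
    (h : ∀ i < S.card, ∑ t ∈ S, w t * x t ^ (a + i) = 0) :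
    ∀ t ∈ S, w t = 0 := by
  intro s hs
  have key : ∀ i < S.card, ∑ t ∈ S, (w t * x t ^ a) * x t ^ (i : ℕ) = 0 := by
    intro i hi
    have := h i hi
    rw [← this]
    apply Finset.sum_congr rfl
    intro t ht
    rw [zpow_add₀ (hx0 t ht), mul_assoc, zpow_natCast]
  set Q : K[X] := ∏ t ∈ S.erase s, (Polynomial.X - Polynomial.C (x t)) with hQ
  have hQdeg : Q.natDegree < S.card := by
    rw [hQ, Polynomial.natDegree_prod _ _ (fun t _ => Polynomial.X_sub_C_ne_zero (x t))]
    simp only [Polynomial.natDegree_X_sub_C, Finset.sum_const, smul_eq_mul, mul_one]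
    exact Finset.card_erase_lt_of_mem hs
  -- ∑_{t∈S} w' t * Q.eval (x t) = 0
  have hzero : ∑ t ∈ S, (w t * x t ^ a) * Q.eval (x t) = 0 := by
    have hev : ∀ t ∈ S, Q.eval (x t) = ∑ i ∈ Finset.range S.card, Q.coeff i * x t ^ i := by
      intro t _
      exact Polynomial.eval_eq_sum_range' (lt_of_lt_of_le hQdeg (le_refl _)) (x t)
    have hswap : ∑ t ∈ S, w t * x t ^ a * ∑ i ∈ Finset.range S.card, Q.coeff i * x t ^ i
        = ∑ i ∈ Finset.range S.card, Q.coeff i * ∑ t ∈ S, (w t * x t ^ a) * x t ^ i := by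
      simp only [Finset.mul_sum]
      rw [Finset.sum_comm]
      apply Finset.sum_congr rfl; intro i _
      apply Finset.sum_congr rfl; intro t _; ring
    rw [Finset.sum_congr rfl (fun t ht => by rw [hev t ht]), hswap]
    apply Finset.sum_eq_zero
    intro i hi
    rw [key i (Finset.mem_range.mp hi), mul_zero]
  -- but the sum localizes to s
  have hloc : ∑ t ∈ S, (w t * x t ^ a) * Q.eval (x t) = (w s * x s ^ a) * Q.eval (x s) := by
    rw [← Finset.add_sum_erase _ _ hs]
    rw [Finset.sum_eq_zero, add_zero]
    intro t ht
    have : Q.eval (x t) = 0 := by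
      rw [hQ, Polynomial.eval_prod]
      apply Finset.prod_eq_zero ht
      simp
    rw [this, mul_zero]
  have hQs : Q.eval (x s) ≠ 0 := by
    rw [hQ, Polynomial.eval_prod]
    apply Finset.prod_ne_zero_iff.mpr
    intro t ht
    simp only [Polynomial.eval_sub, Polynomial.eval_X, Polynomial.eval_C, sub_ne_zero]
    exact fun he => (Finset.mem_erase.mp ht).1 (hinj hs (Finset.mem_of_mem_erase ht) he).symm
  have := hloc ▸ hzero
  have hws : w s * x s ^ a = 0 := by
    rcases mul_eq_zero.mp this with h' | h'
    · exact h'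
    · exact absurd h' hQs
  rcases mul_eq_zero.mp hws with h' | h'
  · exact h'
  · exact absurd h' (zpow_ne_zero a (hx0 s hs))

/-- Corollary 2: a cyclic code of length `n` with defining set `L ∪ D`, where `L`
is the local-parity part and `D = {i₁, i₂}` with `L ∩ D = ∅` and
`i₁ ≢ i₂ (mod δ+1)`, has minimum distance at least `2δ`. -/
theorem corollary_two_distance_bound
    (δ n : ℕ) (hδ : 2 ≤ δ) (hn : 2 ≤ n) (hdvd : (δ + 1) ∣ n)
    (ρ : ℕ) (hρ : ρ = n / (δ + 1))
    {K : Type*} [Field K] [DecidableEq K]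
    (ξ : K) (hξ : IsPrimitiveRoot ξ n)
    (i₀ : ℤ) (i₁ i₂ : ℕ) (h12 : i₁ < i₂) (h2n : i₂ ≤ n - 1)
    (L : Finset ℤ)
    (hL : L = ((Finset.Icc 1 (δ - 1)) ×ˢ (Finset.range ρ)).image
      (fun p => (i₀ + (p.1 : ℤ) + (p.2 : ℤ) * ((δ : ℤ) + 1)) % (n : ℤ)))
    (hLD : L ∩ ({(i₁ : ℤ), (i₂ : ℤ)} : Finset ℤ) = ∅)
    (hmod : ¬ (i₁ ≡ i₂ [MOD δ + 1])) :
    ∀ c : Fin n → K, c ≠ 0 →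
      (∀ i ∈ L ∪ ({(i₁ : ℤ), (i₂ : ℤ)} : Finset ℤ),
        ∑ l : Fin n, c l * ξ ^ (i * (l : ℕ)) = 0) →
      2 * δ ≤ hammingNorm c := by
  intro c hc hsum
  set m := δ + 1 with hm
  have hnpos : 0 < n := by omega
  have hnm : n = m * ρ := by rw [hρ]; exact (Nat.mul_div_cancel' hdvd).symm
  have hρpos : 0 < ρ := Nat.pos_of_ne_zero (fun h => by rw [h, Nat.mul_zero] at hnm; omega)
  have hξ0 : ξ ≠ 0 := hξ.ne_zero (by omega)
  -- congruent exponents give equal powers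
  have hcong : ∀ a b : ℤ, (n : ℤ) ∣ (a - b) → ξ ^ a = ξ ^ b := by
    intro a b hab
    have h1 : ξ ^ (a - b) = 1 := (hξ.zpow_eq_one_iff_dvd _).mpr hab
    calc ξ ^ a = ξ ^ (b + (a - b)) := by ring_nf
      _ = ξ ^ b * ξ ^ (a - b) := zpow_add₀ hξ0 _ _
      _ = ξ ^ b := by rw [h1, mul_one]
  -- position map
  have hposlt : ∀ (r : Fin ρ) (t : Fin m), (r : ℕ) + (t : ℕ) * ρ < n := by
    intro r t
    have h1 : ((t : ℕ) + 1) * ρ ≤ m * ρ := Nat.mul_le_mul_right ρ t.isLt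
    rw [Nat.succ_mul] at h1
    have := r.isLt
    omega
  set pos : Fin ρ → Fin m → Fin n := fun r t => ⟨(r : ℕ) + (t : ℕ) * ρ, hposlt r t⟩ with hposdef
  have hposval : ∀ r t, ((pos r t : Fin n) : ℕ) = (r : ℕ) + (t : ℕ) * ρ := fun _ _ => rfl
  have hposinj : Function.Injective (fun p : Fin ρ × Fin m => pos p.1 p.2) := by
    rintro ⟨r, t⟩ ⟨r', t'⟩ hp
    have h1 : (r : ℕ) + (t : ℕ) * ρ = (r' : ℕ) + (t' : ℕ) * ρ := congrArg Fin.val hp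
    have hr : (r : ℕ) = (r' : ℕ) := by
      have := congrArg (· % ρ) h1
      simpa [Nat.add_mul_mod_self_right, Nat.mod_eq_of_lt r.isLt, Nat.mod_eq_of_lt r'.isLt]
        using this
    have ht : (t : ℕ) = (t' : ℕ) := by
      have h2 : (t : ℕ) * ρ = (t' : ℕ) * ρ := by omega
      exact Nat.eq_of_mul_eq_mul_right hρpos h2
    simp [Prod.ext_iff, Fin.ext_iff, hr, ht]
  have hposbij : Function.Bijective (fun p : Fin ρ × Fin m => pos p.1 p.2) := by
    rw [Fintype.bijective_iff_injective_and_card]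
    refine ⟨hposinj, ?_⟩
    simp [Fintype.card_prod, hnm, Nat.mul_comm]
  have hreindex : ∀ f : Fin n → K,
      ∑ l : Fin n, f l = ∑ r : Fin ρ, ∑ t : Fin m, f (pos r t) := by
    intro f
    calc ∑ l : Fin n, f l = ∑ p : Fin ρ × Fin m, f (pos p.1 p.2) :=
          (Fintype.sum_bijective _ hposbij _ _ (fun p => rfl)).symm
      _ = ∑ r : Fin ρ, ∑ t : Fin m, f (pos r t) := Fintype.sum_prod_type _
  -- x r = ξ^(m*r), points for the outer (group-DFT) Vandermonde
  have hmz : ((δ:ℤ) + 1) = (m:ℤ) := by push_cast [hm]; ring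
  have hncast : ((n:ℕ):ℤ) = (m:ℤ) * (ρ:ℤ) := by exact_mod_cast congrArg (Nat.cast (R := ℤ)) hnm
  -- injectivity of power maps
  have hpowinj : ∀ (a b : ℕ), n = a * b → ∀ u v : ℕ, u < b → v < b →
      ξ ^ ((a:ℤ) * u) = ξ ^ ((a:ℤ) * v) → u = v := by
    intro a b hab u v hu hv heq
    have ha0 : 0 < a := by
      rcases Nat.eq_zero_or_pos a with h | h
      · rw [h, Nat.zero_mul] at hab; omega
      · exact h
    have h1 : ξ ^ ((a:ℤ) * u - (a:ℤ) * v) = 1 := by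
      rw [zpow_sub₀ hξ0, heq, div_self (zpow_ne_zero _ hξ0)]
    have h2 : ((a:ℤ) * (b:ℤ)) ∣ ((a:ℤ) * u - (a:ℤ) * v) := by
      have hd := (hξ.zpow_eq_one_iff_dvd _).mp h1
      have hcast : ((n:ℕ):ℤ) = (a:ℤ) * (b:ℤ) := by exact_mod_cast congrArg (Nat.cast (R := ℤ)) hab
      rwa [hcast] at hd
    have h3 : (b:ℤ) ∣ ((u:ℤ) - (v:ℤ)) := by
      rw [← mul_sub] at h2
      exact (mul_dvd_mul_iff_left (Int.natCast_ne_zero.mpr ha0.ne' : (a:ℤ) ≠ 0)).mp h2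
    have h4 : (u:ℤ) - (v:ℤ) = 0 := by
      refine Int.eq_zero_of_dvd_of_natAbs_lt_natAbs h3 ?_
      omega
    omega
  -- Step A : for each i in [1, δ-1] and each group r, the group partial sum vanishes
  have stepA : ∀ i ∈ Finset.Icc 1 (δ - 1), ∀ r : Fin ρ,
      ∑ t : Fin m, c (pos r t) * ξ ^ ((i₀ + (i:ℤ)) * ((pos r t : ℕ) : ℤ)) = 0 := by
    intro i hi r
    have key := helper_vand_zero (Finset.univ : Finset (Fin ρ))
      (fun u => ξ ^ ((m : ℤ) * ((u : Fin ρ) : ℕ)))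
      (fun u _ => zpow_ne_zero _ hξ0)
      (fun u _ v _ huv => Fin.ext (hpowinj m ρ hnm u v u.isLt v.isLt huv))
      (fun u => ∑ t : Fin m, c (pos u t) * ξ ^ ((i₀ + (i:ℤ)) * ((pos u t : ℕ) : ℤ)))
      0 ?_
    · simpa using key r (Finset.mem_univ r)
    intro j hj
    rw [Finset.card_univ, Fintype.card_fin] at hj
    have hmem : (i₀ + (i:ℤ) + (j:ℤ) * ((δ:ℤ) + 1)) % (n:ℤ) ∈ L := by
      rw [hL]
      exact Finset.mem_image.mpr ⟨(i, j), Finset.mem_product.mpr ⟨hi, Finset.mem_range.mpr hj⟩, rfl⟩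
    have hchk := hsum _ (Finset.mem_union_left _ hmem)
    rw [hreindex] at hchk
    rw [← hchk]
    apply Finset.sum_congr rfl
    intro r' _
    rw [Finset.sum_mul]
    apply Finset.sum_congr rfl
    intro t _
    rw [mul_assoc]
    congr 1
    rw [← zpow_mul, ← zpow_add₀ hξ0]
    apply hcong
    set e : ℤ := i₀ + (i:ℤ) + (j:ℤ) * ((δ:ℤ) + 1) with he
    refine ⟨(e / (n:ℤ)) * (((r':ℕ) + (t:ℕ) * ρ : ℕ) : ℤ) - (j:ℤ) * (t:ℕ), ?_⟩
    have hemod : e % (n:ℤ) = e - (n:ℤ) * (e / (n:ℤ)) := Int.emod_def e (n:ℤ)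
    rw [hemod]
    rw [hposval]
    push_cast [hnm, hm]
    ring
  -- local BCH-form equations per group
  have hEqB : ∀ r : Fin ρ, ∀ i ∈ Finset.Icc 1 (δ - 1),
      ∑ t : Fin m, c (pos r t) * (ξ ^ ((ρ:ℤ) * ((t : Fin m) : ℕ))) ^ (i₀ + (i:ℤ)) = 0 := by
    intro r i hi
    have hA := stepA i hi r
    have hfac : ∀ t : Fin m, ξ ^ ((i₀ + (i:ℤ)) * ((pos r t : ℕ) : ℤ))
        = ξ ^ ((i₀ + (i:ℤ)) * ((r:ℕ):ℤ)) * (ξ ^ ((ρ:ℤ) * (t:ℕ))) ^ (i₀ + (i:ℤ)) := by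
      intro t
      rw [← zpow_mul, ← zpow_add₀ hξ0]
      congr 1
      rw [hposval]
      push_cast
      ring
    have hsplit : ∑ t : Fin m, c (pos r t) * ξ ^ ((i₀ + (i:ℤ)) * ((pos r t : ℕ) : ℤ))
        = ξ ^ ((i₀ + (i:ℤ)) * ((r:ℕ):ℤ))
          * ∑ t : Fin m, c (pos r t) * (ξ ^ ((ρ:ℤ) * (t:ℕ))) ^ (i₀ + (i:ℤ)) := by
      rw [Finset.mul_sum]
      apply Finset.sum_congr rfl
      intro t _
      rw [hfac t]; ring
    rw [hsplit] at hA
    exact (mul_eq_zero.mp hA).resolve_left (zpow_ne_zero _ hξ0)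
  -- support of c within each group
  set T : Fin ρ → Finset (Fin m) := fun r => Finset.univ.filter (fun t => c (pos r t) ≠ 0) with hT
  have hnρm : n = ρ * m := by rw [hnm]; ring
  -- Claim 1: each nonempty group supports at least δ nonzero entries
  have claim1 : ∀ r : Fin ρ, (T r).Nonempty → δ ≤ (T r).card := by
    intro r hne
    by_contra hlt
    push_neg at hlt
    have hz := helper_vand_zero (T r) (fun t => ξ ^ ((ρ:ℤ) * ((t : Fin m) : ℕ)))
      (fun t _ => zpow_ne_zero _ hξ0)
      (fun u _ v _ huv => Fin.ext (hpowinj ρ m hnρm u v u.isLt v.isLt huv))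
      (fun t => c (pos r t)) (i₀ + 1) ?_
    · obtain ⟨t, ht⟩ := hne
      exact (Finset.mem_filter.mp ht).2 (hz t ht)
    intro k hk
    have hkδ : k < δ - 1 := by omega
    have hik : (k + 1) ∈ Finset.Icc 1 (δ - 1) := Finset.mem_Icc.mpr ⟨by omega, by omega⟩
    have hB := hEqB r (k+1) hik
    have hexp : (i₀ + ((k:ℤ) + 1)) = (i₀ + 1 + (k:ℤ)) := by ring
    have hfull : ∑ t ∈ T r, c (pos r t) * (ξ ^ ((ρ:ℤ) * ((t : Fin m) : ℕ))) ^ (i₀ + 1 + (k:ℤ))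
        = ∑ t : Fin m, c (pos r t) * (ξ ^ ((ρ:ℤ) * ((t : Fin m) : ℕ))) ^ (i₀ + ((k+1:ℕ):ℤ)) := by
      rw [Finset.sum_filter_of_ne]
      · apply Finset.sum_congr rfl
        intro t _
        congr 1
        push_cast
        ring_nf
      · intro t _ hne0 hc0
        exact hne0 (by rw [hc0, zero_mul])
    rw [hfull, hB]
  -- membership criterion for L
  have hLmem : ∀ i ∈ Finset.Icc 1 (δ - 1), ∀ z : ℤ, 0 ≤ z → z < (n:ℤ) →
      ((m:ℤ) ∣ (z - (i₀ + (i:ℤ)))) → z ∈ L := by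
    intro i hi z hz0 hzn hdvd'
    obtain ⟨q, hq⟩ := hdvd'
    set j : ℕ := (q % (ρ:ℤ)).toNat with hj
    have hρz : (0:ℤ) < (ρ:ℤ) := by exact_mod_cast hρpos
    have h1 : 0 ≤ q % (ρ:ℤ) := Int.emod_nonneg q (ne_of_gt hρz)
    have h2 : q % (ρ:ℤ) < (ρ:ℤ) := Int.emod_lt_of_pos q hρz
    have hjρ : j < ρ := by omega
    have hjq : (j:ℤ) = q % (ρ:ℤ) := Int.toNat_of_nonneg h1
    have hjq' : (j:ℤ) - q = -((ρ:ℤ) * (q / (ρ:ℤ))) := by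
      rw [hjq, Int.emod_def]; ring
    have hz' : z = i₀ + (i:ℤ) + (m:ℤ) * q := by linarith
    have hcongr : (n:ℤ) ∣ (i₀ + (i:ℤ) + (j:ℤ) * ((δ:ℤ) + 1)) - z := by
      refine ⟨-(q / (ρ:ℤ)), ?_⟩
      rw [hmz, hncast]
      linear_combination (m:ℤ) * hjq' - hz'
    obtain ⟨k, hk⟩ := hcongr
    have heq : i₀ + (i:ℤ) + (j:ℤ) * ((δ:ℤ) + 1) = z + (n:ℤ) * k := by linarith
    rw [hL]
    refine Finset.mem_image.mpr ⟨(i, j), Finset.mem_product.mpr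
      ⟨hi, Finset.mem_range.mpr hjρ⟩, ?_⟩
    simp only
    rw [heq, Int.add_mul_emod_self_left, Int.emod_eq_of_lt hz0 hzn]
  -- the two special frequencies are not congruent to the local ones
  have hi₂n : i₂ < n := by omega
  have hi₁n : i₁ < n := by omega
  have hnd : ∀ z : ℕ, (z:ℤ) ∈ ({(i₁:ℤ), (i₂:ℤ)} : Finset ℤ) → z < n →
      ∀ i ∈ Finset.Icc 1 (δ - 1), ¬ ((m:ℤ) ∣ ((z:ℤ) - (i₀ + (i:ℤ)))) := by
    intro z hzD hzn i hi hdvd'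
    have hzL := hLmem i hi z (Int.natCast_nonneg z) (by exact_mod_cast hzn) hdvd'
    have hmem2 : (z:ℤ) ∈ L ∩ ({(i₁:ℤ), (i₂:ℤ)} : Finset ℤ) :=
      Finset.mem_inter.mpr ⟨hzL, hzD⟩
    rw [hLD] at hmem2
    exact absurd hmem2 (Finset.notMem_empty _)
  -- congruence criterion from equal powers
  have hPinj : ∀ a b : ℤ, ξ ^ ((ρ:ℤ) * a) = ξ ^ ((ρ:ℤ) * b) → ((m:ℤ) ∣ (a - b)) := by
    intro a b heq
    have h1 : ξ ^ ((ρ:ℤ) * a - (ρ:ℤ) * b) = 1 := by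
      rw [zpow_sub₀ hξ0, heq, div_self (zpow_ne_zero _ hξ0)]
    have h2 := (hξ.zpow_eq_one_iff_dvd _).mp h1
    rw [hncast, ← mul_sub] at h2
    rw [show (m:ℤ) * (ρ:ℤ) = (ρ:ℤ) * (m:ℤ) by ring] at h2
    have hρ0 : (ρ:ℤ) ≠ 0 := by exact_mod_cast hρpos.ne'
    exact (mul_dvd_mul_iff_left hρ0).mp h2
  -- some group is nonempty
  obtain ⟨r₀, hr₀⟩ : ∃ r₀ : Fin ρ, (T r₀).Nonempty := by
    obtain ⟨l, hl⟩ := Function.ne_iff.mp hc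
    obtain ⟨p, hp⟩ := hposbij.surjective l
    exact ⟨p.1, ⟨p.2, Finset.mem_filter.mpr ⟨Finset.mem_univ _, by rw [show pos p.1 p.2 = l from hp]; simpa using hl⟩⟩⟩
  -- Claim 2: there are at least two nonempty groups
  have htwo : ∃ r₁, r₁ ≠ r₀ ∧ (T r₁).Nonempty := by
    by_contra hcon
    push_neg at hcon
    have hzero' : ∀ r' : Fin ρ, r' ≠ r₀ → ∀ t : Fin m, c (pos r' t) = 0 := by
      intro r' hr' t
      by_contra h
      exact (Finset.not_nonempty_iff_eq_empty.mpr (hcon r' hr')) ⟨t, Finset.mem_filter.mpr ⟨Finset.mem_univ _, h⟩⟩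
    set E : Finset ℤ :=
      ((Finset.Icc 1 (δ-1)).image (fun i : ℕ => i₀ + (i:ℤ))) ∪ {(i₁:ℤ), (i₂:ℤ)} with hE
    set P : ℤ → K := fun e => ξ ^ ((ρ:ℤ) * e) with hP
    have hnd₁ : ∀ i ∈ Finset.Icc 1 (δ-1), ¬ ((m:ℤ) ∣ ((i₁:ℤ) - (i₀ + (i:ℤ)))) :=
      fun i hi => hnd i₁ (Finset.mem_insert_self _ _) hi₁n i hi
    have hnd₂ : ∀ i ∈ Finset.Icc 1 (δ-1), ¬ ((m:ℤ) ∣ ((i₂:ℤ) - (i₀ + (i:ℤ)))) :=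
      fun i hi => hnd i₂ (Finset.mem_insert_of_mem (Finset.mem_singleton_self _)) hi₂n i hi
    have hnd₁₂ : ¬ ((m:ℤ) ∣ ((i₂:ℤ) - (i₁:ℤ))) := fun hdd => hmod (Nat.modEq_iff_dvd.mpr hdd)
    have hkey : ∀ a ∈ E, ∀ b ∈ E, ((m:ℤ) ∣ a - b) → a = b := by
      intro a ha b hb hd
      simp only [hE, Finset.mem_union, Finset.mem_image, Finset.mem_insert,
        Finset.mem_singleton] at ha hb
      rcases ha with ⟨i, hi, rfl⟩ | rfl | rfl <;>
        rcases hb with ⟨i', hi', rfl⟩ | rfl | rfl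
      · rw [Finset.mem_Icc] at hi hi'
        have h0 : (i₀ + (i:ℤ)) - (i₀ + (i':ℤ)) = 0 :=
          Int.eq_zero_of_dvd_of_natAbs_lt_natAbs hd (by omega)
        omega
      · exact absurd (dvd_sub_comm.mp hd) (hnd₁ i hi)
      · exact absurd (dvd_sub_comm.mp hd) (hnd₂ i hi)
      · exact absurd hd (hnd₁ i' hi')
      · rfl
      · exact absurd (dvd_sub_comm.mp hd) hnd₁₂
      · exact absurd hd (hnd₂ i' hi')
      · exact absurd hd hnd₁₂
      · rfl
    have hinjE : Set.InjOn P E := fun a ha b hb hab => hkey a ha b hb (hPinj a b hab)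
    have hdisjE : Disjoint ((Finset.Icc 1 (δ-1)).image (fun i : ℕ => i₀ + (i:ℤ)))
        ({(i₁:ℤ), (i₂:ℤ)} : Finset ℤ) := by
      rw [Finset.disjoint_left]
      intro a ha haD
      obtain ⟨i, hi, rfl⟩ := Finset.mem_image.mp ha
      rcases Finset.mem_insert.mp haD with h | h
      · exact hnd₁ i hi (by rw [← h, sub_self]; exact dvd_zero _)
      · exact hnd₂ i hi (by rw [← Finset.mem_singleton.mp h, sub_self]; exact dvd_zero _)
    have hcardE : E.card = m := by
      rw [hE, Finset.card_union_of_disjoint hdisjE,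
        Finset.card_image_of_injective _
          (fun a b hab => by have h' : i₀ + (a:ℤ) = i₀ + (b:ℤ) := hab; omega : Function.Injective (fun i : ℕ => i₀ + (i:ℤ)))]
      have hne12 : ((i₁:ℤ)) ∉ ({(i₂:ℤ)} : Finset ℤ) := by
        simp only [Finset.mem_singleton]
        intro h; exact absurd (by exact_mod_cast h : i₁ = i₂) (by omega)
      rw [Finset.card_insert_of_notMem hne12, Finset.card_singleton, Nat.card_Icc]
      omega
    have hcard : m ≤ (E.image P).card := by
      rw [Finset.card_image_of_injOn hinjE, hcardE]
    set g : ℕ → K := fun t => if h : t < m then c (pos r₀ ⟨t, h⟩) else 0 with hg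
    have hzeq : ∀ y ∈ E.image P, ∑ t ∈ Finset.range m, g t * y ^ t = 0 := by
      intro y hy
      obtain ⟨e, he, rfl⟩ := Finset.mem_image.mp hy
      have hconv : ∑ t ∈ Finset.range m, g t * (P e) ^ t
          = ∑ t : Fin m, c (pos r₀ t) * ξ ^ ((ρ:ℤ) * e * ((t:ℕ):ℤ)) := by
        rw [← Fin.sum_univ_eq_sum_range]
        apply Finset.sum_congr rfl
        intro t _
        congr 1
        · simp [hg, t.isLt]
        · rw [hP]
          simp only
          rw [← zpow_natCast (ξ ^ ((ρ:ℤ) * e)), ← zpow_mul]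
      rcases Finset.mem_union.mp he with hloc | hD
      · obtain ⟨i, hi, rfl⟩ := Finset.mem_image.mp hloc
        rw [hconv]
        have hB := hEqB r₀ i hi
        rw [← hB]
        apply Finset.sum_congr rfl
        intro t _
        congr 1
        rw [← zpow_mul]
        congr 1
        ring
      · have hchk := hsum _ (Finset.mem_union_right _ hD)
        rw [hreindex] at hchk
        have honly : ∑ r' : Fin ρ, ∑ t : Fin m, c (pos r' t) * ξ ^ (e * ((pos r' t : ℕ):ℤ))
            = ∑ t : Fin m, c (pos r₀ t) * ξ ^ (e * ((pos r₀ t : ℕ):ℤ)) := by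
          rw [Finset.sum_eq_single r₀]
          · intro r' _ hr'
            apply Finset.sum_eq_zero
            intro t _
            rw [hzero' r' hr' t, zero_mul]
          · intro h; exact absurd (Finset.mem_univ r₀) h
        rw [honly] at hchk
        have hsplit : ∑ t : Fin m, c (pos r₀ t) * ξ ^ (e * ((pos r₀ t : ℕ):ℤ))
            = ξ ^ (e * ((r₀:ℕ):ℤ))
              * ∑ t : Fin m, c (pos r₀ t) * ξ ^ ((ρ:ℤ) * e * ((t:ℕ):ℤ)) := by
          rw [Finset.mul_sum]
          apply Finset.sum_congr rfl
          intro t _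
          have hterm : ξ ^ (e * ((pos r₀ t : ℕ):ℤ))
              = ξ ^ (e * ((r₀:ℕ):ℤ)) * ξ ^ ((ρ:ℤ) * e * ((t:ℕ):ℤ)) := by
            rw [← zpow_add₀ hξ0]
            congr 1
            rw [hposval]
            push_cast
            ring
          rw [hterm]
          ring
        rw [hsplit] at hchk
        rw [hconv]
        exact (mul_eq_zero.mp hchk).resolve_left (zpow_ne_zero _ hξ0)
    have hgz := helper_poly_zero m g (E.image P) hcard hzeq
    obtain ⟨t, ht⟩ := hr₀
    have hct : c (pos r₀ t) ≠ 0 := (Finset.mem_filter.mp ht).2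
    have := hgz (t : ℕ) t.isLt
    rw [hg] at this
    simp only [t.isLt, dif_pos, Fin.eta] at this
    exact hct this
  -- final counting
  obtain ⟨r₁, hr₁ne, hr₁⟩ := htwo
  have h1 := claim1 r₀ hr₀
  have h2 := claim1 r₁ hr₁
  have hposrinj : ∀ r : Fin ρ, Function.Injective (pos r) := by
    intro r t t' h
    have := hposinj (a₁ := (r, t)) (a₂ := (r, t')) h
    exact (Prod.ext_iff.mp this).2
  set A : Fin ρ → Finset (Fin n) := fun r => (T r).image (pos r) with hA
  have hcardA : ∀ r, (A r).card = (T r).card :=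
    fun r => Finset.card_image_of_injective _ (hposrinj r)
  have hsub : A r₀ ∪ A r₁ ⊆ Finset.univ.filter (fun l => c l ≠ 0) := by
    intro x hx
    rcases Finset.mem_union.mp hx with h | h <;>
    · obtain ⟨t, ht, rfl⟩ := Finset.mem_image.mp h
      exact Finset.mem_filter.mpr ⟨Finset.mem_univ _, (Finset.mem_filter.mp ht).2⟩
  have hdisjA : Disjoint (A r₀) (A r₁) := by
    rw [Finset.disjoint_left]
    intro x hx0 hx1
    obtain ⟨t, _, rfl⟩ := Finset.mem_image.mp hx0
    obtain ⟨t', _, heq⟩ := Finset.mem_image.mp hx1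
    have := hposinj (a₁ := (r₁, t')) (a₂ := (r₀, t)) heq
    exact hr₁ne (congrArg Prod.fst this)
  have hfinal : 2 * δ ≤ (Finset.univ.filter (fun l => c l ≠ 0)).card := by
    calc 2 * δ ≤ (T r₀).card + (T r₁).card := by omega
      _ = (A r₀).card + (A r₁).card := by rw [hcardA, hcardA]
      _ = (A r₀ ∪ A r₁).card := (Finset.card_union_of_disjoint hdisjA).symm
      _ ≤ _ := Finset.card_le_card hsub
  exact hfinal
end

section
/- Let F be a finite field with q elements, δ ≥ 2 and ρ ≥ 1 integers, and n = ρ(δ+1). Let C ⊆ F^n be a linear code of dimension k ≥ 1, and let d be the minimum Hamming weight of a nonzero codeword of C. Suppose C has disjoint local repair groups with r = 2: there is a partition of {0,…,n−1} into ρ blocks each of size δ+1 such that for each block S, the punctured code C|_S = {c|_S : c ∈ C} has dimension 2 and every nonzero element of C|_S has Hamming weight at least δ. If d = 2δ+1 and d = n − k − (⌈k/2⌉ − 1)(δ−1) + 1 (i.e., C is Singleton-optimal), then n ≤ q + 1. -/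
open Finset

section AuxLRC
set_option linter.unusedSectionVars false
set_option linter.unusedVariables false

variable {F : Type*} [Field F] [DecidableEq F] {n : ℕ}

def extZ (s : Finset (Fin n)) : (↥s → F) →ₗ[F] (Fin n → F) where
  toFun u j := if h : j ∈ s then u ⟨j, h⟩ else 0
  map_add' u v := by funext j; by_cases h : j ∈ s <;> simp [h]
  map_smul' c u := by funext j; by_cases h : j ∈ s <;> simp [h]

lemma extZ_apply_mem (s : Finset (Fin n)) (u : ↥s → F) {j : Fin n} (h : j ∈ s) :
    extZ s u j = u ⟨j, h⟩ := dif_pos h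

lemma extZ_apply_not_mem (s : Finset (Fin n)) (u : ↥s → F) {j : Fin n} (h : j ∉ s) :
    extZ s u j = 0 := dif_neg h

lemma restrict_extZ (s : Finset (Fin n)) (u : ↥s → F) :
    (LinearMap.funLeft F F (fun i : ↥s => (i : Fin n))) (extZ s u) = u := by
  funext p
  simp only [LinearMap.funLeft_apply, Function.comp_apply]
  rw [extZ_apply_mem s u p.2]

lemma hN_le {ι : Type*} [Fintype ι] {x : ι → F} {t : Finset ι}
    (h : ∀ j, x j ≠ 0 → j ∈ t) : hammingNorm x ≤ t.card :=
  Finset.card_le_card fun j hj => h j (Finset.mem_filter.mp hj).2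

lemma finrank_finsetSup_le {ι V : Type*} [AddCommGroup V] [Module F V]
    [FiniteDimensional F V] (s : Finset ι) (f : ι → Submodule F V) :
    Module.finrank F ↥(s.sup f) ≤ ∑ i ∈ s, Module.finrank F ↥(f i) := by
  induction s using Finset.cons_induction with
  | empty => simp [finrank_bot]
  | cons a s ha ih =>
    rw [Finset.sup_cons, Finset.sum_cons]
    exact le_trans (Submodule.finrank_add_le_finrank_add_finrank _ _) (by omega)

def padLM {m : ℕ} (hm : m ≤ 2) : (Fin m → F) →ₗ[F] (Fin 2 → F) where
  toFun v j := if h : (j : ℕ) < m then v ⟨j, h⟩ else 0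
  map_add' u v := by funext j; by_cases h : (j : ℕ) < m <;> simp [h]
  map_smul' c u := by funext j; by_cases h : (j : ℕ) < m <;> simp [h]

lemma padLM_inj {m : ℕ} (hm : m ≤ 2) : Function.Injective (padLM (F := F) hm) := by
  intro v w h
  funext p
  have := congrFun h ⟨(p : ℕ), lt_of_lt_of_le p.2 hm⟩
  simpa [padLM, p.2] using this

lemma exists_cutout {V : Type*} [AddCommGroup V] [Module F V]
    [FiniteDimensional F V] (C D : Submodule F V) (hCD : C ≤ D)
    (hcod : Module.finrank F ↥D ≤ Module.finrank F ↥C + 2) :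
    ∃ g : V →ₗ[F] (Fin 2 → F), ∀ x, x ∈ D → (g x = 0 ↔ x ∈ C) := by
  set K : Submodule F ↥D := C.comap D.subtype with hK
  have hkK : Module.finrank F ↥K = Module.finrank F ↥C :=
    (Submodule.comapSubtypeEquivOfLe hCD).finrank_eq
  have hWrank := Submodule.finrank_quotient_add_finrank K
  have hWle : Module.finrank F (↥D ⧸ K) ≤ 2 := by omega
  obtain ⟨D', hcompl⟩ := Submodule.exists_isCompl D
  set e := (Module.finBasis F (↥D ⧸ K)).equivFun with he
  refine ⟨(padLM hWle).comp ((e.toLinearMap.comp K.mkQ).comp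
    (D.linearProjOfIsCompl D' hcompl)), ?_⟩
  intro x hx
  have hpr : (D.linearProjOfIsCompl D' hcompl) x = ⟨x, hx⟩ :=
    Submodule.linearProjOfIsCompl_apply_left hcompl ⟨x, hx⟩
  simp only [LinearMap.comp_apply, hpr]
  constructor
  · intro h0
    have h1 : e.toLinearMap (K.mkQ ⟨x, hx⟩) = 0 :=
      padLM_inj hWle (by rw [h0, map_zero])
    have h2 : K.mkQ ⟨x, hx⟩ = 0 := e.map_eq_zero_iff.mp h1
    have h3 : (⟨x, hx⟩ : ↥D) ∈ K :=
      (Submodule.Quotient.mk_eq_zero K).mp (by rwa [Submodule.mkQ_apply] at h2)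
    simpa [hK] using h3
  · intro hxC
    have h3 : (⟨x, hx⟩ : ↥D) ∈ K := by simp [hK, hxC]
    have h2 : K.mkQ ⟨x, hx⟩ = 0 := by
      rw [Submodule.mkQ_apply]; exact (Submodule.Quotient.mk_eq_zero K).mpr h3
    rw [h2, map_zero, map_zero]

end AuxLRC

/-- Lemma 8 (Chen et al.): a Singleton-optimal `(2,δ)`-LRC with disjoint local
repair groups and `d = 2δ+1` has length at most `q+1`. -/
theorem singleton_optimal_r_two_length_bound
    {F : Type*} [Field F] [Fintype F] [DecidableEq F]
    (q δ ρ n : ℕ) (hq : Fintype.card F = q) (hδ : 2 ≤ δ) (hρ : 1 ≤ ρ)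
    (hn : n = ρ * (δ + 1))
    (C : Submodule F (Fin n → F))
    (k : ℕ) (hk : k = Module.finrank F ↥C) (hk1 : 1 ≤ k)
    (d : ℕ)
    (hd1 : ∃ c ∈ C, c ≠ 0 ∧ hammingNorm c = d)
    (hd2 : ∀ c ∈ C, c ≠ 0 → d ≤ hammingNorm c)
    -- disjoint local repair groups with r = 2:
    (B : Fin ρ → Finset (Fin n))
    (hdisj : ∀ a b, a ≠ b → Disjoint (B a) (B b))
    (hcover : ∀ i : Fin n, ∃ a, i ∈ B a)
    (hcard : ∀ a, (B a).card = δ + 1)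
    (hdim : ∀ a, Module.finrank F
      ↥(C.map (LinearMap.funLeft F F (fun i : ↥(B a) => (i : Fin n)))) = 2)
    (hmds : ∀ a, ∀ v ∈ C.map (LinearMap.funLeft F F (fun i : ↥(B a) => (i : Fin n))),
      v ≠ 0 → δ ≤ hammingNorm v)
    (hd3 : d = 2 * δ + 1)
    (hopt : (d : ℤ) = (n : ℤ) - (k : ℤ) -
      ((((k + 1) / 2 : ℕ) : ℤ) - 1) * ((δ : ℤ) - 1) + 1) :
    n ≤ q + 1 := by
  classical
  -- Step 1: arithmetic, k + 2 = 2ρ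
  have hk2ρ : k + 2 = 2 * ρ := by
    have hm : k = 2 * ((k+1)/2) ∨ k + 1 = 2 * ((k+1)/2) := by omega
    set M : ℤ := (((k+1)/2 : ℕ) : ℤ) with hM
    rw [hd3, hn] at hopt
    push_cast at hopt
    have hδ' : (2:ℤ) ≤ (δ:ℤ) := by exact_mod_cast hδ
    rcases hm with h | h
    · have hK : (k : ℤ) = 2 * M := by rw [hM]; exact_mod_cast h
      have key : ((ρ:ℤ) - M - 1) * ((δ:ℤ) + 1) = 0 := by linear_combination -hopt + hK
      have h0 : (ρ:ℤ) - M - 1 = 0 := by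
        rcases mul_eq_zero.mp key with h' | h'
        · exact h'
        · exfalso; omega
      omega
    · have hK : (k:ℤ) + 1 = 2 * M := by rw [hM]; exact_mod_cast h
      have key : ((ρ:ℤ) - M) * ((δ:ℤ) + 1) = (δ:ℤ) := by linear_combination -hopt + hK
      exfalso
      rcases le_or_gt ((ρ:ℤ) - M) 0 with h' | h'
      · have := mul_nonpos_of_nonpos_of_nonneg h' (by linarith : (0:ℤ) ≤ (δ:ℤ) + 1)
        omega
      · have h1 : (1:ℤ) ≤ (ρ:ℤ) - M := h'
        have : (δ:ℤ) + 1 ≤ ((ρ:ℤ) - M) * ((δ:ℤ) + 1) :=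
          le_mul_of_one_le_left (by linarith) h1
        omega
  -- Step 2: the sum of the extended local codes
  set V : (a : Fin ρ) → Submodule F (↥(B a) → F) :=
    fun a => C.map (LinearMap.funLeft F F (fun i : ↥(B a) => (i : Fin n))) with hV
  obtain ⟨D, hle, hCD, hDle⟩ :
      ∃ D : Submodule F (Fin n → F),
        (∀ a : Fin ρ, (V a).map (extZ (B a)) ≤ D) ∧ C ≤ D ∧
        Module.finrank F ↥D ≤ 2 * ρ := by
    refine ⟨Finset.univ.sup (fun a => (V a).map (extZ (B a))), ?_, ?_, ?_⟩
    · intro a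
      exact Finset.le_sup (f := fun a => (V a).map (extZ (B a))) (Finset.mem_univ a)
    · intro c hc
      have hcs : c = ∑ a : Fin ρ,
          extZ (B a) ((LinearMap.funLeft F F (fun i : ↥(B a) => (i : Fin n))) c) := by
        funext j
        obtain ⟨a₀, ha₀⟩ := hcover j
        rw [Finset.sum_apply]
        rw [Finset.sum_eq_single a₀]
        · rw [extZ_apply_mem _ _ ha₀]; rfl
        · intro b _ hb
          exact extZ_apply_not_mem _ _
            (fun hj => (Finset.disjoint_left.mp (hdisj b a₀ hb) hj) ha₀)
        · intro h; exact absurd (Finset.mem_univ a₀) h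
      rw [hcs]
      refine Submodule.sum_mem _ fun a _ => ?_
      exact Finset.le_sup (f := fun a => (V a).map (extZ (B a))) (Finset.mem_univ a)
        (Submodule.mem_map_of_mem (Submodule.mem_map_of_mem hc))
    · refine le_trans (finrank_finsetSup_le _ _) ?_
      have hba : ∀ a : Fin ρ, Module.finrank F ↥((V a).map (extZ (B a))) ≤ 2 := by
        intro a
        refine le_trans (Submodule.finrank_map_le _ _) ?_
        rw [hV]; rw [hdim a]
      calc ∑ a : Fin ρ, Module.finrank F ↥((V a).map (extZ (B a)))
          ≤ ∑ _a : Fin ρ, 2 := Finset.sum_le_sum fun a _ => hba a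
        _ = 2 * ρ := by simp [Finset.sum_const, mul_comm]
  -- Step 3: the cutting-out map g
  obtain ⟨g, key⟩ := exists_cutout C D hCD (by rw [← hk]; omega)
  -- Step 4: local codewords vanishing at a prescribed position
  have hexu : ∀ (a : Fin ρ) (p : ↥(B a)), ∃ u, u ∈ V a ∧ u ≠ 0 ∧ u p = 0 := by
    intro a p
    set φ : ↥(V a) →ₗ[F] F := (LinearMap.proj p).comp (V a).subtype with hφ
    have h1 : Module.finrank F ↥(LinearMap.range φ) ≤ 1 :=
      le_trans (Submodule.finrank_le _) (by simp)
    have h2 := LinearMap.finrank_range_add_finrank_ker φ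
    have hVa : Module.finrank F ↥(V a) = 2 := by rw [hV]; exact hdim a
    rw [hVa] at h2
    have hker : LinearMap.ker φ ≠ ⊥ := by
      intro hbot
      rw [hbot, finrank_bot] at h2
      omega
    obtain ⟨y, hy, hy0⟩ := Submodule.exists_mem_ne_zero_of_ne_bot hker
    refine ⟨(y : ↥(B a) → F), y.2, ?_, ?_⟩
    · intro h0
      exact hy0 (Subtype.ext h0)
    · exact hy
  choose A hA using hcover
  have hvex : ∀ i : Fin n, ∃ u, u ∈ V (A i) ∧ u ≠ 0 ∧ u ⟨i, hA i⟩ = 0 :=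
    fun i => hexu (A i) ⟨i, hA i⟩
  choose u hu1 hu2 hu3 using hvex
  set v : Fin n → (Fin n → F) := fun i => extZ (B (A i)) (u i) with hv
  have hπv : ∀ i, (LinearMap.funLeft F F (fun p : ↥(B (A i)) => (p : Fin n))) (v i) = u i :=
    fun i => restrict_extZ _ _
  have hv_mem_D : ∀ i, v i ∈ D := fun i =>
    hle (A i) (Submodule.mem_map_of_mem (hu1 i))
  have hvi0 : ∀ i, v i i = 0 := by
    intro i
    show extZ (B (A i)) (u i) i = 0
    rw [extZ_apply_mem _ _ (hA i)]
    exact hu3 i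
  have hv_supp : ∀ i j, v i j ≠ 0 → j ∈ B (A i) ∧ j ≠ i := by
    intro i j hj
    by_cases h : j ∈ B (A i)
    · exact ⟨h, fun hji => hj (hji ▸ hvi0 i)⟩
    · exact absurd (extZ_apply_not_mem _ _ h) hj
  have hv_ne : ∀ i, v i ≠ 0 := by
    intro i h0
    apply hu2 i
    rw [← hπv i, h0, map_zero]
  -- Step 5: the images w i = g (v i) are nonzero and pairwise independent
  have hw0 : ∀ i, g (v i) ≠ 0 := by
    intro i h0
    have hvC : v i ∈ C := (key _ (hv_mem_D i)).mp h0
    have hdle := hd2 _ hvC (hv_ne i)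
    have hle' : hammingNorm (v i) ≤ δ := by
      refine le_trans (hN_le (t := (B (A i)).erase i) ?_) ?_
      · intro j hj
        obtain ⟨h1, h2⟩ := hv_supp i j hj
        exact Finset.mem_erase.mpr ⟨h2, h1⟩
      · rw [Finset.card_erase_of_mem (hA i), hcard]; omega
    omega
  have hwind : ∀ i j, i ≠ j → ∀ c : F, g (v j) ≠ c • g (v i) := by
    intro i j hij c hgc
    set x : Fin n → F := c • v i - v j with hx
    have hxD : x ∈ D := D.sub_mem (D.smul_mem c (hv_mem_D i)) (hv_mem_D j)
    have hgx : g x = 0 := by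
      rw [hx, map_sub, map_smul, hgc]
      abel
    have hxC : x ∈ C := (key x hxD).mp hgx
    have hxne : x ≠ 0 := by
      intro h0
      have hvj : v j = c • v i := by
        have := sub_eq_zero.mp h0
        exact this.symm
      by_cases hab : A i = A j
      · -- same block: u j would have two zeros
        have hiB : i ∈ B (A j) := hab ▸ hA i
        have hvji : v j i = 0 := by
          rw [hvj, Pi.smul_apply, hvi0 i, smul_zero]
        have huji : u j ⟨i, hiB⟩ = 0 := by
          rw [← extZ_apply_mem (B (A j)) (u j) hiB]
          exact hvji
        have hmdsj := hmds (A j) (u j) (hu1 j) (hu2 j)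
        have hcub : hammingNorm (u j) ≤ δ - 1 := by
          have hne : (⟨i, hiB⟩ : ↥(B (A j))) ≠ ⟨j, hA j⟩ := by
            intro h; exact hij (congrArg Subtype.val h)
          refine le_trans (hN_le
            (t := (Finset.univ.erase (⟨i, hiB⟩ : ↥(B (A j)))).erase ⟨j, hA j⟩) ?_) ?_
          · intro p hp
            refine Finset.mem_erase.mpr ⟨?_, Finset.mem_erase.mpr ⟨?_, Finset.mem_univ _⟩⟩
            · intro h; exact hp (h ▸ hu3 j)
            · intro h; exact hp (h ▸ huji)
          · rw [Finset.card_erase_of_mem, Finset.card_erase_of_mem (Finset.mem_univ _)]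
            · have : Fintype.card ↥(B (A j)) = δ + 1 := by
                rw [Fintype.card_coe, hcard]
              rw [Finset.card_univ, this]
              omega
            · exact Finset.mem_erase.mpr ⟨hne.symm, Finset.mem_univ _⟩
        omega
      · -- different blocks: u j would be zero
        apply hu2 j
        funext p
        have hp2 : (p : Fin n) ∉ B (A i) :=
          Finset.disjoint_left.mp (hdisj (A j) (A i) (fun h => hab h.symm)) p.2
        have hvip : v i (p : Fin n) = 0 := extZ_apply_not_mem _ _ hp2
        have : v j (p : Fin n) = 0 := by
          rw [hvj, Pi.smul_apply, hvip, smul_zero]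
        rw [← extZ_apply_mem (B (A j)) (u j) p.2] at *
        simpa using this
    have hdlex := hd2 x hxC hxne
    have hxle : hammingNorm x ≤ δ + δ := by
      refine le_trans (hN_le (t := (B (A i)).erase i ∪ (B (A j)).erase j) ?_) ?_
      · intro l hl
        have : v i l ≠ 0 ∨ v j l ≠ 0 := by
          by_contra hcon
          push_neg at hcon
          apply hl
          rw [hx, Pi.sub_apply, Pi.smul_apply, hcon.1, hcon.2, smul_zero, sub_zero]
        rcases this with h' | h'
        · obtain ⟨h1, h2⟩ := hv_supp i l h'
          exact Finset.mem_union_left _ (Finset.mem_erase.mpr ⟨h2, h1⟩)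
        · obtain ⟨h1, h2⟩ := hv_supp j l h'
          exact Finset.mem_union_right _ (Finset.mem_erase.mpr ⟨h2, h1⟩)
      · refine le_trans (Finset.card_union_le _ _) ?_
        rw [Finset.card_erase_of_mem (hA i), Finset.card_erase_of_mem (hA j),
          hcard, hcard]
        omega
    omega
  -- Step 6: counting lines in F²
  set w : Fin n → (Fin 2 → F) := fun i => g (v i) with hw
  set f : Fin n → Option F :=
    fun i => if w i 1 = 0 then none else some (w i 0 / w i 1) with hf
  have hfinj : Function.Injective f := by
    intro i j hfij
    by_contra hij
    rw [hf] at hfij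
    simp only at hfij
    by_cases h1 : w i 1 = 0
    · by_cases h2 : w j 1 = 0
      · -- both second coords vanish
        have hi0 : w i 0 ≠ 0 := by
          intro h
          apply hw0 i
          funext p
          fin_cases p
          · exact h
          · exact h1
        apply hwind i j hij (w j 0 / w i 0)
        funext p
        fin_cases p
        · show w j 0 = (w j 0 / w i 0) * w i 0
          field_simp
        · show w j 1 = (w j 0 / w i 0) * w i 1
          rw [h1, h2, mul_zero]
      · rw [if_pos h1, if_neg h2] at hfij
        cases hfij
    · by_cases h2 : w j 1 = 0
      · rw [if_neg h1, if_pos h2] at hfij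
        cases hfij
      · rw [if_neg h1, if_neg h2, Option.some_inj] at hfij
        have hcross : w i 0 * w j 1 = w j 0 * w i 1 := by
          rw [div_eq_div_iff h1 h2] at hfij
          exact hfij
        apply hwind i j hij (w j 1 / w i 1)
        funext p
        fin_cases p
        · show w j 0 = (w j 1 / w i 1) * w i 0
          field_simp
          linear_combination -hcross
        · show w j 1 = (w j 1 / w i 1) * w i 1
          field_simp
  have hcount := Fintype.card_le_of_injective f hfinj
  rwa [Fintype.card_fin, Fintype.card_option, hq] at hcount
end

section
/- Let F be a finite field with q elements, δ ≥ 2 and ρ ≥ 1 integers, and n = ρ(δ+1). Let C ⊆ F^n be a linear code of dimension k ≥ 1 that has disjoint local repair groups with r = 2: there is a partition of {0,…,n−1} into ρ blocks each of size δ+1 such that for each block S, the punctured code C|_S = {c|_S : c ∈ C} has dimension 2 and every nonzero element of C|_S has Hamming weight at least δ. If 2δ + 1 = n − k − (⌈k/2⌉ − 1)(δ−1) + 1 and n > q + 1, then the minimum Hamming weight d of a nonzero codeword of C satisfies d ≤ 2δ. -/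
open Module

/-- Extension by zero of a vector supported on a finite index subset. -/
noncomputable def extMap (F : Type*) [Semiring F] {n : ℕ} (S : Finset (Fin n)) :
    (↥S → F) →ₗ[F] (Fin n → F) where
  toFun v i := if h : i ∈ S then v ⟨i, h⟩ else 0
  map_add' v w := by funext i; by_cases h : i ∈ S <;> simp [h]
  map_smul' c v := by funext i; by_cases h : i ∈ S <;> simp [h]

lemma extMap_apply_mem (F : Type*) [Semiring F] {n : ℕ} {S : Finset (Fin n)}
    (v : ↥S → F) {i : Fin n} (h : i ∈ S) : extMap F S v i = v ⟨i, h⟩ := dif_pos h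

lemma extMap_apply_not_mem (F : Type*) [Semiring F] {n : ℕ} {S : Finset (Fin n)}
    (v : ↥S → F) {i : Fin n} (h : i ∉ S) : extMap F S v i = 0 := dif_neg h

lemma funLeft_extMap (F : Type*) [Semiring F] {n : ℕ} (S : Finset (Fin n)) (v : ↥S → F) :
    LinearMap.funLeft F F (fun i : ↥S => (i : Fin n)) (extMap F S v) = v := by
  funext t
  exact extMap_apply_mem F v t.2

/-- Hamming norm is bounded by the cardinality of any superset of the support. -/
lemma aux_norm_le {ι F : Type*} [Fintype ι] [DecidableEq ι] [Zero F] [DecidableEq F]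
    (x : ι → F) (s : Finset ι) (h : ∀ i, x i ≠ 0 → i ∈ s) : hammingNorm x ≤ s.card := by
  refine Finset.card_le_card fun i hi => h i ?_
  simpa using hi


/-- The submodule of vectors which lie blockwise in prescribed local codes. -/
def Wsub {F : Type*} [Field F] {n ρ : ℕ} (B : Fin ρ → Finset (Fin n))
    (P : ∀ a : Fin ρ, Submodule F (↥(B a) → F)) : Submodule F (Fin n → F) where
  carrier := {w | ∀ a, LinearMap.funLeft F F (fun i : ↥(B a) => (i : Fin n)) w ∈ P a}
  add_mem' hw hz a := by rw [map_add]; exact add_mem (hw a) (hz a)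
  zero_mem' a := by rw [map_zero]; exact zero_mem _
  smul_mem' c w hw a := by rw [map_smul]; exact Submodule.smul_mem _ c (hw a)

lemma mem_Wsub {F : Type*} [Field F] {n ρ : ℕ} (B : Fin ρ → Finset (Fin n))
    (P : ∀ a : Fin ρ, Submodule F (↥(B a) → F)) (w : Fin n → F) :
    w ∈ Wsub B P ↔ ∀ a, LinearMap.funLeft F F (fun i : ↥(B a) => (i : Fin n)) w ∈ P a :=
  Iff.rfl

set_option maxHeartbeats 1000000
set_option synthInstance.maxHeartbeats 200000

/-- Two nonzero vectors in a 2-dim space with equal "slope" are proportional. -/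
theorem aux_slope {F V : Type*} [Field F] [DecidableEq F] [AddCommGroup V] [Module F V]
    (b : Basis (Fin 2) F V) (x y : V) (hx : x ≠ 0) (hy : y ≠ 0)
    (h : (if b.repr x 0 = 0 then (none : Option F) else some (b.repr x 1 / b.repr x 0)) =
         (if b.repr y 0 = 0 then (none : Option F) else some (b.repr y 1 / b.repr y 0))) :
    ∃ c : F, c ≠ 0 ∧ y = c • x := by
  have hrx : ∀ z : V, z ≠ 0 → b.repr z 0 = 0 → b.repr z 1 ≠ 0 := by
    intro z hz h0 h1
    exact hz (b.repr.map_eq_zero_iff.mp (by ext i; fin_cases i <;> simp [h0, h1]))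
  by_cases h0 : b.repr x 0 = 0
  · rw [if_pos h0] at h
    have h0y : b.repr y 0 = 0 := by
      by_contra hc; rw [if_neg hc] at h; cases h
    have hx1 := hrx x hx h0
    refine ⟨b.repr y 1 / b.repr x 1, div_ne_zero (hrx y hy h0y) hx1, ?_⟩
    refine Basis.ext_elem b fun i => ?_
    fin_cases i <;> simp [h0, h0y, map_smul, div_mul_cancel₀, hx1]
  · rw [if_neg h0] at h
    have h0y : b.repr y 0 ≠ 0 := by
      intro hc; rw [if_pos hc] at h; cases h
    rw [if_neg h0y] at h
    have h' : b.repr x 1 / b.repr x 0 = b.repr y 1 / b.repr y 0 := Option.some_injective _ h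
    refine ⟨b.repr y 0 / b.repr x 0, div_ne_zero h0y h0, ?_⟩
    refine Basis.ext_elem b fun i => ?_
    fin_cases i
    · simp [map_smul, div_mul_cancel₀, h0]
    · simp only [map_smul, Finsupp.smul_apply, smul_eq_mul]
      field_simp at h' ⊢
      simp only [Fin.mk_one]
      linear_combination -h'

/-- The arithmetic consequence of the optimality equation. -/
theorem aux_arith (δ ρ n k : ℕ) (hδ : 2 ≤ δ) (hn : n = ρ * (δ + 1)) (hk1 : 1 ≤ k)
    (hopt : ((2 * δ + 1 : ℕ) : ℤ) = (n : ℤ) - (k : ℤ) -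
      ((((k + 1) / 2 : ℕ) : ℤ) - 1) * ((δ : ℤ) - 1) + 1) :
    k + 2 = 2 * ρ := by
  set m : ℕ := (k + 1) / 2 with hm
  have hmk : 2 * m ≤ k + 1 ∧ k ≤ 2 * m := by omega
  have hn' : (n : ℤ) = (ρ : ℤ) * ((δ : ℤ) + 1) := by exact_mod_cast congrArg (Nat.cast (R := ℤ)) hn
  push_cast at hopt
  have key : ((ρ : ℤ) - m - 1) * ((δ : ℤ) + 1) = (k : ℤ) - 2 * m := by
    linear_combination -hopt - hn'
  have hδ' : (3 : ℤ) ≤ (δ : ℤ) + 1 := by exact_mod_cast Nat.succ_le_succ hδ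
  have hrange : (-1 : ℤ) ≤ (k : ℤ) - 2 * m ∧ (k : ℤ) - 2 * m ≤ 0 := by
    constructor <;> [push_cast; push_cast] <;> omega
  have ht : (ρ : ℤ) - m - 1 = 0 := by
    rcases lt_trichotomy ((ρ : ℤ) - m - 1) 0 with h | h | h
    · nlinarith [key, hrange.1, hrange.2]
    · exact h
    · nlinarith [key, hrange.1, hrange.2]
  have hzero : (k : ℤ) - 2 * m = 0 := by rw [← key, ht]; ring
  have h1 : k = 2 * m := by omega
  have h2 : (ρ : ℤ) = (m : ℤ) + 1 := by linarith
  have h3 : ρ = m + 1 := by exact_mod_cast h2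
  omega

/-- Corollary 3: a `(2,δ)`-LRC with disjoint local repair groups of length
`n > q+1` whose Singleton-like bound equals `2δ+1` has minimum distance at most
`2δ`. -/
theorem corollary_three_distance_upper_bound
    {F : Type*} [Field F] [Fintype F] [DecidableEq F]
    (q δ ρ n : ℕ) (hq : Fintype.card F = q) (hδ : 2 ≤ δ) (hρ : 1 ≤ ρ)
    (hn : n = ρ * (δ + 1))
    (C : Submodule F (Fin n → F))
    (k : ℕ) (hk : k = Module.finrank F ↥C) (hk1 : 1 ≤ k)
    (d : ℕ)
    (hd1 : ∃ c ∈ C, c ≠ 0 ∧ hammingNorm c = d)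
    (hd2 : ∀ c ∈ C, c ≠ 0 → d ≤ hammingNorm c)
    -- disjoint local repair groups with r = 2:
    (B : Fin ρ → Finset (Fin n))
    (hdisj : ∀ a b, a ≠ b → Disjoint (B a) (B b))
    (hcover : ∀ i : Fin n, ∃ a, i ∈ B a)
    (hcard : ∀ a, (B a).card = δ + 1)
    (hdim : ∀ a, Module.finrank F
      ↥(C.map (LinearMap.funLeft F F (fun i : ↥(B a) => (i : Fin n)))) = 2)
    (hmds : ∀ a, ∀ v ∈ C.map (LinearMap.funLeft F F (fun i : ↥(B a) => (i : Fin n))),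
      v ≠ 0 → δ ≤ hammingNorm v)
    (hopt : ((2 * δ + 1 : ℕ) : ℤ) = (n : ℤ) - (k : ℤ) -
      ((((k + 1) / 2 : ℕ) : ℤ) - 1) * ((δ : ℤ) - 1) + 1)
    (hbig : q + 1 < n) :
    d ≤ 2 * δ := by
  classical
  have hkρ : k + 2 = 2 * ρ := aux_arith δ ρ n k hδ hn hk1 hopt
  set res : ∀ a : Fin ρ, (Fin n → F) →ₗ[F] (↥(B a) → F) :=
    fun a => LinearMap.funLeft F F (fun i : ↥(B a) => (i : Fin n)) with hres
  set P : ∀ a : Fin ρ, Submodule F (↥(B a) → F) := fun a => C.map (res a) with hPdef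
  have hdim' : ∀ a, Module.finrank F ↥(P a) = 2 := hdim
  have hmds' : ∀ a, ∀ v ∈ P a, v ≠ 0 → δ ≤ hammingNorm v := hmds
  -- basic facts about the local codes
  have hPcard : ∀ a : Fin ρ, Fintype.card ↥(B a) = δ + 1 := by
    intro a; rw [Fintype.card_coe]; exact hcard a
  have htwo : ∀ (a : Fin ρ) (v : ↥(B a) → F), v ∈ P a → v ≠ 0 →
      ∀ i j : ↥(B a), i ≠ j → v i = 0 → v j = 0 → False := by
    intro a v hv hv0 i j hij hi hj
    have h1 : δ ≤ hammingNorm v := hmds' a v hv hv0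
    have h2 : hammingNorm v ≤ δ - 1 := by
      have hsub : hammingNorm v ≤ (Finset.univ \ ({i, j} : Finset ↥(B a))).card := by
        refine aux_norm_le v _ fun t ht => ?_
        simp only [Finset.mem_sdiff, Finset.mem_univ, Finset.mem_insert,
          Finset.mem_singleton, true_and]
        rintro (rfl | rfl) <;> [exact ht hi; exact ht hj]
      have hcard2 : ({i, j} : Finset ↥(B a)).card = 2 := Finset.card_pair hij
      have := Finset.card_sdiff_of_subset (Finset.subset_univ ({i, j} : Finset ↥(B a)))
      rw [this, hcard2, Finset.card_univ, hPcard a] at hsub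
      omega
    omega
  have hvanish : ∀ (a : Fin ρ) (i : ↥(B a)),
      ∃ v : ↥(B a) → F, v ∈ P a ∧ v ≠ 0 ∧ v i = 0 := by
    intro a i
    by_contra hcon
    push_neg at hcon
    have hinj : Function.Injective
        ((LinearMap.proj i : (↥(B a) → F) →ₗ[F] F).comp (P a).subtype) := by
      rw [← LinearMap.ker_eq_bot, eq_bot_iff]
      rintro ⟨v, hv⟩ hker
      have hv0 : v i = 0 := hker
      have hv' : v = 0 := by
        by_contra hne
        exact hcon v hv hne hv0
      rw [Submodule.mem_bot, Submodule.mk_eq_zero]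
      exact hv'
    have hle := LinearMap.finrank_le_finrank_of_injective hinj
    rw [finrank_self] at hle
    have := hdim' a
    omega
  -- the ambient space W of vectors that are blockwise in the local codes
  set W : Submodule F (Fin n → F) := Wsub B P with hWdef
  have hmemW : ∀ w : Fin n → F, (∀ a, res a w ∈ P a) → w ∈ W := fun w h => h
  have hmemW' : ∀ w : Fin n → F, w ∈ W → ∀ a, res a w ∈ P a := fun w h => h
  have hCW : C ≤ W := fun c hc => hmemW c fun a => Submodule.mem_map_of_mem hc
  set C' : Submodule F ↥W := C.comap W.subtype with hC'def
  -- dimension bound for W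
  have hWfin : Module.finrank F ↥W ≤ 2 * ρ := by
    set Φ : ↥W →ₗ[F] (∀ a : Fin ρ, ↥(P a)) :=
      LinearMap.pi (fun a => LinearMap.codRestrict (P a) ((res a).comp W.subtype)
        (fun w => hmemW' w.1 w.2 a)) with hΦ
    have hΦinj : Function.Injective Φ := by
      rw [← LinearMap.ker_eq_bot, eq_bot_iff]
      rintro ⟨w, hw⟩ hker
      have hz : ∀ a, res a w = 0 := by
        intro a
        have := congrFun hker a
        exact congrArg Subtype.val this
      have hw0 : w = 0 := by
        funext i
        obtain ⟨a, hi⟩ := hcover i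
        have := congrFun (hz a) ⟨i, hi⟩
        exact this
      rw [Submodule.mem_bot, Submodule.mk_eq_zero]
      exact hw0
    have hle := LinearMap.finrank_le_finrank_of_injective hΦinj
    have hpi : Module.finrank F (∀ a : Fin ρ, ↥(P a)) = 2 * ρ := by
      rw [Module.finrank_pi_fintype]
      simp [hdim', Finset.sum_const, mul_comm]
    omega
  have hC'k : Module.finrank F ↥C' = k := by
    rw [hk]
    exact (Submodule.comapSubtypeEquivOfLe hCW).finrank_eq
  have hQk : Module.finrank F (↥W ⧸ C') + k = Module.finrank F ↥W := by
    rw [← hC'k]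
    exact Submodule.finrank_quotient_add_finrank C'
  have hQle : Module.finrank F (↥W ⧸ C') ≤ 2 := by omega
  -- the quotient maps from the local codes
  have hextW : ∀ (a : Fin ρ) (v : ↥(B a) → F), v ∈ P a → extMap F (B a) v ∈ W := by
    intro a v hv
    refine hmemW _ fun b => ?_
    by_cases hba : b = a
    · subst hba
      rw [hres]
      rw [funLeft_extMap]
      exact hv
    · have : res b (extMap F (B a) v) = 0 := by
        funext t
        have ht : (t : Fin n) ∉ B a :=
          Finset.disjoint_left.mp (hdisj b a hba) t.2
        exact extMap_apply_not_mem F v ht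
      rw [this]; exact zero_mem _
  set ψ : ∀ a : Fin ρ, ↥(P a) →ₗ[F] (↥W ⧸ C') :=
    fun a => C'.mkQ.comp (LinearMap.codRestrict W ((extMap F (B a)).comp (P a).subtype)
      (fun v => hextW a v.1 v.2)) with hψdef
  have hψ_apply : ∀ (a : Fin ρ) (v : ↥(P a)) (h : extMap F (B a) v.1 ∈ W),
      ψ a v = C'.mkQ ⟨extMap F (B a) v.1, h⟩ := fun _ _ _ => rfl
  by_cases hinj : ∀ a, Function.Injective (ψ a)
  · -- all the quotient maps are injective: pigeonhole on slopes
    have hQ2 : Module.finrank F (↥W ⧸ C') = 2 := by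
      have a0 : Fin ρ := ⟨0, by omega⟩
      have hle := LinearMap.finrank_le_finrank_of_injective (hinj a0)
      have h2 : Module.finrank F ↥(P a0) = 2 := hdim' a0
      omega
    set b : Basis (Fin 2) F (↥W ⧸ C') := Module.finBasisOfFinrankEq F _ hQ2 with hb
    -- choose vanishing vectors
    have hch : ∀ i : Fin n, ∃ (a : Fin ρ) (hi : i ∈ B a)
        (v : ↥(B a) → F), v ∈ P a ∧ v ≠ 0 ∧ v ⟨i, hi⟩ = 0 := by
      intro i
      obtain ⟨a, hi⟩ := hcover i
      obtain ⟨v, hv1, hv2, hv3⟩ := hvanish a ⟨i, hi⟩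
      exact ⟨a, hi, v, hv1, hv2, hv3⟩
    choose A hA v hv1 hv2 hv3 using hch
    set u : Fin n → (Fin n → F) := fun i => extMap F (B (A i)) (v i) with hu
    have huW : ∀ i, u i ∈ W := fun i => hextW _ _ (hv1 i)
    set x : Fin n → (↥W ⧸ C') := fun i => C'.mkQ ⟨u i, huW i⟩ with hx
    have hxψ : ∀ i, x i = ψ (A i) ⟨v i, hv1 i⟩ := fun i => rfl
    have hx0 : ∀ i, x i ≠ 0 := by
      intro i hxi
      rw [hxψ i] at hxi
      have := (hinj (A i)) (a₁ := ⟨v i, hv1 i⟩) (a₂ := 0) (by simpa using hxi)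
      exact hv2 i (by simpa using congrArg Subtype.val this)
    -- pigeonhole
    have hcardlt : Fintype.card (Option F) < Fintype.card (Fin n) := by
      simp [Fintype.card_option, hq, hbig]
    obtain ⟨i, j, hij, hsl⟩ := Fintype.exists_ne_map_eq_of_card_lt
      (fun i => if b.repr (x i) 0 = 0 then (none : Option F)
        else some (b.repr (x i) 1 / b.repr (x i) 0)) hcardlt
    obtain ⟨c, hc0, hcx⟩ := aux_slope b (x i) (x j) (hx0 i) (hx0 j) hsl
    -- the combined codeword
    have hu_self : ∀ t : Fin n, u t t = 0 := by
      intro t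
      show extMap F (B (A t)) (v t) t = 0
      rw [extMap_apply_mem F (v t) (hA t)]
      exact hv3 t
    have hu_out : ∀ t s : Fin n, s ∉ B (A t) → u t s = 0 := by
      intro t s hs
      exact extMap_apply_not_mem F (v t) hs
    have hzC : (⟨u j, huW j⟩ : ↥W) - c • ⟨u i, huW i⟩ ∈ C' := by
      rw [← Submodule.Quotient.mk_eq_zero]
      have heq : C'.mkQ ((⟨u j, huW j⟩ : ↥W) - c • ⟨u i, huW i⟩) = x j - c • x i := by
        rw [map_sub, map_smul]
      rw [← Submodule.mkQ_apply, heq, hcx, sub_self]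
    have hzCval : u j - c • u i ∈ C := hzC
    by_cases hab : A i = A j
    · -- same block: derive a contradiction
      exfalso
      have hBij : B (A i) = B (A j) := congrArg B hab
      set z : Fin n → F := u j - c • u i with hz
      -- z is supported on B (A j) and all its block restrictions except A j vanish
      have hzout : ∀ t : Fin n, t ∉ B (A j) → z t = 0 := by
        intro t ht
        have h1 : u j t = 0 := hu_out j t ht
        have h2 : u i t = 0 := hu_out i t (by rwa [hBij])
        simp [hz, h1, h2]
      have hzW : z ∈ W := W.sub_mem (huW j) (W.smul_mem c (huW i))
      have hzP : res (A j) z ∈ P (A j) := Submodule.mem_map_of_mem hzCval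
      have hzext : extMap F (B (A j)) (res (A j) z) = z := by
        funext t
        by_cases ht : t ∈ B (A j)
        · rw [extMap_apply_mem F _ ht]; rfl
        · rw [extMap_apply_not_mem F _ ht]; exact (hzout t ht).symm
      have hψz : ψ (A j) ⟨res (A j) z, hzP⟩ = 0 := by
        have hmem : extMap F (B (A j)) (res (A j) z) ∈ C := by rw [hzext]; exact hzCval
        rw [hψ_apply (A j) ⟨res (A j) z, hzP⟩ (by rw [hzext]; exact hzW),
          Submodule.mkQ_apply, Submodule.Quotient.mk_eq_zero]
        exact hmem
      have hres0 : res (A j) z = 0 := by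
        have := (hinj (A j)) (a₁ := ⟨res (A j) z, hzP⟩) (a₂ := 0) (by simpa using hψz)
        simpa using congrArg Subtype.val this
      have hz0 : z = 0 := by
        funext t
        by_cases ht : t ∈ B (A j)
        · exact congrFun hres0 ⟨t, ht⟩
        · exact hzout t ht
      -- hence u j = c • u i, so v j vanishes at two coordinates
      have huji : u j = c • u i := by
        have := sub_eq_zero.mp hz0
        exact this
      have hiBj : i ∈ B (A j) := by rw [← hBij]; exact hA i
      have hvji : v j ⟨i, hiBj⟩ = 0 := by
        have h1 : u j i = c * u i i := by rw [huji]; rfl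
        have h2 : u j i = v j ⟨i, hiBj⟩ := extMap_apply_mem F (v j) hiBj
        rw [h2, hu_self i, mul_zero] at h1
        exact h1
      refine htwo (A j) (v j) (hv1 j) (hv2 j) ⟨i, hiBj⟩ ⟨j, hA j⟩ ?_ hvji (hv3 j)
      intro hc
      exact hij (by simpa using congrArg Subtype.val hc)
    · -- different blocks: the codeword u j - c • u i has weight ≤ 2δ
      set w : Fin n → F := u j - c • u i with hw
      have hwC : w ∈ C := hzCval
      have hiBj : i ∉ B (A j) := Finset.disjoint_left.mp (hdisj (A i) (A j) hab) (hA i)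
      have hjBi : j ∉ B (A i) := Finset.disjoint_left.mp (hdisj (A j) (A i) (Ne.symm hab)) (hA j)
      have hw0 : w ≠ 0 := by
        intro h0
        have : u j = c • u i := sub_eq_zero.mp h0
        have hj0 : u j j = c * u i j := by rw [this]; rfl
        have : v j ⟨j, hA j⟩ ≠ 0 ∨ True := Or.inr trivial
        -- u j is nonzero somewhere in B (A j)
        obtain ⟨t, htne⟩ : ∃ t : ↥(B (A j)), v j t ≠ 0 := by
          by_contra hcon
          push_neg at hcon
          exact hv2 j (funext hcon)
        have h1 : u j t = v j t := extMap_apply_mem F (v j) t.2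
        have h2 : u i t = 0 := hu_out i t
          (Finset.disjoint_left.mp (hdisj (A j) (A i) (Ne.symm hab)) t.2)
        have : u j t = c * u i t := by rw [‹u j = c • u i›]; rfl
        rw [h1, h2, mul_zero] at this
        exact htne this
      have hwnorm : hammingNorm w ≤ 2 * δ := by
        have hsub : hammingNorm w ≤ ((B (A i) ∪ B (A j)) \ ({i, j} : Finset (Fin n))).card := by
          refine aux_norm_le w _ fun t ht => ?_
          have htu : t ∈ B (A i) ∪ B (A j) := by
            by_contra htc
            rw [Finset.mem_union] at htc
            push_neg at htc
            have h1 : u j t = 0 := hu_out j t htc.2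
            have h2 : u i t = 0 := hu_out i t htc.1
            exact ht (by simp [hw, h1, h2])
          have hti : t ≠ i := by
            rintro rfl
            have h1 : u j t = 0 := hu_out j t hiBj
            exact ht (by simp [hw, h1, hu_self t])
          have htj : t ≠ j := by
            rintro rfl
            have h2 : u i t = 0 := hu_out i t hjBi
            exact ht (by simp [hw, h2, hu_self t])
          simp [Finset.mem_sdiff, htu, hti, htj]
        have hsubset : ({i, j} : Finset (Fin n)) ⊆ B (A i) ∪ B (A j) := by
          intro t ht
          rcases Finset.mem_insert.mp ht with h1 | h1
          · rw [h1]; exact Finset.mem_union_left _ (hA i)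
          · rw [Finset.mem_singleton] at h1
            rw [h1]; exact Finset.mem_union_right _ (hA j)
        rw [Finset.card_sdiff_of_subset hsubset, Finset.card_union_of_disjoint (hdisj _ _ hab),
          hcard, hcard, Finset.card_pair hij] at hsub
        omega
      exact le_trans (hd2 w hwC hw0) hwnorm
  · -- some quotient map is not injective: a codeword inside a single block
    push_neg at hinj
    obtain ⟨a, ha⟩ := hinj
    rw [injective_iff_map_eq_zero] at ha
    push_neg at ha
    obtain ⟨⟨v, hvP⟩, hψ0, hvne⟩ := ha
    have hv0 : v ≠ 0 := by
      intro h
      apply hvne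
      rw [Submodule.mk_eq_zero]
      exact h
    have hCmem : extMap F (B a) v ∈ C := by
      have h0 := hψ0
      rw [hψ_apply a ⟨v, hvP⟩ (hextW a v hvP), Submodule.mkQ_apply,
        Submodule.Quotient.mk_eq_zero] at h0
      exact h0
    have hne : extMap F (B a) v ≠ 0 := by
      intro h0
      apply hv0
      rw [← funLeft_extMap F (B a) v, h0, map_zero]
    have hnorm : hammingNorm (extMap F (B a) v) ≤ δ + 1 := by
      have := aux_norm_le (extMap F (B a) v) (B a) fun t ht => by
        by_contra htc
        exact ht (extMap_apply_not_mem F v htc)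
      rwa [hcard a] at this
    have := hd2 _ hCmem hne
    omega
end
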